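/- arXiv:1410.5989 — 7 statements merged into one kernel-verified Lean document; each statement's English description precedes it below -/
import Mathlib

section
/- A finite p-group is metahamiltonian if and only if every minimal non-abelian subgroup of it is normal. -/
open Subgroup

private lemma exists_noncomm {G : Type*} [Group G] {K : Subgroup G}
    (h : ¬IsMulCommutative K) : ∃ a ∈ K, ∃ b ∈ K, a * b ≠ b * a := by
  by_contra hc
  push_neg at hc
  refine h ⟨⟨fun a b => Subtype.ext ?_⟩⟩
  exact hc a a.2 b b.2

private lemma mem_of_pow_card_eq_one {Z : Type*} [Group Z] [Finite Z] [IsCyclic Z]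
    (B : Subgroup Z) {u : Z} (hu : u ^ Nat.card B = 1) : u ∈ B := by
  classical
  cases nonempty_fintype Z
  have hpos : 0 < Nat.card B := Nat.card_pos
  obtain ⟨F₀, hF₀card, hF₀mem⟩ : ∃ F₀ : Finset Z, F₀.card ≤ Nat.card B ∧
      ∀ a, a ∈ F₀ ↔ a ^ Nat.card B = 1 :=
    ⟨_, IsCyclic.card_pow_eq_one_le (α := Z) (n := Nat.card B) hpos, fun a => by simp⟩
  have hfin : (B : Set Z).Finite := Set.toFinite _
  have hsub : hfin.toFinset ⊆ F₀ := by
    intro g hg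
    rw [Set.Finite.mem_toFinset] at hg
    exact (hF₀mem g).mpr (orderOf_dvd_iff_pow_eq_one.mp (B.orderOf_dvd_natCard hg))
  have hcard : Nat.card B = hfin.toFinset.card := by
    rw [← Set.ncard_eq_toFinset_card (B : Set Z) hfin]
    exact Nat.card_coe_set_eq (B : Set Z)
  have heq := Finset.eq_of_subset_of_card_le hsub (by rw [← hcard]; exact hF₀card)
  have hu' : u ∈ F₀ := (hF₀mem u).mpr hu
  rw [← heq, Set.Finite.mem_toFinset] at hu'
  exact hu'

private lemma subgroup_le_of_card_dvd {Z : Type*} [Group Z] [Finite Z] [IsCyclic Z]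
    {A B : Subgroup Z} (h : Nat.card A ∣ Nat.card B) : A ≤ B := by
  intro g hg
  apply mem_of_pow_card_eq_one
  exact orderOf_dvd_iff_pow_eq_one.mp ((A.orderOf_dvd_natCard hg).trans h)

private lemma cyclic_pgroup_chain {p : ℕ} (hp : p.Prime) {Z : Type*} [Group Z] [Finite Z]
    [IsCyclic Z] (hZ : IsPGroup p Z) (A B : Subgroup Z) : A ≤ B ∨ B ≤ A := by
  haveI := Fact.mk hp
  obtain ⟨m, hm⟩ := IsPGroup.iff_card.mp (hZ.to_subgroup A)
  obtain ⟨n, hn⟩ := IsPGroup.iff_card.mp (hZ.to_subgroup B)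
  rcases le_total m n with h | h
  · exact Or.inl (subgroup_le_of_card_dvd (by rw [hm, hn]; exact pow_dvd_pow p h))
  · exact Or.inr (subgroup_le_of_card_dvd (by rw [hm, hn]; exact pow_dvd_pow p h))

private lemma chain_in_zpowers {p : ℕ} (hp : p.Prime) {G : Type*} [Group G] [Finite G]
    (hG : IsPGroup p G) (c : G) {A B : Subgroup G} (hA : A ≤ zpowers c)
    (hB : B ≤ zpowers c) : A ≤ B ∨ B ≤ A := by
  haveI : IsCyclic (zpowers c) := by
    refine ⟨⟨⟨c, mem_zpowers c⟩, fun x => ?_⟩⟩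
    obtain ⟨k, hk⟩ := mem_zpowers_iff.mp x.2
    exact ⟨k, Subtype.ext (by rw [← hk]; simp)⟩
  rcases cyclic_pgroup_chain hp (hG.to_subgroup (zpowers c))
      (A.subgroupOf (zpowers c)) (B.subgroupOf (zpowers c)) with h | h
  · left
    intro g hg
    have := h (show (⟨g, hA hg⟩ : zpowers c) ∈ A.subgroupOf (zpowers c) from
      (Subgroup.mem_subgroupOf).mpr hg)
    exact (Subgroup.mem_subgroupOf).mp this
  · right
    intro g hg
    have := h (show (⟨g, hB hg⟩ : zpowers c) ∈ B.subgroupOf (zpowers c) from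
      (Subgroup.mem_subgroupOf).mpr hg)
    exact (Subgroup.mem_subgroupOf).mp this

private lemma key_lemma {p : ℕ} (hp : p.Prime) {H₀ : Type*} [Group H₀] [Finite H₀]
    (hP : IsPGroup p H₀) (M K : Subgroup H₀)
    (hMne : M ≠ ⊤) (hMnorm : M.Normal)
    (hprop : ∀ R : Subgroup H₀, R ≠ ⊤ → ¬IsMulCommutative R → R ≤ M)
    (hKne : K ≠ ⊤) (hKna : ¬IsMulCommutative K) : False := by
  haveI := Fact.mk hp
  have hKM : K ≤ M := hprop K hKne hKna
  obtain ⟨a₀, ha₀, b₀, hb₀, hab₀⟩ := exists_noncomm hKna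
  -- there is a non-central element outside M
  have hx : ∃ x, x ∉ M ∧ ∃ y, x * y ≠ y * x := by
    by_contra hc
    push_neg at hc
    obtain ⟨u, hu⟩ : ∃ u, u ∉ M := by
      by_contra hu; push_neg at hu
      exact hMne ((Subgroup.eq_top_iff' M).mpr hu)
    have hus : u * a₀ ∉ M := fun h => hu (by
      have : u = (u * a₀) * a₀⁻¹ := by group
      rw [this]; exact M.mul_mem h (M.inv_mem (hKM ha₀)))
    have h1 := hc u hu
    have h2 := hc _ hus
    apply hab₀
    have e1 : u * b₀ = b₀ * u := h1 b₀
    have e2 : (u * a₀) * b₀ = b₀ * (u * a₀) := h2 b₀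
    have : u * (a₀ * b₀) = u * (b₀ * a₀) := by
      rw [← mul_assoc, e2, ← mul_assoc, ← e1, mul_assoc]
    exact mul_left_cancel this
  obtain ⟨x, hxM, y₀, hxy₀⟩ := hx
  set C := Subgroup.centralizer ({x} : Set H₀) with hCdef
  have hxC : x ∈ C := by
    rw [hCdef, Subgroup.mem_centralizer_iff]
    rintro h rfl; rfl
  have hCne : C ≠ ⊤ := by
    intro h
    apply hxy₀
    have : y₀ ∈ C := by rw [h]; trivial
    rw [hCdef, Subgroup.mem_centralizer_iff] at this
    exact this x rfl
  -- any element not commuting with x generates ⊤ with x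
  have fact2 : ∀ y, x * y ≠ y * x → closure ({x, y} : Set H₀) = ⊤ := by
    intro y hy
    by_contra hne
    have hxmem : x ∈ closure ({x, y} : Set H₀) := subset_closure (by simp)
    have hymem : y ∈ closure ({x, y} : Set H₀) := subset_closure (by simp)
    have hnc : ¬IsMulCommutative (closure ({x, y} : Set H₀)) := by
      intro hcomm
      exact hy (Subgroup.mul_comm_of_mem_isMulCommutative _ hxmem hymem)
    exact hxM (hprop _ hne hnc hxmem)
  have hCcomm : IsMulCommutative C := by
    by_contra hnc
    exact hxM (hprop C hCne hnc hxC)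
  have hCcoatom : IsCoatom C := by
    refine ⟨hCne, fun T hT => ?_⟩
    by_contra hTne
    obtain ⟨y, hyT, hyC⟩ := SetLike.exists_of_lt hT
    have hxy : x * y ≠ y * x := by
      intro h
      exact hyC (by rw [hCdef, Subgroup.mem_centralizer_iff]; rintro z rfl; exact h)
    have htop := fact2 y hxy
    have hle : closure ({x, y} : Set H₀) ≤ T := by
      rw [closure_le]
      rintro z (rfl | rfl)
      · exact hT.le hxC
      · exact hyT
    rw [htop] at hle
    exact hTne (top_le_iff.mp hle)
  haveI hnil : Group.IsNilpotent H₀ := hP.isNilpotent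
  haveI hCnorm : C.Normal :=
    Subgroup.NormalizerCondition.normal_of_coatom C normalizerCondition_of_isNilpotent hCcoatom
  -- a noncommuting pair in K with the first element outside C
  obtain ⟨a, haK, haC, b, hbK, hab⟩ :
      ∃ a, a ∈ K ∧ a ∉ C ∧ ∃ b, b ∈ K ∧ a * b ≠ b * a := by
    by_cases h : a₀ ∈ C
    · have hb₀C : b₀ ∉ C := by
        intro hbC
        exact hab₀ (haveI := hCcomm; Subgroup.mul_comm_of_mem_isMulCommutative C h hbC)
      exact ⟨b₀, hb₀, hb₀C, a₀, ha₀, fun e => hab₀ e.symm⟩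
    · exact ⟨a₀, ha₀, h, b₀, hb₀, hab₀⟩
  -- adjust b into C
  have hQ : ∃ k : ℤ, b * (a ^ k)⁻¹ ∈ C := by
    have hlt : C < C ⊔ zpowers a := by
      refine lt_of_le_of_ne le_sup_left (fun e => haC ?_)
      rw [e]; exact Subgroup.mem_sup_right (mem_zpowers a)
    have htop := hCcoatom.2 _ hlt
    have hb' : b ∈ (↑(C ⊔ zpowers a) : Set H₀) := by rw [htop]; trivial
    rw [Subgroup.normal_mul] at hb'
    obtain ⟨c₁, hc₁, a', ha', hmul⟩ := hb'
    obtain ⟨k, hk⟩ := mem_zpowers_iff.mp ha'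
    refine ⟨k, ?_⟩
    have : b * (a ^ k)⁻¹ = c₁ := by rw [← hmul, hk, mul_inv_cancel_right]
    rw [this]; exact hc₁
  obtain ⟨k, hb'C⟩ := hQ
  set b' := b * (a ^ k)⁻¹ with hb'def
  have hb'M : b' ∈ M := M.mul_mem (hKM hbK) (M.inv_mem (M.zpow_mem (hKM haK) k))
  have hab' : a * b' ≠ b' * a := by
    intro e
    apply hab
    have hw : a * (a ^ k)⁻¹ = (a ^ k)⁻¹ * a := (((Commute.refl a).zpow_right k).inv_right).eq
    have : (a * b) * (a ^ k)⁻¹ = (b * a) * (a ^ k)⁻¹ := by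
      calc (a * b) * (a ^ k)⁻¹ = a * (b * (a ^ k)⁻¹) := mul_assoc a b (a ^ k)⁻¹
        _ = (b * (a ^ k)⁻¹) * a := e
        _ = b * ((a ^ k)⁻¹ * a) := mul_assoc b (a ^ k)⁻¹ a
        _ = b * (a * (a ^ k)⁻¹) := by rw [← hw]
        _ = (b * a) * (a ^ k)⁻¹ := (mul_assoc b a (a ^ k)⁻¹).symm
    exact mul_right_cancel this
  set c := x * a with hcdef
  have hcM : c ∉ M := by
    intro h
    apply hxM
    have : x = c * a⁻¹ := by rw [hcdef]; group
    rw [this]; exact M.mul_mem h (M.inv_mem (hKM haK))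
  have hxb' : x * b' = b' * x := by
    have := hb'C
    rw [hCdef, Subgroup.mem_centralizer_iff] at this
    exact this x rfl
  have hcb' : c * b' ≠ b' * c := by
    intro e
    apply hab'
    have : x * (a * b') = x * (b' * a) := by
      calc x * (a * b') = (x * a) * b' := (mul_assoc x a b').symm
        _ = b' * (x * a) := e
        _ = (b' * x) * a := (mul_assoc b' x a).symm
        _ = (x * b') * a := by rw [hxb']
        _ = x * (b' * a) := mul_assoc x b' a
    exact mul_left_cancel this
  have hR : closure ({c, b'} : Set H₀) = ⊤ := by
    by_contra hne
    have hcmem : c ∈ closure ({c, b'} : Set H₀) := subset_closure (by simp)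
    have hbmem : b' ∈ closure ({c, b'} : Set H₀) := subset_closure (by simp)
    have hnc : ¬IsMulCommutative (closure ({c, b'} : Set H₀)) := by
      intro hcomm
      exact hcb' (Subgroup.mul_comm_of_mem_isMulCommutative _ hcmem hbmem)
    exact hcM (hprop _ hne hnc hcmem)
  set N := C ⊓ M with hNdef
  haveI hNnorm : N.Normal := by
    constructor
    intro n hn g
    rw [hNdef, Subgroup.mem_inf] at hn ⊢
    exact ⟨hCnorm.conj_mem n hn.1 g, hMnorm.conj_mem n hn.2 g⟩
  have hb'N : b' ∈ N := by rw [hNdef, Subgroup.mem_inf]; exact ⟨hb'C, hb'M⟩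
  have htopN : zpowers c ⊔ N = ⊤ := by
    rw [← top_le_iff, ← hR, closure_le]
    rintro z (rfl | rfl)
    · exact Subgroup.mem_sup_left (mem_zpowers _)
    · exact Subgroup.mem_sup_right hb'N
  have dedekind : ∀ D : Subgroup H₀, N ≤ D → D ≤ (zpowers c ⊓ D) ⊔ N := by
    intro D hND g hgD
    have hg : g ∈ (↑(zpowers c ⊔ N) : Set H₀) := by rw [htopN]; trivial
    rw [Subgroup.mul_normal] at hg
    obtain ⟨z, hz, nn, hnn, hmul⟩ := hg
    have hzD : z ∈ D := by
      have : z = g * nn⁻¹ := by rw [← hmul, mul_inv_cancel_right]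
      rw [this]; exact D.mul_mem hgD (D.inv_mem (hND hnn))
    have hgz : g = z * nn := hmul.symm
    rw [hgz]
    exact Subgroup.mul_mem _
      (Subgroup.mem_sup_left (Subgroup.mem_inf.mpr ⟨hz, hzD⟩))
      (Subgroup.mem_sup_right hnn)
  have hCle := dedekind C inf_le_left
  have hMle := dedekind M inf_le_right
  rcases chain_in_zpowers hp hP c (A := zpowers c ⊓ C) (B := zpowers c ⊓ M)
      inf_le_left inf_le_left with h | h
  · have hCM : C ≤ M := by
      refine hCle.trans (sup_le (h.trans inf_le_right) inf_le_right)
    exact hxM (hCM hxC)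
  · have hMC : M ≤ C := by
      refine hMle.trans (sup_le (h.trans inf_le_right) inf_le_left)
    exact haC (hMC (hKM haK))

/-- A finite p-group is metahamiltonian (every non-abelian subgroup is normal)
iff every minimal non-abelian subgroup is normal. -/
theorem metahamiltonian_iff_minimal_nonabelian_normal {p : ℕ} (hp : p.Prime)
    (G : Type*) [Group G] [Finite G] (hG : IsPGroup p G) :
    (∀ H : Subgroup G, ¬IsMulCommutative H → H.Normal) ↔
      (∀ H : Subgroup G,
        (¬IsMulCommutative H ∧ ∀ K : Subgroup G, K < H → IsMulCommutative K) → H.Normal) := by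
  constructor
  · intro h H hH
    exact h H hH.1
  · intro hyp
    have main : ∀ n (H : Subgroup G), Nat.card H = n → ¬IsMulCommutative H → H.Normal := by
      intro n
      induction n using Nat.strong_induction_on with
      | _ n IH =>
        intro H hn hH
        by_cases hmin : ∀ K : Subgroup G, K < H → IsMulCommutative K
        · exact hyp H ⟨hH, hmin⟩
        push_neg at hmin
        obtain ⟨K, hKH, hKna⟩ := hmin
        have hsmall : ∀ L : Subgroup G, L < H → ¬IsMulCommutative L → L.Normal := by
          intro L hLH hLna
          refine IH (Nat.card L) ?_ L rfl hLna
          rw [← hn]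
          have h1 : (L : Set G) ⊂ (H : Set G) := SetLike.coe_ssubset_coe.mpr hLH
          have h2 := Set.ncard_lt_ncard h1 (H : Set G).toFinite
          simpa [← Nat.card_coe_set_eq] using h2
        set S : Set (Subgroup G) := {L | L < H ∧ ¬IsMulCommutative L} with hS
        set M := sSup S with hM
        have hMnorm : M.Normal := by
          constructor
          intro m hm g
          have hle : M ≤ Subgroup.comap ((MulAut.conj g).toMonoidHom) M := by
            apply sSup_le
            intro L hL
            intro z hz
            rw [Subgroup.mem_comap]
            have hLnorm : L.Normal := hsmall L hL.1 hL.2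
            have : (MulAut.conj g) z ∈ L := by
              rw [MulAut.conj_apply]
              exact hLnorm.conj_mem z hz g
            exact le_sSup hL this
          have h2 := hle hm
          rw [Subgroup.mem_comap] at h2
          simpa [MulAut.conj_apply] using h2
        have hMH : M ≤ H := sSup_le fun L hL => hL.1.le
        have hKS : K ∈ S := ⟨hKH, hKna⟩
        by_cases hMeq : M = H
        · rw [← hMeq]; exact hMnorm
        · exfalso
          have hMlt : M < H := lt_of_le_of_ne hMH hMeq
          refine key_lemma hp (hG.to_subgroup H) (M.subgroupOf H) (K.subgroupOf H)
            ?_ (hMnorm.subgroupOf H) ?_ ?_ ?_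
          · intro e
            exact hMeq (le_antisymm hMH (Subgroup.subgroupOf_eq_top.mp e))
          · intro R hRne hRna
            have hR'le : R.map H.subtype ≤ H := Subgroup.map_subtype_le R
            have hR'lt : R.map H.subtype < H := by
              refine lt_of_le_of_ne hR'le (fun e => hRne ?_)
              rw [← Subgroup.comap_map_eq_self_of_injective H.subtype_injective R, e]
              exact Subgroup.subgroupOf_self H
            have hR'na : ¬IsMulCommutative (R.map H.subtype) := by
              obtain ⟨u, hu, v, hv, huv⟩ := exists_noncomm hRna
              intro hcomm
              apply huv
              have h1 : (u : G) ∈ R.map H.subtype := ⟨u, hu, rfl⟩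
              have h2 : (v : G) ∈ R.map H.subtype := ⟨v, hv, rfl⟩
              have h3 := Subgroup.mul_comm_of_mem_isMulCommutative (R.map H.subtype) h1 h2
              exact Subtype.ext h3
            have hmem : R.map H.subtype ≤ M := le_sSup (show _ ∈ S from ⟨hR'lt, hR'na⟩)
            intro r hr
            rw [Subgroup.mem_subgroupOf]
            exact hmem ⟨r, hr, rfl⟩
          · intro e
            exact absurd (lt_of_le_of_lt (Subgroup.subgroupOf_eq_top.mp e) hKH) (lt_irrefl H)
          · obtain ⟨u, hu, v, hv, huv⟩ := exists_noncomm hKna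
            intro hcomm
            apply huv
            have h1 : (⟨u, hKH.le hu⟩ : H) ∈ K.subgroupOf H := by
              rwa [Subgroup.mem_subgroupOf]
            have h2 : (⟨v, hKH.le hv⟩ : H) ∈ K.subgroupOf H := by
              rwa [Subgroup.mem_subgroupOf]
            have h3 := Subgroup.mul_comm_of_mem_isMulCommutative (K.subgroupOf H) h1 h2
            exact congrArg Subtype.val h3
    intro H hH
    exact main (Nat.card H) H rfl hH
end

section
/- Let G be a finite metahamiltonian p-group. For every x in G, the normal closure of ⟨x⟩ in G is either abelian or minimal non-abelian. -/
open Subgroup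
open scoped commutatorElement

section helpers
variable {G : Type*} [Group G]

lemma isComm_iff (H : Subgroup G) :
    IsMulCommutative H ↔ ∀ a ∈ H, ∀ b ∈ H, a * b = b * a := by
  constructor
  · intro h a ha b hb
    exact congrArg Subtype.val (h.is_comm.comm ⟨a, ha⟩ ⟨b, hb⟩)
  · intro h
    exact ⟨⟨fun a b => Subtype.ext (h a a.2 b b.2)⟩⟩

lemma comm_of_le {H K : Subgroup G} (h : H ≤ K) (hK : IsMulCommutative K) :
    IsMulCommutative H := by
  rw [isComm_iff] at *
  exact fun a ha b hb => hK a (h ha) b (h hb)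

/-- subgroup generated by p-th powers -/
def pPow (p : ℕ) (G : Type*) [Group G] : Subgroup G :=
  Subgroup.closure (Set.range fun g : G => g ^ p)

lemma map_pPow {H : Type*} [Group H] (p : ℕ) (f : G →* H) (hf : Function.Surjective f) :
    (pPow p G).map f = pPow p H := by
  rw [pPow, MonoidHom.map_closure]
  congr 1
  ext h
  constructor
  · rintro ⟨-, ⟨g, rfl⟩, rfl⟩
    exact ⟨f g, (map_pow f g p).symm⟩
  · rintro ⟨y, rfl⟩
    obtain ⟨g, rfl⟩ := hf y
    exact ⟨g ^ p, ⟨g, rfl⟩, map_pow f g p⟩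

lemma pPow_le {p : ℕ} {L : Subgroup G} (h : ∀ g : G, g ^ p ∈ L) : pPow p G ≤ L := by
  rw [pPow, closure_le]
  rintro - ⟨g, rfl⟩
  exact h g

end helpers

section lemB

lemma lemmaB3 {p : ℕ} (hp : p.Prime) {M : Type*} [Group M] [Finite M]
    (hM : IsPGroup p M) (hcomm : ∀ a b : M, a * b = b * a) (w : M)
    (h : Subgroup.zpowers w ⊔ pPow p M = ⊤) : ∀ m : M, m ∈ Subgroup.zpowers w := by
  haveI : Fact p.Prime := ⟨hp⟩
  haveI : (Subgroup.zpowers w).Normal :=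
    ⟨fun n hn g => by simpa [hcomm g n, mul_assoc] using hn⟩
  set mk := QuotientGroup.mk' (Subgroup.zpowers w) with hmk
  have hmksurj : Function.Surjective mk := QuotientGroup.mk'_surjective _
  have hDcomm : ∀ a b : M ⧸ Subgroup.zpowers w, a * b = b * a := by
    intro a b
    obtain ⟨a, rfl⟩ := hmksurj a
    obtain ⟨b, rfl⟩ := hmksurj b
    rw [← map_mul, hcomm, map_mul]
  let f : (M ⧸ Subgroup.zpowers w) →* (M ⧸ Subgroup.zpowers w) :=
    { toFun := fun d => d ^ p
      map_one' := one_pow p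
      map_mul' := fun a b => Commute.mul_pow (hDcomm a b) p }
  have hfs : Function.Surjective f := by
    intro d
    have htop : (⊤ : Subgroup (M ⧸ Subgroup.zpowers w)) = pPow p _ := by
      rw [← Subgroup.map_top_of_surjective mk hmksurj, ← h, Subgroup.map_sup,
        MonoidHom.map_zpowers, map_pPow p mk hmksurj]
      have : mk w = 1 := (QuotientGroup.eq_one_iff w).mpr (Subgroup.mem_zpowers w)
      rw [this, Subgroup.zpowers_one_eq_bot, bot_sup_eq]
    have hd : d ∈ pPow p _ := htop ▸ Subgroup.mem_top d
    have : pPow p (M ⧸ Subgroup.zpowers w) ≤ f.range := by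
      rw [pPow, Subgroup.closure_le]
      rintro - ⟨e, rfl⟩
      exact ⟨e, rfl⟩
    exact this hd
  have key : ∀ (k : ℕ) (d : M ⧸ Subgroup.zpowers w), ∃ e, e ^ p ^ k = d := by
    intro k
    induction k with
    | zero => exact fun d => ⟨d, by simp⟩
    | succ k ih =>
      intro d
      obtain ⟨e', he'⟩ := hfs d
      obtain ⟨e, he⟩ := ih e'
      exact ⟨e, by rw [pow_succ, pow_mul, he, ← he']; rfl⟩
  obtain ⟨m, hm⟩ := (hM.to_quotient (Subgroup.zpowers w)).exists_card_eq
  have hone : ∀ d : M ⧸ Subgroup.zpowers w, d = 1 := by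
    intro d
    obtain ⟨e, he⟩ := key m d
    rw [← he, ← hm, pow_card_eq_one']
  intro x
  exact (QuotientGroup.eq_one_iff x).mp (hone (mk x))

end lemB

universe u

lemma lemmaB {p : ℕ} (hp : p.Prime) :
    ∀ (n : ℕ) (N : Type u) (_ : Group N) (_ : Finite N), Nat.card N = n →
      IsPGroup p N → ∀ w : N,
        Subgroup.zpowers w ⊔ (commutator N ⊔ pPow p N) = ⊤ →
        ∀ a b : N, a * b = b * a := by
  intro n
  induction n using Nat.strong_induction_on with
  | _ n ih =>
    intro N _ _ hcard hN w hgen a b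
    haveI : Fact p.Prime := ⟨hp⟩
    rcases subsingleton_or_nontrivial N with hs | hnt
    · exact Subsingleton.elim _ _
    · haveI : Nontrivial (Subgroup.center N) := hN.center_nontrivial
      set Z := Subgroup.center N with hZdef
      set mk := QuotientGroup.mk' Z with hmk
      have hmksurj : Function.Surjective mk := QuotientGroup.mk'_surjective _
      have hcardlt : Nat.card (N ⧸ Z) < n := by
        have h1 : Nat.card N = Nat.card (N ⧸ Z) * Nat.card Z :=
          Subgroup.card_eq_card_quotient_mul_card_subgroup Z
        have h2 : 1 < Nat.card Z := Finite.one_lt_card_iff_nontrivial.mpr ‹_›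
        have h3 : 0 < Nat.card (N ⧸ Z) := Nat.card_pos
        calc Nat.card (N ⧸ Z) < Nat.card (N ⧸ Z) * Nat.card Z := by
              nlinarith
          _ = n := by rw [← h1, hcard]
      have hmapgen : Subgroup.zpowers (mk w) ⊔ (commutator (N ⧸ Z) ⊔ pPow p (N ⧸ Z)) = ⊤ := by
        have := congrArg (Subgroup.map mk) hgen
        rwa [Subgroup.map_sup, Subgroup.map_sup, MonoidHom.map_zpowers,
          map_pPow p mk hmksurj, _root_.commutator_def, Subgroup.map_commutator,
          Subgroup.map_top_of_surjective mk hmksurj, ← _root_.commutator_def] at this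
      have hQcomm : ∀ a b : N ⧸ Z, a * b = b * a :=
        ih _ hcardlt (N ⧸ Z) inferInstance inferInstance rfl (hN.to_quotient Z) (mk w) hmapgen
      -- commutator of Q is trivial, so Q = zpowers (mk w) ⊔ pPow
      have hgenQ : Subgroup.zpowers (mk w) ⊔ pPow p (N ⧸ Z) = ⊤ := by
        refine le_antisymm le_top ?_
        rw [← hmapgen]
        refine sup_le le_sup_left (sup_le ?_ le_sup_right)
        rw [_root_.commutator_def, Subgroup.commutator_le]
        intro g _ h _
        rw [commutatorElement_eq_one_iff_mul_comm.mpr (hQcomm g h)]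
        exact Subgroup.one_mem _
      have hcyc : ∀ q : N ⧸ Z, q ∈ Subgroup.zpowers (mk w) :=
        lemmaB3 hp (hN.to_quotient Z) hQcomm (mk w) hgenQ
      haveI : IsCyclic (N ⧸ Z) := ⟨mk w, hcyc⟩
      have hker : mk.ker ≤ Subgroup.center N := by
        rw [hmk, QuotientGroup.ker_mk']
      exact commutative_of_cyclic_center_quotient mk hker a b

lemma card_le_p_sq {p : ℕ} (hp : p.Prime) {Q : Type*} [Group Q] [Finite Q]
    (hcomm : ∀ a b : Q, a * b = b * a) (hexp : ∀ q : Q, q ^ p = 1)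
    (y z : Q) (hgen : Subgroup.closure {y, z} = ⊤) : Nat.card Q ≤ p * p := by
  let _cg : CommGroup Q := { (inferInstance : Group Q) with mul_comm := hcomm }
  have hred : ∀ (w : Q) (i : ℤ), w ^ i = w ^ (i % (p : ℤ)).toNat := by
    intro w i
    conv_lhs => rw [← Int.mul_ediv_add_emod i (p : ℤ)]
    rw [zpow_add, zpow_mul, zpow_natCast, hexp, one_zpow, one_mul,
      ← zpow_natCast, Int.toNat_of_nonneg (Int.emod_nonneg i (by exact_mod_cast hp.ne_zero))]
  have hltp : ∀ i : ℤ, (i % (p : ℤ)).toNat < p := by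
    intro i
    have h1 : i % (p : ℤ) < p := Int.emod_lt_of_pos i (by exact_mod_cast hp.pos)
    have h0 : 0 < p := hp.pos
    omega
  have hsub : ∀ q : Q, ∃ i j : ℤ, q = y ^ i * z ^ j := by
    intro q
    have hq : q ∈ Subgroup.closure ({y, z} : Set Q) := hgen ▸ Subgroup.mem_top q
    induction hq using Subgroup.closure_induction with
    | mem a ha =>
      rcases ha with rfl | rfl
      · exact ⟨1, 0, by simp⟩
      · exact ⟨0, 1, by simp⟩
    | one => exact ⟨0, 0, by simp⟩
    | mul a b _ _ iha ihb =>
      obtain ⟨i, j, rfl⟩ := iha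
      obtain ⟨i', j', rfl⟩ := ihb
      exact ⟨i + i', j + j', by rw [zpow_add, zpow_add]; exact mul_mul_mul_comm _ _ _ _⟩
    | inv a _ iha =>
      obtain ⟨i, j, rfl⟩ := iha
      exact ⟨-i, -j, by rw [mul_inv, ← zpow_neg, ← zpow_neg, mul_comm]⟩
  have hsurj : Function.Surjective (fun ij : Fin p × Fin p => y ^ (ij.1 : ℕ) * z ^ (ij.2 : ℕ)) := by
    intro q
    obtain ⟨i, j, rfl⟩ := hsub q
    refine ⟨(⟨(i % (p : ℤ)).toNat, hltp i⟩, ⟨(j % (p : ℤ)).toNat, hltp j⟩), ?_⟩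
    simp only
    rw [← zpow_natCast y, ← zpow_natCast z]
    rw [hred y i, hred z j, zpow_natCast, zpow_natCast]
  have := Nat.card_le_card_of_surjective _ hsurj
  simpa using this

lemma lemmaA {p : ℕ} (hp : p.Prime) (N : Type*) [Group N] [Finite N]
    (hN : IsPGroup p N) (X : Set N) (hgen : Subgroup.closure X = ⊤)
    (H1 : ∀ S : Subgroup N, ¬IsMulCommutative S → S.Normal)
    (H2 : ∀ S : Subgroup N, ¬IsMulCommutative S → (∃ y ∈ X, y ∈ S) → S = ⊤)
    (htop : ¬IsMulCommutative (⊤ : Subgroup N)) :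
    ∀ L : Subgroup N, L ≠ ⊤ → IsMulCommutative L := by
  haveI : Fact p.Prime := ⟨hp⟩
  -- Step 1: N is generated by two elements of X
  obtain ⟨y, hy, z, hz, hyz⟩ : ∃ y ∈ X, ∃ z ∈ X, Subgroup.closure ({y, z} : Set N) = ⊤ := by
    by_cases hcomm : ∀ a ∈ X, ∀ b ∈ X, a * b = b * a
    · exfalso
      apply htop
      rw [isComm_iff]
      have comm1 : ∀ c ∈ X, ∀ d ∈ Subgroup.closure X, c * d = d * c := by
        intro c hc d hd
        have h1 : Subgroup.closure X ≤ Subgroup.centralizer {c} := by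
          rw [Subgroup.closure_le]
          intro e he
          rw [SetLike.mem_coe, Subgroup.mem_centralizer_iff]
          intro g hg
          rw [Set.mem_singleton_iff] at hg
          rw [hg]
          exact hcomm c hc e he
        have := h1 hd
        rw [Subgroup.mem_centralizer_iff] at this
        exact this c rfl
      intro a _ b _
      have hbX : b ∈ Subgroup.closure X := hgen ▸ Subgroup.mem_top b
      have haX : a ∈ Subgroup.closure X := hgen ▸ Subgroup.mem_top a
      have h1 : Subgroup.closure X ≤ Subgroup.centralizer {b} := by
        rw [Subgroup.closure_le]
        intro e he
        rw [SetLike.mem_coe, Subgroup.mem_centralizer_iff]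
        intro g hg
        rw [Set.mem_singleton_iff] at hg
        rw [hg]
        exact (comm1 e he b hbX).symm
      have := h1 haX
      rw [Subgroup.mem_centralizer_iff] at this
      exact (this b rfl).symm
    · push_neg at hcomm
      obtain ⟨y, hy, z, hz, hne⟩ := hcomm
      refine ⟨y, hy, z, hz, ?_⟩
      have hyS : y ∈ Subgroup.closure ({y, z} : Set N) :=
        Subgroup.subset_closure (Set.mem_insert y {z})
      have hzS : z ∈ Subgroup.closure ({y, z} : Set N) :=
        Subgroup.subset_closure (Set.mem_insert_of_mem y rfl)
      refine H2 _ (fun hc => hne ((isComm_iff _).mp hc y hyS z hzS)) ⟨y, hy, hyS⟩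
  -- Step 2: setup contradiction, maximal bad subgroup
  intro L0 hL0top
  by_contra hL0c
  haveI : Finite (Subgroup N) :=
    Finite.of_injective (fun K : Subgroup N => (K : Set N)) SetLike.coe_injective
  obtain ⟨L, ⟨hLtop, hLnc⟩, hLmax⟩ :=
    Set.Finite.exists_maximalFor (fun K : Subgroup N => Nat.card K)
      {K : Subgroup N | K ≠ ⊤ ∧ ¬IsMulCommutative K} (Set.toFinite _) ⟨L0, hL0top, hL0c⟩
  haveI hLnorm : L.Normal := H1 L hLnc
  set mk := QuotientGroup.mk' L with hmkdef
  have hmksurj : Function.Surjective mk := QuotientGroup.mk'_surjective _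
  haveI : Nontrivial (N ⧸ L) := by
    obtain ⟨n, hn⟩ : ∃ n, n ∉ L := by
      by_contra h
      push_neg at h
      exact hLtop (eq_top_iff.mpr fun n _ => h n)
    exact ⟨mk n, 1, fun h => hn ((QuotientGroup.eq_one_iff n).mp h)⟩
  obtain ⟨k, hk⟩ := (hN.to_quotient L).exists_card_eq
  have hk1 : 1 ≤ k := by
    rcases Nat.eq_zero_or_pos k with rfl | h
    · exfalso
      have := Finite.one_lt_card_iff_nontrivial.mpr (inferInstance : Nontrivial (N ⧸ L))
      rw [hk, pow_zero] at this
      omega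
    · exact h
  -- Step 3: L has index p
  have hcardQ : Nat.card (N ⧸ L) = p := by
    obtain ⟨S, hS⟩ := Sylow.exists_subgroup_card_pow_prime (G := N ⧸ L) p
      (n := k - 1) (by rw [hk]; exact pow_dvd_pow p (Nat.sub_le k 1))
    set M := S.comap mk with hMdef
    have hLM : L ≤ M := by
      intro l hl
      show mk l ∈ S
      have h1 : mk l = 1 := (QuotientGroup.eq_one_iff l).mpr hl
      rw [h1]; exact S.one_mem
    have hMnc : ¬IsMulCommutative M := fun hc => hLnc (comm_of_le hLM hc)
    have hMne : M ≠ ⊤ := by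
      intro hMt
      have hStop : S = ⊤ := by
        rw [eq_top_iff]
        intro q _
        obtain ⟨n, rfl⟩ := hmksurj q
        exact (hMt ▸ Subgroup.mem_top n : n ∈ M)
      have h2 : Nat.card S = Nat.card (N ⧸ L) := by
        rw [hStop]
        exact Nat.card_congr Subgroup.topEquiv.toEquiv
      rw [hS, hk] at h2
      have := Nat.pow_right_injective hp.two_le h2
      omega
    have hLeqM : L = M := by
      have hle := Subgroup.card_le_of_le hLM
      have heq := hLmax (j := M) ⟨hMne, hMnc⟩ hle
      exact Subgroup.eq_of_le_of_card_ge hLM heq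
    have hSbot : S = ⊥ := by
      have h1 : S = M.map mk := (Subgroup.map_comap_eq_self_of_surjective hmksurj S).symm
      rw [h1, ← hLeqM, eq_bot_iff]
      rintro q ⟨l, hl, rfl⟩
      show mk l = 1
      exact (QuotientGroup.eq_one_iff l).mpr hl
    rw [hSbot] at hS
    have h1 : Nat.card (⊥ : Subgroup (N ⧸ L)) = 1 := Subgroup.card_bot
    rw [h1] at hS
    have hk2 : k - 1 = 0 := by
      by_contra h
      have := Nat.one_lt_pow h hp.one_lt
      omega
    have : k = 1 := by omega
    rw [hk, this, pow_one]
  -- Step 4: Φ := commutator ⊔ p-th powers  is contained in L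
  set Φ : Subgroup N := _root_.commutator N ⊔ pPow p N with hΦdef
  have hQcomm : ∀ a b : N ⧸ L, a * b = b * a := by
    haveI : IsCyclic (N ⧸ L) := isCyclic_of_prime_card (p := p) hcardQ
    letI := IsCyclic.commGroup (α := N ⧸ L)
    exact fun a b => mul_comm a b
  have hΦL : Φ ≤ L := by
    refine sup_le ?_ (pPow_le ?_)
    · rw [_root_.commutator_def, Subgroup.commutator_le]
      intro g _ h _
      rw [← QuotientGroup.eq_one_iff ⁅g, h⁆ (N := L)]
      show mk ⁅g, h⁆ = 1
      rw [map_commutatorElement]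
      exact commutatorElement_eq_one_iff_mul_comm.mpr (hQcomm (mk g) (mk h))
    · intro g
      rw [← QuotientGroup.eq_one_iff (g ^ p) (N := L)]
      show mk (g ^ p) = 1
      rw [map_pow, ← hcardQ]
      exact pow_card_eq_one'
  -- Step 5: Φ is central
  have hΦcent : Φ ≤ Subgroup.center N := by
    have hwΦ : ∀ w ∈ X, ∀ φ ∈ Φ, w * φ = φ * w := by
      intro w hw
      by_cases hc : IsMulCommutative ↥(Subgroup.zpowers w ⊔ Φ)
      · intro φ hφ
        exact (isComm_iff _).mp hc w
          (le_sup_left (a := Subgroup.zpowers w) (Subgroup.mem_zpowers w)) φ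
          (le_sup_right (b := Φ) hφ)
      · exfalso
        have heq := H2 _ hc ⟨w, hw,
          le_sup_left (a := Subgroup.zpowers w) (Subgroup.mem_zpowers w)⟩
        rw [hΦdef] at heq
        have hcm := lemmaB hp (Nat.card N) N inferInstance inferInstance rfl hN w heq
        exact htop ((isComm_iff _).mpr fun a _ b _ => hcm a b)
    intro φ hφ
    rw [Subgroup.mem_center_iff]
    intro n
    have h1 : Subgroup.closure X ≤ Subgroup.centralizer {φ} := by
      rw [Subgroup.closure_le]
      intro w hw
      rw [SetLike.mem_coe, Subgroup.mem_centralizer_iff]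
      intro g hg
      rw [Set.mem_singleton_iff] at hg
      rw [hg]
      exact (hwΦ w hw φ hφ).symm
    have h2 := h1 (hgen ▸ Subgroup.mem_top n)
    rw [Subgroup.mem_centralizer_iff] at h2
    exact (h2 φ rfl).symm
  haveI hΦnorm : Φ.Normal := by
    constructor
    intro φ hφ g
    have h1 := Subgroup.mem_center_iff.mp (hΦcent hφ) g
    have h2 : g * φ * g⁻¹ = φ := by rw [h1]; group
    rw [h2]
    exact hφ
  -- Step 6: card (N ⧸ Φ) ≤ p * p
  set mkΦ := QuotientGroup.mk' Φ with hmkΦdef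
  have hmkΦsurj : Function.Surjective mkΦ := QuotientGroup.mk'_surjective _
  have hcardΦ : Nat.card (N ⧸ Φ) ≤ p * p := by
    refine card_le_p_sq hp ?_ ?_ (mkΦ y) (mkΦ z) ?_
    · intro a b
      obtain ⟨a, rfl⟩ := hmkΦsurj a
      obtain ⟨b, rfl⟩ := hmkΦsurj b
      rw [← map_mul, ← map_mul]
      have h1 : (b * a : N)⁻¹ * (a * b) ∈ Φ := by
        have h2 : (b * a : N)⁻¹ * (a * b) = ⁅a⁻¹, b⁻¹⁆ := by
          rw [commutatorElement_def]
          group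
        rw [h2]
        refine le_sup_left (a := _root_.commutator N) ?_
        rw [_root_.commutator_def]
        exact Subgroup.commutator_mem_commutator (Subgroup.mem_top _) (Subgroup.mem_top _)
      have := (QuotientGroup.eq (s := Φ) (a := b * a) (b := a * b)).mpr h1
      exact this.symm
    · intro q
      obtain ⟨n, rfl⟩ := hmkΦsurj q
      rw [← map_pow]
      show mkΦ (n ^ p) = 1
      exact (QuotientGroup.eq_one_iff _).mpr
        (le_sup_right (b := pPow p N) (Subgroup.subset_closure ⟨n, rfl⟩))
    · have h1 := congrArg (Subgroup.map mkΦ) hyz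
      rw [Subgroup.map_top_of_surjective mkΦ hmkΦsurj, MonoidHom.map_closure] at h1
      rw [← h1]
      congr 1
      rw [Set.image_insert_eq, Set.image_singleton]
  -- Step 7: conclude L is commutative, contradiction
  apply hLnc
  have hLind : L.index = p := by rw [Subgroup.index_eq_card, hcardQ]
  have hΦind : Φ.index ≤ p * p := by rw [Subgroup.index_eq_card]; exact hcardΦ
  have hrel : Φ.relIndex L ≤ p := by
    have h1 := Subgroup.relIndex_mul_index hΦL
    rw [hLind] at h1
    by_contra h
    push_neg at h
    have hppos := hp.pos
    nlinarith
  set ΦL := Φ.subgroupOf L with hΦLdef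
  haveI hΦLnorm : ΦL.Normal := by
    constructor
    intro φ hφ g
    have h1 : (φ : N) ∈ Φ := hφ
    show ((g * φ * g⁻¹ : L) : N) ∈ Φ
    push_cast
    have h2 := Subgroup.mem_center_iff.mp (hΦcent h1) (g : N)
    have h3 : (g : N) * φ * (g : N)⁻¹ = φ := by rw [h2]; group
    rw [h3]
    exact h1
  obtain ⟨j, hj⟩ := ((hN.to_subgroup L).to_quotient ΦL).exists_card_eq
  have hcardLQ : Nat.card (L ⧸ ΦL) ≤ p := by
    have : ΦL.index = Φ.relIndex L := rfl
    rw [← Subgroup.index_eq_card, this]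
    exact hrel
  haveI : IsCyclic (L ⧸ ΦL) := by
    rcases Nat.lt_or_ge j 1 with h | h
    · interval_cases j
      have h1 : Nat.card (L ⧸ ΦL) = 1 := by rw [hj]; simp
      haveI : Subsingleton (L ⧸ ΦL) := (Nat.card_eq_one_iff_unique.mp h1).1
      infer_instance
    · have hj1 : j = 1 := by
        by_contra h2
        have h3 : 2 ≤ j := by omega
        have h4 : p * p ≤ p ^ j := by
          calc p * p = p ^ 2 := by ring
          _ ≤ p ^ j := Nat.pow_le_pow_right hp.pos h3
        have h5 := hp.one_lt
        rw [hj] at hcardLQ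
        nlinarith
      exact isCyclic_of_prime_card (p := p) (by rw [hj, hj1, pow_one])
  have hker : (QuotientGroup.mk' ΦL).ker ≤ Subgroup.center L := by
    rw [QuotientGroup.ker_mk']
    intro φ hφ
    rw [Subgroup.mem_center_iff]
    intro g
    have h1 : (φ : N) ∈ Φ := hφ
    have h2 := Subgroup.mem_center_iff.mp (hΦcent h1) (g : N)
    exact Subtype.ext h2
  have hcommL := commutative_of_cyclic_center_quotient (QuotientGroup.mk' ΦL) hker
  exact ⟨⟨fun a b => hcommL a b⟩⟩

lemma comm_map_subtype_iff {G : Type*} [Group G] {N : Subgroup G} (S : Subgroup ↥N) :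
    IsMulCommutative (S.map N.subtype) ↔ IsMulCommutative S := by
  rw [isComm_iff, isComm_iff]
  constructor
  · intro h a ha b hb
    exact Subtype.ext (h a ⟨a, ha, rfl⟩ b ⟨b, hb, rfl⟩)
  · rintro h a ⟨a', ha', rfl⟩ b ⟨b', hb', rfl⟩
    exact congrArg Subtype.val (h a' ha' b' hb')

/-- In a finite metahamiltonian p-group, the normal closure of any cyclic
subgroup is abelian or minimal non-abelian. -/
theorem normalClosure_abelian_or_minimal_nonabelian {p : ℕ} (hp : p.Prime)
    (G : Type*) [Group G] [Finite G] (hG : IsPGroup p G)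
    (hmh : ∀ H : Subgroup G, ¬IsMulCommutative H → H.Normal) (x : G) :
    IsMulCommutative (Subgroup.normalClosure {x}) ∨
      (¬IsMulCommutative (Subgroup.normalClosure {x}) ∧
        ∀ L : Subgroup G, L < Subgroup.normalClosure {x} → IsMulCommutative L) := by
  by_cases hN : IsMulCommutative (Subgroup.normalClosure ({x} : Set G))
  · exact Or.inl hN
  · refine Or.inr ⟨hN, ?_⟩
    intro L hL
    set N := Subgroup.normalClosure ({x} : Set G) with hNdef
    set X : Set ↥N := {n : ↥N | (n : G) ∈ Group.conjugatesOfSet ({x} : Set G)} with hXdef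
    -- image of X under coercion is the set of conjugates
    have hXimg : (N.subtype '' X) = Group.conjugatesOfSet ({x} : Set G) := by
      ext c
      constructor
      · rintro ⟨n, hn, rfl⟩
        exact hn
      · intro hc
        have hcN : c ∈ N := Subgroup.conjugatesOfSet_subset_normalClosure hc
        exact ⟨⟨c, hcN⟩, hc, rfl⟩
    -- X generates ⊤
    have hgen : Subgroup.closure X = (⊤ : Subgroup ↥N) := by
      apply Subgroup.map_injective N.subtype_injective
      rw [MonoidHom.map_closure, hXimg, ← MonoidHom.range_eq_map, N.range_subtype]
      exact rfl
    -- transfer of commutativity through map/top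
    have htop : ¬IsMulCommutative (⊤ : Subgroup ↥N) := by
      intro h
      apply hN
      have h2 : ((⊤ : Subgroup ↥N).map N.subtype) = N := by
        rw [← MonoidHom.range_eq_map, N.range_subtype]
      rw [← h2]
      exact (comm_map_subtype_iff _).mpr h
    have H1 : ∀ S : Subgroup ↥N, ¬IsMulCommutative S → S.Normal := by
      intro S hS
      have h1 : ¬IsMulCommutative (S.map N.subtype) := fun h => hS ((comm_map_subtype_iff _).mp h)
      have h2 := hmh _ h1
      have h3 := h2.comap N.subtype
      rwa [Subgroup.comap_map_eq_self_of_injective N.subtype_injective] at h3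
    have H2 : ∀ S : Subgroup ↥N, ¬IsMulCommutative S → (∃ y ∈ X, y ∈ S) → S = ⊤ := by
      rintro S hS ⟨y, hyX, hyS⟩
      have h1 : ¬IsMulCommutative (S.map N.subtype) := fun h => hS ((comm_map_subtype_iff _).mp h)
      haveI h2 : (S.map N.subtype).Normal := hmh _ h1
      -- x is conjugate into S.map
      have hyK : (y : G) ∈ S.map N.subtype := ⟨y, hyS, rfl⟩
      obtain ⟨a, ha, hconj⟩ := Group.mem_conjugatesOfSet_iff.mp hyX
      rw [Set.mem_singleton_iff] at ha
      rw [ha] at hconj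
      obtain ⟨c, hc⟩ := isConj_iff.mp hconj
      have hx : x ∈ S.map N.subtype := by
        have := h2.conj_mem _ hyK c⁻¹
        rw [← hc] at this
        simpa [mul_assoc] using this
      have h3 : N ≤ S.map N.subtype :=
        Subgroup.normalClosure_le_normal (Set.singleton_subset_iff.mpr hx)
      have h4 : S.map N.subtype = N := le_antisymm (Subgroup.map_subtype_le S) h3
      have := congrArg (Subgroup.comap N.subtype) h4
      rw [Subgroup.comap_map_eq_self_of_injective N.subtype_injective] at this
      rw [this]
      exact Subgroup.subgroupOf_self N
    have key := lemmaA hp ↥N (hG.to_subgroup N) X hgen H1 H2 htop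
    have hLN : L ≤ N := le_of_lt hL
    have hSne : L.subgroupOf N ≠ ⊤ := by
      intro h
      rw [Subgroup.subgroupOf_eq_top] at h
      exact (lt_irrefl _ (lt_of_lt_of_le hL h)).elim
    have hScomm := key (L.subgroupOf N) hSne
    have h5 : (L.subgroupOf N).map N.subtype = L := by
      rw [Subgroup.subgroupOf_map_subtype, inf_eq_left.mpr hLN]
    rw [← h5]
    exact (comm_map_subtype_iff _).mpr hScomm
end

section
/- Let G be a finite metahamiltonian p-group and x ∈ G. If the normal closure K of ⟨x⟩ in G is non-abelian, then the derived subgroup of K has order p. -/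
/-- If all elements of a generating set commute pairwise, then all elements of the
closure commute pairwise. -/
lemma aux_closure_comm {G : Type*} [Group G] {s : Set G}
    (h : ∀ a ∈ s, ∀ b ∈ s, a * b = b * a) :
    ∀ u ∈ Subgroup.closure s, ∀ v ∈ Subgroup.closure s, u * v = v * u := by
  have key : Subgroup.closure s ≤ Subgroup.centralizer (Subgroup.closure s : Set G) := by
    rw [Subgroup.closure_le]
    intro a ha
    rw [SetLike.mem_coe, Subgroup.mem_centralizer_iff]
    intro b hb
    have hle : Subgroup.closure s ≤ Subgroup.centralizer {a} := by
      rw [Subgroup.closure_le]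
      intro c hc
      rw [SetLike.mem_coe, Subgroup.mem_centralizer_iff]
      rintro d rfl
      exact h d ha c hc
    have := hle hb
    rw [Subgroup.mem_centralizer_iff] at this
    exact (this a rfl).symm
  intro u hu v hv
  have := key hv
  rw [Subgroup.mem_centralizer_iff] at this
  exact this u hu

/-- In a finite `p`-group, the `p`-th power of every element lies in every normal
coatom (maximal subgroup). -/
lemma aux_pow_mem_coatom {p : ℕ} (hp : p.Prime) {G : Type*} [Group G] [Finite G]
    (hG : IsPGroup p G) {H : Subgroup G} [H.Normal] (hH : IsCoatom H) (g : G) :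
    g ^ p ∈ H := by
  set f := QuotientGroup.mk' H with hf
  have hsub : ∀ W : Subgroup (G ⧸ H), W = ⊥ ∨ W = ⊤ := by
    intro W
    have hle : H ≤ W.comap f := by
      intro h hh
      rw [Subgroup.mem_comap]
      have : f h = 1 := (QuotientGroup.eq_one_iff h).mpr hh
      rw [this]; exact W.one_mem
    have hWmap : W = (W.comap f).map f :=
      (Subgroup.map_comap_eq_self_of_surjective (QuotientGroup.mk'_surjective H) W).symm
    rcases hle.eq_or_lt with heq | hlt
    · left
      rw [hWmap, ← heq]
      rw [Subgroup.map_eq_bot_iff]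
      rw [hf, QuotientGroup.ker_mk']
    · right
      rw [hWmap, hH.2 _ hlt]
      exact Subgroup.map_top_of_surjective _ (QuotientGroup.mk'_surjective H)
  by_cases hg : f g = 1
  · exact pow_mem ((QuotientGroup.eq_one_iff g).mp hg) p
  · rcases hsub (Subgroup.zpowers (f g ^ p)) with hbot | htop
    · have hm : f g ^ p ∈ (⊥ : Subgroup (G ⧸ H)) := hbot ▸ Subgroup.mem_zpowers _
      rw [Subgroup.mem_bot, ← map_pow] at hm
      exact (QuotientGroup.eq_one_iff _).mp hm
    · exfalso
      have hmem : f g ∈ Subgroup.zpowers (f g ^ p) := htop ▸ Subgroup.mem_top _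
      obtain ⟨m, hm⟩ := Subgroup.mem_zpowers_iff.mp hmem
      set q := f g with hq
      have h1 : q ^ ((p : ℤ) * m - 1) = 1 := by
        have : q ^ ((p : ℤ) * m) = q := by
          rw [zpow_mul, zpow_natCast]; exact hm
        rw [zpow_sub, this, zpow_one, mul_inv_cancel]
      have h2 : (orderOf q : ℤ) ∣ (p : ℤ) * m - 1 := orderOf_dvd_iff_zpow_eq_one.mpr h1
      have h3 : p ∣ orderOf q := by
        obtain ⟨k, hk⟩ := (hG.to_quotient H) q
        obtain ⟨j, hj, hoq⟩ := (Nat.dvd_prime_pow hp).mp (orderOf_dvd_of_pow_eq_one hk)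
        have hjne : j ≠ 0 := by
          rintro rfl
          simp only [pow_zero] at hoq
          exact hg (orderOf_eq_one_iff.mp hoq)
        rw [hoq]
        exact dvd_pow_self p hjne
      have h4 : (p : ℤ) ∣ (p : ℤ) * m - 1 := dvd_trans (Int.natCast_dvd_natCast.mpr h3) h2
      have h5 : (p : ℤ) ∣ 1 := (dvd_sub_right ⟨m, rfl⟩).mp h4
      have h6 := Int.le_of_dvd one_pos h5
      have := hp.two_le
      omega

open scoped commutatorElement

/-- In a finite metahamiltonian p-group, if the normal closure K of ⟨x⟩ is
non-abelian, then |K'| = p. -/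
theorem normalClosure_derived_order_p {p : ℕ} (hp : p.Prime)
    (G : Type*) [Group G] [Finite G] (hG : IsPGroup p G)
    (hmh : ∀ H : Subgroup G, ¬IsMulCommutative ↥H → H.Normal) (x : G)
    (hK : ¬IsMulCommutative ↥(Subgroup.normalClosure ({x} : Set G))) :
    Nat.card (↥⁅Subgroup.normalClosure ({x} : Set G), Subgroup.normalClosure ({x} : Set G)⁆) = p := by
  haveI : Fact p.Prime := ⟨hp⟩
  set K : Subgroup G := Subgroup.normalClosure {x} with hKdef
  -- Key: a subgroup of K containing a conjugate of x which is not commutative equals K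
  have key : ∀ H : Subgroup G, H ≤ K → (∃ c ∈ H, IsConj x c) → ¬IsMulCommutative ↥H → H = K := by
    rintro H hle ⟨c, hcH, hcconj⟩ hnc
    haveI hN : H.Normal := hmh H hnc
    obtain ⟨u, hu⟩ := isConj_iff.mp hcconj
    have hxH : x ∈ H := by
      have h1 : u⁻¹ * c * (u⁻¹)⁻¹ ∈ H := hN.conj_mem c hcH u⁻¹
      have h2 : x = u⁻¹ * c * (u⁻¹)⁻¹ := by rw [← hu]; group
      rw [h2]; exact h1
    exact le_antisymm hle
      (Subgroup.normalClosure_le_normal (Set.singleton_subset_iff.mpr hxH))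
  -- noncommuting conjugates a b of x
  obtain ⟨a, haS, b, hbS, hab⟩ :
      ∃ a ∈ Group.conjugatesOfSet ({x} : Set G), ∃ b ∈ Group.conjugatesOfSet ({x} : Set G),
        a * b ≠ b * a := by
    by_contra hcon
    push_neg at hcon
    apply hK
    have hcomm := aux_closure_comm hcon
    exact ⟨⟨fun u v => Subtype.ext (hcomm u u.2 v v.2)⟩⟩
  have haK : a ∈ K := Subgroup.conjugatesOfSet_subset_normalClosure haS
  have hbK : b ∈ K := Subgroup.conjugatesOfSet_subset_normalClosure hbS
  have haConj : IsConj x a := by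
    obtain ⟨y, hy, h⟩ := Group.mem_conjugatesOfSet_iff.mp haS
    rw [Set.mem_singleton_iff] at hy
    exact hy ▸ h
  have hbConj : IsConj x b := by
    obtain ⟨y, hy, h⟩ := Group.mem_conjugatesOfSet_iff.mp hbS
    rw [Set.mem_singleton_iff] at hy
    exact hy ▸ h
  -- K is generated by a and b
  have hcl : Subgroup.closure {a, b} = K := by
    apply key
    · rw [Subgroup.closure_le]
      rintro c (rfl | rfl)
      · exact haK
      · exact hbK
    · exact ⟨a, Subgroup.subset_closure (Set.mem_insert _ _), haConj⟩
    · intro hcomm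
      haveI := hcomm
      exact hab (Subgroup.mul_comm_of_mem_isMulCommutative
        (H := Subgroup.closure {a, b})
        (Subgroup.subset_closure (by simp))
        (Subgroup.subset_closure (by simp)))
  -- move to K
  set a' : K := ⟨a, haK⟩ with ha'
  set b' : K := ⟨b, hbK⟩ with hb'
  have habK : a' * b' ≠ b' * a' := fun h => hab (congrArg Subtype.val h)
  have hgen : Subgroup.closure {a', b'} = (⊤ : Subgroup K) := by
    apply Subgroup.map_injective K.subtype_injective
    rw [MonoidHom.map_closure, ← MonoidHom.range_eq_map, Subgroup.range_subtype,
      Set.image_pair]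
    exact hcl
  -- a proper subgroup of K containing a conjugate of x is commutative
  have propcomm : ∀ W : Subgroup K, W ≠ ⊤ → (∃ c : K, c ∈ W ∧ IsConj x (c : G)) →
      ∀ u ∈ W, ∀ v ∈ W, u * v = v * u := by
    rintro W hWne ⟨c, hcW, hconj⟩ u hu v hv
    set WG := W.map K.subtype with hWG
    have h1 : WG ≤ K := Subgroup.map_subtype_le W
    have h2 : WG ≠ K := by
      intro hEq
      apply hWne
      apply Subgroup.map_injective K.subtype_injective
      rw [← hWG, hEq, ← MonoidHom.range_eq_map, Subgroup.range_subtype]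
    have h3 : IsMulCommutative ↥WG := by
      by_contra hnc
      exact h2 (key WG h1 ⟨(c : G), ⟨c, hcW, rfl⟩, hconj⟩ hnc)
    haveI := h3
    have := Subgroup.mul_comm_of_mem_isMulCommutative (H := WG)
      (⟨u, hu, rfl⟩ : (u : G) ∈ WG) (⟨v, hv, rfl⟩ : (v : G) ∈ WG)
    exact Subtype.ext (by simpa using this)
  -- structure on K
  have hKp : IsPGroup p K := hG.to_subgroup K
  haveI : Group.IsNilpotent K := hKp.isNilpotent
  have hnc : NormalizerCondition K := normalizerCondition_of_isNilpotent
  -- coatoms above a' and b'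
  have hzane : Subgroup.zpowers a' ≠ ⊤ := by
    intro h
    have : b' ∈ Subgroup.zpowers a' := h ▸ Subgroup.mem_top _
    obtain ⟨k, hk⟩ := Subgroup.mem_zpowers_iff.mp this
    exact habK (hk ▸ ((Commute.refl a').zpow_right k).eq)
  have hzbne : Subgroup.zpowers b' ≠ ⊤ := by
    intro h
    have : a' ∈ Subgroup.zpowers b' := h ▸ Subgroup.mem_top _
    obtain ⟨k, hk⟩ := Subgroup.mem_zpowers_iff.mp this
    exact habK ((hk ▸ ((Commute.refl b').zpow_right k).eq).symm)
  obtain ⟨A, hA, hAle⟩ := (IsCoatomic.eq_top_or_exists_le_coatom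
    (Subgroup.zpowers a')).resolve_left hzane
  obtain ⟨B, hB, hBle⟩ := (IsCoatomic.eq_top_or_exists_le_coatom
    (Subgroup.zpowers b')).resolve_left hzbne
  have ha'A : a' ∈ A := hAle (Subgroup.mem_zpowers a')
  have hb'B : b' ∈ B := hBle (Subgroup.mem_zpowers b')
  have hbA : b' ∉ A := by
    intro h
    apply hA.1
    have : Subgroup.closure {a', b'} ≤ A := by
      rw [Subgroup.closure_le]
      rintro c (rfl | rfl)
      · exact ha'A
      · exact h
    rw [hgen] at this
    exact le_antisymm le_top this
  have haB : a' ∉ B := by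
    intro h
    apply hB.1
    have : Subgroup.closure {a', b'} ≤ B := by
      rw [Subgroup.closure_le]
      rintro c (rfl | rfl)
      · exact h
      · exact hb'B
    rw [hgen] at this
    exact le_antisymm le_top this
  have hAcomm : ∀ u ∈ A, ∀ v ∈ A, u * v = v * u :=
    propcomm A hA.1 ⟨a', ha'A, haConj⟩
  have hBcomm : ∀ u ∈ B, ∀ v ∈ B, u * v = v * u :=
    propcomm B hB.1 ⟨b', hb'B, hbConj⟩
  haveI hAn : A.Normal := Subgroup.NormalizerCondition.normal_of_coatom A hnc hA
  haveI hBn : B.Normal := Subgroup.NormalizerCondition.normal_of_coatom B hnc hB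
  -- commutator element
  set c : K := ⁅a', b'⁆ with hc
  have hcne : c ≠ 1 := fun h => habK (commutatorElement_eq_one_iff_commute.mp h)
  have hcA : c ∈ A := by
    have h1 : b' * a'⁻¹ * b'⁻¹ ∈ A := hAn.conj_mem a'⁻¹ (inv_mem ha'A) b'
    have h2 : c = a' * (b' * a'⁻¹ * b'⁻¹) := by rw [hc, commutatorElement_def]; group
    rw [h2]; exact mul_mem ha'A h1
  have hcB : c ∈ B := by
    have h1 : a' * b' * a'⁻¹ ∈ B := hBn.conj_mem b' hb'B a'
    have h2 : c = (a' * b' * a'⁻¹) * b'⁻¹ := by rw [hc, commutatorElement_def]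
    rw [h2]; exact mul_mem h1 (inv_mem hb'B)
  have hsup : A ⊔ B = ⊤ := by
    apply hA.2
    refine lt_of_le_of_ne le_sup_left ?_
    intro h
    exact hbA (h ▸ (le_sup_right : B ≤ A ⊔ B) hb'B)
  have hcZ : ∀ g : K, g * c = c * g := by
    intro g
    have hle : (⊤ : Subgroup K) ≤ Subgroup.centralizer {c} := by
      rw [← hsup, sup_le_iff]
      constructor
      · intro u hu
        rw [Subgroup.mem_centralizer_iff]
        rintro d hd
        rw [Set.mem_singleton_iff] at hd
        subst hd
        exact hAcomm _ hcA u hu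
      · intro u hu
        rw [Subgroup.mem_centralizer_iff]
        rintro d hd
        rw [Set.mem_singleton_iff] at hd
        subst hd
        exact hBcomm _ hcB u hu
    have := hle (Subgroup.mem_top g)
    rw [Subgroup.mem_centralizer_iff] at this
    exact (this c rfl).symm
  -- a'^p ∈ B
  have hapB : a' ^ p ∈ B := aux_pow_mem_coatom hp hKp hB a'
  -- conjugation formula
  have hconj_pow : ∀ n : ℕ, a' ^ n * b' * (a' ^ n)⁻¹ = c ^ n * b' := by
    intro n
    induction n with
    | zero => simp
    | succ n ih =>
      have hac : Commute a' c := hcZ a'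
      have hcomm : a' * c ^ n = c ^ n * a' := (hac.pow_right n).eq
      have h1 : a' * b' * a'⁻¹ = c * b' := by rw [hc, commutatorElement_def]; group
      calc a' ^ (n + 1) * b' * (a' ^ (n + 1))⁻¹
          = a' * (a' ^ n * b' * (a' ^ n)⁻¹) * a'⁻¹ := by rw [pow_succ']; group
        _ = a' * (c ^ n * b') * a'⁻¹ := by rw [ih]
        _ = (a' * c ^ n) * b' * a'⁻¹ := by group
        _ = c ^ n * (a' * b' * a'⁻¹) := by rw [hcomm]; group
        _ = c ^ n * (c * b') := by rw [h1]
        _ = c ^ (n + 1) * b' := by rw [pow_succ]; group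
  have hcp : c ^ p = 1 := by
    have h2 : a' ^ p * b' * (a' ^ p)⁻¹ = b' := by
      have h3 : a' ^ p * b' = b' * a' ^ p := hBcomm _ hapB b' hb'B
      rw [h3]; group
    have h4 := hconj_pow p
    rw [h2] at h4
    have h5 : c ^ p * b' = 1 * b' := by rw [one_mul, ← h4]
    exact mul_right_cancel h5
  -- derived subgroup of K is zpowers c
  set N : Subgroup K := Subgroup.zpowers c with hN
  haveI hNn : N.Normal := by
    constructor
    intro n hn g
    obtain ⟨k, rfl⟩ := Subgroup.mem_zpowers_iff.mp hn
    have hgc : Commute g c := hcZ g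
    have hcomm : g * c ^ k = c ^ k * g := (hgc.zpow_right k).eq
    have : g * c ^ k * g⁻¹ = c ^ k := by rw [hcomm]; group
    rw [this]
    exact Subgroup.zpow_mem_zpowers c k
  have hder : ⁅(⊤ : Subgroup K), (⊤ : Subgroup K)⁆ = N := by
    apply le_antisymm
    · rw [Subgroup.commutator_le]
      intro g₁ _ g₂ _
      have hQ : ∀ q r : K ⧸ N, q * r = r * q := by
        have hgenQ : Subgroup.closure ((QuotientGroup.mk' N) '' {a', b'}) = ⊤ := by
          rw [← MonoidHom.map_closure, hgen,
            Subgroup.map_top_of_surjective _ (QuotientGroup.mk'_surjective N)]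
        have hcommQ : ∀ u ∈ (QuotientGroup.mk' N) '' {a', b'},
            ∀ v ∈ (QuotientGroup.mk' N) '' {a', b'}, u * v = v * u := by
          rintro u ⟨u', hu', rfl⟩ v ⟨v', hv', rfl⟩
          have hmem : ⁅u', v'⁆ ∈ N := by
            rcases hu' with rfl | rfl <;> rcases hv' with rfl | rfl
            · rw [commutatorElement_eq_one_iff_commute.mpr (Commute.refl _)]
              exact N.one_mem
            · exact Subgroup.mem_zpowers c
            · rw [← commutatorElement_inv]
              exact inv_mem (Subgroup.mem_zpowers c)
            · rw [commutatorElement_eq_one_iff_commute.mpr (Commute.refl _)]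
              exact N.one_mem
          have h1 : (QuotientGroup.mk' N) ⁅u', v'⁆ = 1 :=
            (QuotientGroup.eq_one_iff _).mpr hmem
          rw [map_commutatorElement] at h1
          exact commutatorElement_eq_one_iff_commute.mp h1
        have hcc := aux_closure_comm hcommQ
        intro q r
        have hq : q ∈ Subgroup.closure ((QuotientGroup.mk' N) '' {a', b'}) := by
          rw [hgenQ]; exact Subgroup.mem_top q
        have hr : r ∈ Subgroup.closure ((QuotientGroup.mk' N) '' {a', b'}) := by
          rw [hgenQ]; exact Subgroup.mem_top r
        exact hcc q hq r hr
      have h1 : (QuotientGroup.mk' N) ⁅g₁, g₂⁆ = 1 := by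
        rw [map_commutatorElement]
        exact commutatorElement_eq_one_iff_commute.mpr (hQ _ _)
      exact (QuotientGroup.eq_one_iff _).mp h1
    · rw [Subgroup.zpowers_le]
      exact Subgroup.commutator_mem_commutator (Subgroup.mem_top a') (Subgroup.mem_top b')
  have hcard : Nat.card N = p := by
    rw [hN, Nat.card_zpowers]
    rcases hp.eq_one_or_self_of_dvd _ (orderOf_dvd_of_pow_eq_one hcp) with h | h
    · exact absurd (orderOf_eq_one_iff.mp h) hcne
    · exact h
  -- transfer back to G
  have hmap : ⁅K, K⁆ = (⁅(⊤ : Subgroup K), (⊤ : Subgroup K)⁆).map K.subtype := by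
    rw [Subgroup.map_commutator, ← MonoidHom.range_eq_map, Subgroup.range_subtype]
  rw [hmap, hder, ← hcard]
  exact Nat.card_congr (N.equivMapOfInjective K.subtype K.subtype_injective).symm.toEquiv
end

section
/- A finite p-group G is minimal non-abelian if and only if d(G) = 2 and Z(G) = Φ(G). -/
open Subgroup Pointwise

private lemma mem_frattini_iff' {G : Type*} [Group G] {x : G} :
    x ∈ frattini G ↔ ∀ M : Subgroup G, IsCoatom M → x ∈ M := by
  simp [frattini, Order.radical, Subgroup.mem_iInf, Set.mem_setOf_eq]

private lemma coatom_facts {p : ℕ} (hp : p.Prime) {G : Type*} [Group G] [Finite G]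
    (hG : IsPGroup p G) {M : Subgroup G} (hM : IsCoatom M) :
    (∀ g h : G, g * h * g⁻¹ * h⁻¹ ∈ M) ∧ (∀ g : G, g ^ p ∈ M) := by
  haveI := Fact.mk hp
  haveI : Group.IsNilpotent G := hG.isNilpotent
  haveI hMn : M.Normal :=
    NormalizerCondition.normal_of_coatom M (normalizerCondition_of_isNilpotent (G := G)) hM
  set π := QuotientGroup.mk' M with hπ
  have hQ : IsPGroup p (G ⧸ M) := hG.to_quotient M
  obtain ⟨g₀, hg₀⟩ : ∃ g, g ∉ M := by
    by_contra h; push_neg at h; exact hM.1 ((Subgroup.eq_top_iff' M).mpr h)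
  haveI : Nontrivial (G ⧸ M) :=
    ⟨⟨QuotientGroup.mk g₀, 1, by simp [QuotientGroup.eq_one_iff, hg₀]⟩⟩
  obtain ⟨n, hn⟩ := IsPGroup.iff_card.mp hQ
  have hn0 : n ≠ 0 := by
    rintro rfl
    simp at hn
    exact (Finite.one_lt_card_iff_nontrivial.mpr ‹_›).ne' hn
  have hpd : p ∣ Nat.card (G ⧸ M) := by
    rw [hn]; exact dvd_pow_self p hn0
  obtain ⟨x, hx⟩ := exists_prime_orderOf_dvd_card' (G := G ⧸ M) p hpd
  have hxt : Subgroup.zpowers x = ⊤ := by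
    have hle : M ≤ (Subgroup.zpowers x).comap π := by
      intro m hm
      have : π m = 1 := (QuotientGroup.eq_one_iff m).mpr hm
      simp [Subgroup.mem_comap, this, one_mem]
    rcases eq_or_lt_of_le hle with heq | hlt
    · exfalso
      obtain ⟨g, hg⟩ := QuotientGroup.mk'_surjective M x
      have : g ∈ (Subgroup.zpowers x).comap π := by
        simp [Subgroup.mem_comap, hπ, hg, Subgroup.mem_zpowers]
      rw [← heq] at this
      have : x = 1 := by rw [← hg]; exact (QuotientGroup.eq_one_iff g).mpr this
      rw [this, orderOf_one] at hx
      exact hp.one_lt.ne' hx.symm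
    · have h2 := Subgroup.map_comap_eq_self_of_surjective (QuotientGroup.mk'_surjective M)
        (Subgroup.zpowers x)
      rw [hM.2 _ hlt] at h2
      rw [← h2, Subgroup.map_top_of_surjective _ (QuotientGroup.mk'_surjective M)]
  have hcard : Nat.card (G ⧸ M) = p := by
    rw [← hx, ← Nat.card_zpowers, hxt, Subgroup.card_top]
  have hcomm : ∀ y z : G ⧸ M, y * z = z * y := by
    intro y z
    have hy : y ∈ Subgroup.zpowers x := by rw [hxt]; trivial
    have hz : z ∈ Subgroup.zpowers x := by rw [hxt]; trivial
    obtain ⟨m, rfl⟩ := hy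
    obtain ⟨k, rfl⟩ := hz
    rw [← zpow_add, ← zpow_add, add_comm]
  constructor
  · intro g h
    rw [← QuotientGroup.eq_one_iff]
    have : π (g * h * g⁻¹ * h⁻¹) = 1 := by
      simp only [map_mul, map_inv]
      rw [hcomm (π g) (π h)]
      group
    simpa [hπ] using this
  · intro g
    rw [← QuotientGroup.eq_one_iff]
    have : π (g ^ p) = 1 := by
      rw [map_pow, ← hcard, pow_card_eq_one']
    simpa [hπ] using this


/-- A finite non-abelian p-group is minimal non-abelian iff d(G) = 2 and
Z(G) = Φ(G). -/
theorem minimal_nonabelian_iff_two_gen_center_eq_frattini {p : ℕ} (hp : p.Prime)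
    (G : Type*) [Group G] [Finite G] (hG : IsPGroup p G)
    (hna : ¬∀ a b : G, a * b = b * a) :
    (∀ H : Subgroup G, H ≠ ⊤ → IsMulCommutative H) ↔
      ((∃ a b : G, Subgroup.closure {a, b} = ⊤) ∧ Subgroup.center G = frattini G) := by
  haveI := Fact.mk hp
  haveI : Finite (Subgroup G) := Finite.of_injective (fun H => (H : Set G)) SetLike.coe_injective
  push_neg at hna
  obtain ⟨a, b, hab⟩ := hna
  constructor
  · intro h
    have comm_of_mem : ∀ (K : Subgroup G), K ≠ ⊤ → ∀ x ∈ K, ∀ y ∈ K, x * y = y * x := by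
      intro K hK x hx y hy
      have := (h K hK).is_comm.comm ⟨x, hx⟩ ⟨y, hy⟩
      simpa [Subtype.ext_iff] using this
    refine ⟨⟨a, b, ?_⟩, ?_⟩
    · by_contra hne
      exact hab (comm_of_mem _ hne a (Subgroup.subset_closure (by simp))
        b (Subgroup.subset_closure (by simp)))
    · apply le_antisymm
      · -- center ≤ frattini
        intro z hz
        rw [mem_frattini_iff']
        intro M hM
        by_contra hzM
        have hlt : M < M ⊔ Subgroup.zpowers z :=
          SetLike.lt_iff_le_and_exists.mpr
            ⟨le_sup_left, z, (le_sup_right : Subgroup.zpowers z ≤ _) (Subgroup.mem_zpowers z), hzM⟩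
        have htop : M ⊔ Subgroup.zpowers z = ⊤ := hM.2 _ hlt
        haveI : (Subgroup.zpowers z).Normal := by
          constructor
          intro n hn g
          obtain ⟨k, rfl⟩ := hn
          have : g * z ^ k = z ^ k * g :=
            (Subgroup.mem_center_iff.mp ((Subgroup.center G).zpow_mem hz k) g)
          rw [this, mul_assoc, mul_inv_cancel, mul_one]
          exact Subgroup.zpow_mem _ (Subgroup.mem_zpowers z) k
        have hmul : (↑(M ⊔ Subgroup.zpowers z) : Set G) = (M : Set G) * (Subgroup.zpowers z : Set G) :=
          Subgroup.mul_normal M _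
        have dec : ∀ g : G, ∃ m ∈ M, ∃ k : ℤ, g = m * z ^ k := by
          intro g
          have hg : g ∈ (↑(M ⊔ Subgroup.zpowers z) : Set G) := by rw [htop]; trivial
          rw [hmul] at hg
          obtain ⟨m, hm, w, hw, hmw⟩ := hg
          obtain ⟨k, rfl⟩ := hw
          exact ⟨m, hm, k, hmw.symm⟩
        apply hab
        obtain ⟨m1, hm1, k1, rfl⟩ := dec a
        obtain ⟨m2, hm2, k2, rfl⟩ := dec b
        have c : ∀ (k : ℤ) (g : G), Commute (z ^ k) g := fun k g =>
          ((Subgroup.mem_center_iff.mp ((Subgroup.center G).zpow_mem hz k) g)).symm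
        have H1 : Commute m1 m2 := comm_of_mem M hM.1 m1 hm1 m2 hm2
        exact (H1.mul_right (c k2 m1).symm).mul_left ((c k1 m2).mul_right (c k1 (z ^ k2)))
      · -- frattini ≤ center
        intro x hx
        rw [Subgroup.mem_center_iff]
        intro g
        by_cases hg : Subgroup.zpowers g = ⊤
        · have : x ∈ Subgroup.zpowers g := by rw [hg]; trivial
          obtain ⟨k, rfl⟩ := this
          exact ((Commute.refl g).zpow_right k)
        · have hK : Subgroup.zpowers g ⊔ frattini G ≠ ⊤ := fun e => hg (frattini_nongenerating e)
          exact comm_of_mem _ hK g ((le_sup_left : Subgroup.zpowers g ≤ _) (Subgroup.mem_zpowers g)) x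
            ((le_sup_right : frattini G ≤ _) hx)
  · rintro ⟨⟨a', b', hgen⟩, hZF⟩ K hK
    set π := QuotientGroup.mk' (Subgroup.center G) with hπ
    have hπs : Function.Surjective π := QuotientGroup.mk'_surjective _
    have hcommQ : ∀ y z : G ⧸ Subgroup.center G, y * z = z * y := by
      intro y z
      obtain ⟨g, rfl⟩ := hπs y
      obtain ⟨h, rfl⟩ := hπs z
      have hc : g * h * g⁻¹ * h⁻¹ ∈ Subgroup.center G := by
        rw [hZF, mem_frattini_iff']
        intro M hM
        exact (coatom_facts hp hG hM).1 g h
      have : π (g * h * g⁻¹ * h⁻¹) = 1 := (QuotientGroup.eq_one_iff _).mpr hc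
      simp only [map_mul, map_inv] at this
      have h1 : π g * π h * (π h * π g)⁻¹ = 1 := by
        rw [mul_inv_rev, ← mul_assoc]; exact this
      exact mul_inv_eq_one.mp h1
    have hexpQ : ∀ y : G ⧸ Subgroup.center G, y ^ p = 1 := by
      intro y
      obtain ⟨g, rfl⟩ := hπs y
      have hc : g ^ p ∈ Subgroup.center G := by
        rw [hZF, mem_frattini_iff']
        intro M hM
        exact (coatom_facts hp hG hM).2 g
      rw [← map_pow]
      exact (QuotientGroup.eq_one_iff _).mpr hc
    have hgenQ : Subgroup.closure {π a', π b'} = ⊤ := by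
      have h0 : Subgroup.map π ⊤ = ⊤ := Subgroup.map_top_of_surjective π hπs
      rw [← hgen, MonoidHom.map_closure, Set.image_insert_eq, Set.image_singleton] at h0
      exact h0
    have hcardQ : Nat.card (G ⧸ Subgroup.center G) ≤ p ^ 2 := by
      letI : CommGroup (G ⧸ Subgroup.center G) :=
        { (inferInstance : Group (G ⧸ Subgroup.center G)) with mul_comm := hcommQ }
      let φ : Multiplicative (ZMod p × ZMod p) →* G ⧸ Subgroup.center G :=
        { toFun := fun ij => π a' ^ (Multiplicative.toAdd ij).1.val
              * π b' ^ (Multiplicative.toAdd ij).2.val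
          map_one' := by simp
          map_mul' := by
            intro x y
            simp only [toAdd_mul, Prod.fst_add, Prod.snd_add]
            rw [ZMod.val_add, ZMod.val_add, ← pow_eq_pow_mod _ (hexpQ (π a')),
              ← pow_eq_pow_mod _ (hexpQ (π b')), pow_add, pow_add]
            exact mul_mul_mul_comm _ _ _ _ }
      have hs : Function.Surjective φ := by
        rw [← MonoidHom.range_eq_top, ← top_le_iff, ← hgenQ, Subgroup.closure_le]
        rintro q hq
        simp only [Set.mem_insert_iff, Set.mem_singleton_iff] at hq
        rcases hq with rfl | rfl
        · exact ⟨Multiplicative.ofAdd (1, 0), by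
            simp [φ, ZMod.val_one, ZMod.val_zero]⟩
        · exact ⟨Multiplicative.ofAdd (0, 1), by
            simp [φ, ZMod.val_one, ZMod.val_zero]⟩
      calc Nat.card (G ⧸ Subgroup.center G)
          ≤ Nat.card (Multiplicative (ZMod p × ZMod p)) :=
            Nat.card_le_card_of_surjective φ hs
        _ = p ^ 2 := by
            rw [Nat.card_congr Multiplicative.toAdd, Nat.card_prod, Nat.card_zmod, sq]
    have hKZ : K ⊔ Subgroup.center G ≠ ⊤ := by
      intro e
      apply hK
      apply frattini_nongenerating
      rwa [← hZF]
    set R := Subgroup.map π K with hR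
    have hRne : R ≠ ⊤ := by
      intro e
      have h2 := congrArg (Subgroup.comap π) e
      rw [Subgroup.comap_map_eq, QuotientGroup.ker_mk', Subgroup.comap_top] at h2
      exact hKZ h2
    have hRp : IsPGroup p R := (hG.to_quotient _).to_subgroup R
    obtain ⟨j, hj⟩ := IsPGroup.iff_card.mp hRp
    have hdvd : Nat.card R ∣ Nat.card (G ⧸ Subgroup.center G) :=
      Subgroup.card_subgroup_dvd_card R
    have hcyc : IsCyclic R := by
      match j, hj with
      | 0, hj =>
        haveI : Subsingleton R := (Nat.card_eq_one_iff_unique.mp (by simpa using hj)).1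
        exact isCyclic_of_subsingleton
      | 1, hj => exact isCyclic_of_prime_card (by simpa using hj)
      | (j + 2), hj =>
        exfalso
        have hle := Nat.le_of_dvd Nat.card_pos hdvd
        have h2 : p ^ 2 ≤ Nat.card R := by
          rw [hj]
          exact Nat.pow_le_pow_right hp.pos (by omega)
        have hEq : Nat.card R = Nat.card (G ⧸ Subgroup.center G) :=
          le_antisymm hle (le_trans hcardQ h2)
        exact hRne (Subgroup.eq_top_of_card_eq R hEq)
    set f : K →* G ⧸ Subgroup.center G := π.comp K.subtype with hf
    have hfr : f.range = R := by
      rw [hf, MonoidHom.range_comp, Subgroup.range_subtype]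
    haveI : IsCyclic f.range := by rw [hfr]; exact hcyc
    have hker : (f.rangeRestrict).ker ≤ Subgroup.center K := by
      rw [MonoidHom.ker_rangeRestrict]
      intro k hk
      have hkc : (k : G) ∈ Subgroup.center G := by
        have h3 : π (k : G) = 1 := hk
        exact (QuotientGroup.eq_one_iff _).mp h3
      rw [Subgroup.mem_center_iff]
      intro g
      exact Subtype.ext (Subgroup.mem_center_iff.mp hkc g)
    exact ⟨⟨fun x y => commutative_of_cyclic_center_quotient f.rangeRestrict hker x y⟩⟩
end

section
/- If G is a finite group in which [x,y,y] = 1 for all x, y ∈ G (the 2-Engel condition), then G is nilpotent of class at most 3; moreover, if G has no element of order 3, then G has nilpotency class at most 2. -/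
open scoped commutatorElement

namespace TwoEngel
variable {G : Type*} [Group G]



private lemma ring_e {R : Type*} [Ring R] (a b : R) : (1-a)+(1-b)-(1-a)*(1-b) = 1-a*b := by
  noncomm_ring

private lemma ring_anticomm {R : Type*} [Ring R] (α β : R) (hα : α*α = 0) (hβ : β*β = 0)
    (hαβ : (α+β-α*β)*(α+β-α*β) = 0) : α*β + β*α = 0 := by
  have P : α*β + β*α - β*α*β - α*β*α + α*β*α*β = 0 := by
    have h3 : α*β + β*α - β*α*β - α*β*α + α*β*α*β
        = (α+β-α*β)*(α+β-α*β) - α*α - β*β + α*α*β + α*(β*β) := by noncomm_ring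
    rw [h3, hαβ, hα, hβ]; noncomm_ring
  have E1 : α*β*α - α*β*α*β = 0 := by
    have e : α*β*α - α*β*α*β
        = α*(α*β + β*α - β*α*β - α*β*α + α*β*α*β) - (α*α)*β + (α*α)*(β*α) - (α*α)*(β*α*β) := by
      noncomm_ring
    rw [e, P, hα]; noncomm_ring
  have E1' : α*β*α = α*β*α*β := by rwa [sub_eq_zero] at E1
  have E3 : α*β*α*β = 0 := by
    conv_lhs => rw [E1']
    have e2 : α*β*α*β*β = α*β*α*(β*β) := by noncomm_ring
    rw [e2, hβ]; noncomm_ring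
  have E4 : α*β*α = 0 := by rw [E1', E3]
  have E2 : β*α*β - α*β*α*β = 0 := by
    have e : β*α*β - α*β*α*β
        = (α*β + β*α - β*α*β - α*β*α + α*β*α*β)*β - α*(β*β) + β*α*(β*β) - α*β*α*(β*β) := by
      noncomm_ring
    rw [e, P, hβ]; noncomm_ring
  have E5 : β*α*β = 0 := by rw [sub_eq_zero] at E2; rw [E2, E3]
  have fin : α*β + β*α = (α*β + β*α - β*α*β - α*β*α + α*β*α*β) + β*α*β + α*β*α - α*β*α*β := by
    noncomm_ring
  rw [fin, P, E5, E4]; noncomm_ring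

private lemma ring_two {R : Type*} [Ring R] (α β γ δ : R) (hδ : δ = β + γ - β*γ)
    (h1 : α*β+β*α = 0) (h2 : α*γ+γ*α = 0) (h3 : α*δ+δ*α = 0) :
    α*(β*γ) + α*(β*γ) = 0 := by
  have hγα : γ*α = -(α*γ) := eq_neg_of_add_eq_zero_right h2
  have hβα : β*α = -(α*β) := eq_neg_of_add_eq_zero_right h1
  have key : β*γ*α = α*(β*γ) := by
    calc β*γ*α = β*(γ*α) := by rw [mul_assoc]
    _ = β*(-(α*γ)) := by rw [hγα]
    _ = -((β*α)*γ) := by noncomm_ring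
    _ = -((-(α*β))*γ) := by rw [hβα]
    _ = α*(β*γ) := by noncomm_ring
  have expand : α*(β*γ) + β*γ*α = (α*β+β*α) + (α*γ+γ*α) - (α*δ+δ*α) := by
    rw [hδ]; noncomm_ring
  rw [key, h1, h2, h3] at expand
  simpa using expand


variable {G : Type*} [Group G]

private lemma conj_commute {p q : G} (w : G) (hc : Commute p q) :
    Commute (w*p*w⁻¹) (w*q*w⁻¹) := by
  have : (w*p*w⁻¹) * (w*q*w⁻¹) = w*(p*q)*w⁻¹ := by group
  rw [Commute, SemiconjBy, this, hc.eq]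
  group

private lemma comm_inv_snd {p q : G} (hc : Commute ⁅p,q⁆ q) : ⁅p, q⁻¹⁆ = ⁅p,q⁆⁻¹ := by
  have e1 : ⁅p,q⁻¹⁆ = q⁻¹ * ⁅p,q⁆⁻¹ * q := by group
  rw [e1, mul_assoc, (hc.inv_left).eq]
  group

private lemma comm_inv_fst {p q : G} (hc : Commute p ⁅p,q⁆) : ⁅p⁻¹, q⁆ = ⁅p,q⁆⁻¹ := by
  have e1 : ⁅p⁻¹,q⁆ = p⁻¹ * ⁅p,q⁆⁻¹ * p := by group
  rw [e1, mul_assoc, (hc.symm.inv_left).eq]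
  group




private def sig (x g : G) : AddMonoid.End (Additive ↥(Subgroup.normalClosure ({x} : Set G))) :=
  AddMonoidHom.mk'
    (fun a => Additive.ofMul
      (⟨g * ((Additive.toMul a : ↥(Subgroup.normalClosure ({x} : Set G))) : G) * g⁻¹,
        Subgroup.normalClosure_normal.conj_mem _ (Additive.toMul a).2 g⟩ :
          ↥(Subgroup.normalClosure ({x} : Set G))))
    (by
      intro a b
      apply Subtype.ext
      show g * (((Additive.toMul a : ↥(Subgroup.normalClosure ({x} : Set G))) : G) *
          ((Additive.toMul b : ↥(Subgroup.normalClosure ({x} : Set G))) : G)) * g⁻¹ =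
        (g * ((Additive.toMul a : ↥(Subgroup.normalClosure ({x} : Set G))) : G) * g⁻¹) *
          (g * ((Additive.toMul b : ↥(Subgroup.normalClosure ({x} : Set G))) : G) * g⁻¹)
      group)

private lemma sig_mul (x g₁ g₂ : G) : sig x (g₁ * g₂) = sig x g₁ * sig x g₂ := by
  apply AddMonoidHom.ext
  intro a
  apply Subtype.ext
  show g₁ * g₂ * ((Additive.toMul a : ↥(Subgroup.normalClosure ({x} : Set G))) : G) * (g₁*g₂)⁻¹ =
    (g₁ * (g₂ * ((Additive.toMul a : ↥(Subgroup.normalClosure ({x} : Set G))) : G) * g₂⁻¹) * g₁⁻¹ : G)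
  group

private lemma sig_val (x g : G) (a : Additive ↥(Subgroup.normalClosure ({x} : Set G))) :
    ((Additive.toMul (sig x g a) : ↥(Subgroup.normalClosure ({x} : Set G))) : G)
      = g * ((Additive.toMul a : ↥(Subgroup.normalClosure ({x} : Set G))) : G) * g⁻¹ := rfl

variable (h : ∀ x y : G, ⁅⁅x, y⁆, y⁆ = 1)
include h

private lemma cr (a b : G) : Commute ⁅a,b⁆ b :=
  commutatorElement_eq_one_iff_commute.mp (h a b)

private lemma cl (a b : G) : Commute ⁅a,b⁆ a :=
  (commutatorElement_inv b a) ▸ (cr h b a).inv_left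

private lemma e3 (a b w : G) : ⁅w * ⁅a,b⁆ * w⁻¹, b⁆ = 1 := by
  have key : ⁅⁅w*a,b⁆,b⁆ = (w*⁅a,b⁆*w⁻¹) * ⁅⁅w,b⁆,b⁆ * (w*⁅a,b⁆*w⁻¹)⁻¹ *
      ⁅w*⁅a,b⁆*w⁻¹, b⁆ := by group
  have E := h (w*a) b
  rw [key, h w b] at E
  have fin : ⁅w*⁅a,b⁆*w⁻¹, b⁆ = ((w*⁅a,b⁆*w⁻¹) * 1 * (w*⁅a,b⁆*w⁻¹)⁻¹)⁻¹ *
      ((w*⁅a,b⁆*w⁻¹) * 1 * (w*⁅a,b⁆*w⁻¹)⁻¹ * ⁅w*⁅a,b⁆*w⁻¹, b⁆) := by group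
  rw [E] at fin
  rw [fin]; group

private lemma ccr (a b w : G) : Commute ⁅a,b⁆ (w*b*w⁻¹) := by
  have h1 : Commute (w⁻¹ * ⁅a,b⁆ * (w⁻¹)⁻¹) b :=
    commutatorElement_eq_one_iff_commute.mp (e3 h a b w⁻¹)
  have h2 := conj_commute w h1
  have e : w*(w⁻¹ * ⁅a,b⁆ * (w⁻¹)⁻¹)*w⁻¹ = ⁅a,b⁆ := by group
  rwa [e] at h2

private lemma ccl (a b w : G) : Commute ⁅a,b⁆ (w*a*w⁻¹) :=
  (commutatorElement_inv b a) ▸ (ccr h b a w).inv_left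

private lemma c1 (a b c : G) : Commute ⁅a,b⁆ ⁅⁅a,b⁆,c⁆ := by
  have d1 : Commute ⁅a,b⁆ (c*⁅a,b⁆*c⁻¹) := by
    have dec : c*⁅a,b⁆*c⁻¹ = (c*a*c⁻¹) * ((c*b)*a*(c*b)⁻¹)⁻¹ := by group
    rw [dec]
    exact (ccl h a b c).mul_right (ccl h a b (c*b)).inv_right
  have dec2 : ⁅⁅a,b⁆,c⁆ = ⁅a,b⁆ * (c*⁅a,b⁆*c⁻¹)⁻¹ := by group
  rw [dec2]
  exact (Commute.refl _).mul_right d1.inv_right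

private lemma id6 (a b c : G) : ⁅⁅a,b⁆,c⁆ = ⁅⁅b,a⁆,c⁆⁻¹ := by
  have : ⁅⁅b,a⁆,c⁆ = ⁅⁅a,b⁆⁻¹,c⁆ := by rw [commutatorElement_inv]
  rw [this, comm_inv_fst (c1 h a b c), inv_inv]


private lemma core (x : G) :
    (∀ g k : G, ⁅⁅x,k⁆,g⁆ * ⁅⁅x,g⁆,k⁆ = 1) ∧
    (∀ g k l : G, ⁅⁅⁅x,l⁆,k⁆,g⁆ * ⁅⁅⁅x,l⁆,k⁆,g⁆ = 1) := by
  -- the normal closure of x is abelian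
  have commx : ∀ a ∈ Subgroup.normalClosure ({x} : Set G), Commute x a := by
    intro a ha
    refine Subgroup.closure_induction ?_ ?_ ?_ ?_ ha
    · intro c hc
      obtain ⟨b, hb, hbc⟩ := Group.mem_conjugatesOfSet_iff.mp hc
      rw [Set.mem_singleton_iff] at hb
      rw [hb] at hbc
      obtain ⟨u, rfl⟩ := isConj_iff.mp hbc
      have e : u*x*u⁻¹ = ⁅u,x⁆ * x := by group
      rw [e]
      exact ((cr h u x).symm).mul_right (Commute.refl x)
    · exact Commute.one_right x
    · exact fun a b _ _ ca cb => ca.mul_right cb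
    · exact fun a _ ca => ca.inv_right
  have hab : ∀ a ∈ Subgroup.normalClosure ({x} : Set G),
      ∀ b ∈ Subgroup.normalClosure ({x} : Set G), Commute a b := by
    intro a ha b hb
    refine Subgroup.closure_induction ?_ ?_ ?_ ?_ hb
    · intro c hc
      obtain ⟨b', hb', hbc⟩ := Group.mem_conjugatesOfSet_iff.mp hc
      rw [Set.mem_singleton_iff] at hb'
      rw [hb'] at hbc
      obtain ⟨u, rfl⟩ := isConj_iff.mp hbc
      have h1 : Commute (u*(u⁻¹*a*u)*u⁻¹) (u*x*u⁻¹) :=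
        conj_commute u (commx (u⁻¹*a*u)
          (by simpa using Subgroup.normalClosure_normal.conj_mem a ha u⁻¹)).symm
      have e : u*(u⁻¹*a*u)*u⁻¹ = a := by group
      rwa [e] at h1
    · exact Commute.one_right a
    · exact fun p q _ _ cp cq => cp.mul_right cq
    · exact fun p _ cp => cp.inv_right
  letI : CommGroup ↥(Subgroup.normalClosure ({x} : Set G)) :=
    { mul_comm := fun a b => Subtype.ext ((hab a.1 a.2 b.1 b.2).eq) }
  -- pointwise value of the endomorphisms 1 - sig
  have eval : ∀ (g : G) (a : Additive ↥(Subgroup.normalClosure ({x} : Set G))),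
      ((Additive.toMul (((1 : AddMonoid.End (Additive ↥(Subgroup.normalClosure ({x} : Set G))))
          - sig x g) a) : ↥(Subgroup.normalClosure ({x} : Set G))) : G)
        = ⁅((Additive.toMul a : ↥(Subgroup.normalClosure ({x} : Set G))) : G), g⁆ := by
    intro g a
    rw [show ((1 : AddMonoid.End (Additive ↥(Subgroup.normalClosure ({x} : Set G)))) - sig x g) a = (1 : AddMonoid.End (Additive ↥(Subgroup.normalClosure ({x} : Set G)))) a - sig x g a from rfl, toMul_sub, SubgroupClass.coe_div, AddMonoid.End.one_apply,
      sig_val, commutatorElement_def, div_eq_mul_inv]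
    group
  have hx : x ∈ Subgroup.normalClosure ({x} : Set G) :=
    Subgroup.subset_normalClosure (Set.mem_singleton x)
  -- square zero
  have sq : ∀ g : G,
      ((1 : AddMonoid.End (Additive ↥(Subgroup.normalClosure ({x} : Set G)))) - sig x g)
        * (1 - sig x g) = 0 := by
    intro g
    apply AddMonoid.End.ext
    intro a
    apply Additive.toMul.injective
    apply Subtype.ext
    have e : (((1 : AddMonoid.End (Additive ↥(Subgroup.normalClosure ({x} : Set G))))
        - sig x g) * (1 - sig x g)) a = (1 - sig x g) ((1 - sig x g) a) := rfl
    rw [e, eval, eval]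
    simpa using h _ g
  have anticomm : ∀ g k : G,
      ((1 : AddMonoid.End (Additive ↥(Subgroup.normalClosure ({x} : Set G)))) - sig x g)
          * (1 - sig x k)
        + (1 - sig x k) * (1 - sig x g) = 0 := by
    intro g k
    refine ring_anticomm _ _ (sq g) (sq k) ?_
    rw [ring_e, ← sig_mul]
    exact sq (g*k)
  have two : ∀ g k l : G,
      ((1 : AddMonoid.End (Additive ↥(Subgroup.normalClosure ({x} : Set G)))) - sig x g)
          * (((1 - sig x k)) * ((1 - sig x l)))
        + (1 - sig x g) * (((1 - sig x k)) * ((1 - sig x l))) = 0 := by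
    intro g k l
    refine ring_two _ _ _ (1 - sig x (k*l)) ?_ (anticomm g k) (anticomm g l) (anticomm g (k*l))
    rw [ring_e, sig_mul]
  constructor
  · intro g k
    have H := DFunLike.congr_fun (anticomm g k) (Additive.ofMul (⟨x, hx⟩ :
      ↥(Subgroup.normalClosure ({x} : Set G))))
    rw [show ∀ (f f' : AddMonoid.End (Additive ↥(Subgroup.normalClosure ({x} : Set G)))) b, (f + f') b = f b + f' b from fun _ _ _ => rfl, AddMonoid.End.zero_apply] at H
    have H2 := congrArg (fun u =>
      ((Additive.toMul u : ↥(Subgroup.normalClosure ({x} : Set G))) : G)) H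
    simp only [toMul_add, Subgroup.coe_mul, toMul_zero, OneMemClass.coe_one] at H2
    have e1 : (((1 : AddMonoid.End (Additive ↥(Subgroup.normalClosure ({x} : Set G))))
        - sig x g) * (1 - sig x k)) (Additive.ofMul (⟨x, hx⟩ : _))
        = (1 - sig x g) ((1 - sig x k) (Additive.ofMul (⟨x, hx⟩ : _))) := rfl
    have e2 : (((1 : AddMonoid.End (Additive ↥(Subgroup.normalClosure ({x} : Set G))))
        - sig x k) * (1 - sig x g)) (Additive.ofMul (⟨x, hx⟩ : _))
        = (1 - sig x k) ((1 - sig x g) (Additive.ofMul (⟨x, hx⟩ : _))) := rfl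
    rw [e1, e2, eval, eval, eval, eval] at H2
    simpa using H2
  · intro g k l
    have H := DFunLike.congr_fun (two g k l) (Additive.ofMul (⟨x, hx⟩ :
      ↥(Subgroup.normalClosure ({x} : Set G))))
    rw [show ∀ (f f' : AddMonoid.End (Additive ↥(Subgroup.normalClosure ({x} : Set G)))) b, (f + f') b = f b + f' b from fun _ _ _ => rfl, AddMonoid.End.zero_apply] at H
    have H2 := congrArg (fun u =>
      ((Additive.toMul u : ↥(Subgroup.normalClosure ({x} : Set G))) : G)) H
    simp only [toMul_add, Subgroup.coe_mul, toMul_zero, OneMemClass.coe_one] at H2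
    have e1 : (((1 : AddMonoid.End (Additive ↥(Subgroup.normalClosure ({x} : Set G))))
        - sig x g) * ((1 - sig x k) * (1 - sig x l))) (Additive.ofMul (⟨x, hx⟩ : _))
        = (1 - sig x g) ((1 - sig x k) ((1 - sig x l) (Additive.ofMul (⟨x, hx⟩ : _)))) := rfl
    simp only [e1, eval] at H2
    simpa using H2

private lemma m1 (x g k : G) : ⁅⁅x,g⁆,k⁆ = ⁅⁅x,k⁆,g⁆⁻¹ :=
  (inv_eq_of_mul_eq_one_right ((core h x).1 g k)).symm

private lemma sq4 (x g k l : G) : ⁅⁅⁅x,l⁆,k⁆,g⁆ * ⁅⁅⁅x,l⁆,k⁆,g⁆ = 1 := (core h x).2 g k l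

private lemma m2z (x y z : G) : Commute ⁅⁅x,y⁆,z⁆ z := by
  have bigiden : ⁅⁅x,y*z⁆,y*z⁆ =
      ⁅x,y⁆ * (y * (⁅⁅x,z⁆,z⁆ * (z*⁅⁅x,z⁆,y⁆*z⁻¹)) * y⁻¹) * ⁅x,y⁆⁻¹ *
      (⁅⁅x,y⁆,y⁆ * (y*⁅⁅x,y⁆,z⁆*y⁻¹)) := by group
  have E := h x (y*z)
  rw [bigiden, h x z, h x y, m1 h x z y] at E
  have iden2 : (y⁻¹*⁅x,y⁆*y*z) * ⁅⁅x,y⁆,z⁆⁻¹ * (y⁻¹*⁅x,y⁆*y*z)⁻¹ * ⁅⁅x,y⁆,z⁆ =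
      y⁻¹ * (⁅x,y⁆ * (y * (1 * (z*⁅⁅x,y⁆,z⁆⁻¹*z⁻¹)) * y⁻¹) * ⁅x,y⁆⁻¹ *
        (1 * (y*⁅⁅x,y⁆,z⁆*y⁻¹))) * y := by group
  rw [E] at iden2
  have hcom : Commute (y⁻¹*⁅x,y⁆*y*z) ⁅⁅x,y⁆,z⁆⁻¹ := by
    apply commutatorElement_eq_one_iff_commute.mp
    have e3 : ⁅y⁻¹*⁅x,y⁆*y*z, ⁅⁅x,y⁆,z⁆⁻¹⁆ =
        (y⁻¹*⁅x,y⁆*y*z) * ⁅⁅x,y⁆,z⁆⁻¹ * (y⁻¹*⁅x,y⁆*y*z)⁻¹ * ⁅⁅x,y⁆,z⁆ := by group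
    rw [e3, iden2]; group
  have hcu : Commute ⁅⁅x,y⁆,z⁆ (y⁻¹*⁅x,y⁆*y*z) := by
    have := hcom.inv_right
    rw [inv_inv] at this
    exact this.symm
  have hc1 : Commute ⁅⁅x,y⁆,z⁆ (y⁻¹*⁅x,y⁆*y) := by
    have := ccl h ⁅x,y⁆ z y⁻¹
    rwa [inv_inv] at this
  have main : Commute ⁅⁅x,y⁆,z⁆ ((y⁻¹*⁅x,y⁆*y)⁻¹ * (y⁻¹*⁅x,y⁆*y*z)) :=
    (hc1.inv_right).mul_right hcu
  have e4 : (y⁻¹*⁅x,y⁆*y)⁻¹ * (y⁻¹*⁅x,y⁆*y*z) = z := by group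
  rwa [e4] at main

private lemma m2y (x y z : G) : Commute ⁅⁅x,y⁆,z⁆ y := by
  rw [m1 h x y z]
  exact (m2z h x z y).inv_left

private lemma cyc (x y z : G) : ⁅⁅y,z⁆,x⁆ = ⁅⁅x,y⁆,z⁆ := by
  rw [m1 h y z x, id6 h y x z, inv_inv]

private lemma m2x (x y z : G) : Commute ⁅⁅x,y⁆,z⁆ x := by
  rw [← cyc h x y z]
  exact m2z h y z x

omit h in
private lemma col {T r : G} (hc : Commute T r) : r⁻¹*T*r = T := by
  rw [mul_assoc, hc.eq]
  group

private lemma cube (a b c : G) : ⁅⁅a,b⁆,c⁆^3 = 1 := by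
  have simp1 : ∀ p q r : G, ⁅⁅p,q⁻¹⁆,r⁻¹⁆ = ⁅⁅p,q⁆,r⁆ := by
    intro p q r
    rw [comm_inv_snd (cr h p q), comm_inv_fst (c1 h p q r⁻¹), comm_inv_snd (m2z h p q r),
      inv_inv]
  have hw : (a⁻¹ * ⁅⁅a,b⁻¹⁆,c⁻¹⁆ * a) * (c⁻¹ * ⁅⁅c,a⁻¹⁆,b⁻¹⁆ * c) *
      (b⁻¹ * ⁅⁅b,c⁻¹⁆,a⁻¹⁆ * b) = 1 := by group
  rw [simp1, simp1, simp1, col (m2x h a b c), col (m2x h c a b), col (m2x h b c a)] at hw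
  rw [cyc h b c a, cyc h a b c] at hw
  calc ⁅⁅a,b⁆,c⁆^3 = ⁅⁅a,b⁆,c⁆ * ⁅⁅a,b⁆,c⁆ * ⁅⁅a,b⁆,c⁆ := by
        rw [pow_succ, pow_succ, pow_one]
  _ = 1 := hw

private lemma k1 (a b c w : G) : ⁅⁅⁅a,b⁆,c⁆,w⁆ = 1 := by
  have sq := sq4 h a w c b
  have hc : Commute ⁅⁅a,b⁆,c⁆ (w*⁅⁅a,b⁆,c⁆*w⁻¹) := by
    have dec : w*⁅⁅a,b⁆,c⁆*w⁻¹ = (w*⁅a,b⁆*w⁻¹) * ((w*c)*⁅a,b⁆*(w*c)⁻¹)⁻¹ := by group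
    rw [dec]
    exact (ccl h ⁅a,b⁆ c w).mul_right (ccl h ⁅a,b⁆ c (w*c)).inv_right
  have u3 : ⁅⁅⁅a,b⁆,c⁆,w⁆^3 = 1 := by
    have dec3 : ⁅⁅⁅a,b⁆,c⁆,w⁆ = ⁅⁅a,b⁆,c⁆ * (w*⁅⁅a,b⁆,c⁆*w⁻¹)⁻¹ := by group
    have e : (w*⁅⁅a,b⁆,c⁆*w⁻¹)^3 = w*⁅⁅a,b⁆,c⁆^3*w⁻¹ := by
      simp only [pow_succ, pow_one]
      group
    rw [dec3, Commute.mul_pow hc.inv_right, inv_pow, e, cube h a b c]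
    group
  have fin : ⁅⁅⁅a,b⁆,c⁆,w⁆ = ⁅⁅⁅a,b⁆,c⁆,w⁆^3 * (⁅⁅⁅a,b⁆,c⁆,w⁆ * ⁅⁅⁅a,b⁆,c⁆,w⁆)⁻¹ := by
    simp only [pow_succ, pow_one]
    group
  rw [fin, u3, sq]
  group

end TwoEngel

open TwoEngel in
/-- A finite 2-Engel group is nilpotent of class at most 3; if moreover it has
no element of order 3, its class is at most 2. -/
theorem two_engel_class_le_three (G : Type*) [Group G] [Finite G]
    (h : ∀ x y : G, ⁅⁅x, y⁆, y⁆ = 1) :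
    (⊤ : Subgroup G).lowerCentralSeries 3 = ⊥ ∧
      ((∀ g : G, orderOf g ≠ 3) → (⊤ : Subgroup G).lowerCentralSeries 2 = ⊥) := by
  have e1 : (⊤ : Subgroup G).lowerCentralSeries 1 = ⁅(⊤ : Subgroup G), ⊤⁆ := rfl
  have e2 : (⊤ : Subgroup G).lowerCentralSeries 2 = ⁅(⊤ : Subgroup G).lowerCentralSeries 1, ⊤⁆ := rfl
  have e3 : (⊤ : Subgroup G).lowerCentralSeries 3 = ⁅(⊤ : Subgroup G).lowerCentralSeries 2, ⊤⁆ := rfl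
  constructor
  · -- class at most 3
    let S : Subgroup G :=
      { carrier := {g : G | ∀ z : G, ⁅g, z⁆ ∈ Subgroup.center G}
        one_mem' := by
          intro z
          have e : ⁅(1:G), z⁆ = 1 := by group
          rw [e]
          exact (Subgroup.center G).one_mem
        mul_mem' := by
          intro p q hp hq
          intro z
          have e : ⁅p*q, z⁆ = (p * ⁅q,z⁆ * p⁻¹) * ⁅p,z⁆ := by group
          have e2' : p * ⁅q,z⁆ * p⁻¹ = ⁅q,z⁆ := by
            rw [mul_assoc, ← Subgroup.mem_center_iff.mp (hq z) p⁻¹]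
            group
          rw [e, e2']
          exact mul_mem (hq z) (hp z)
        inv_mem' := by
          intro p hp
          intro z
          have e : ⁅p⁻¹, z⁆ = p⁻¹ * ⁅p,z⁆⁻¹ * p := by group
          have e2' : p⁻¹ * ⁅p,z⁆⁻¹ * p = ⁅p,z⁆⁻¹ := by
            rw [mul_assoc, ← Subgroup.mem_center_iff.mp (inv_mem (hp z)) p]
            group
          rw [e, e2']
          exact inv_mem (hp z) }
    have hS : (⊤ : Subgroup G).lowerCentralSeries 1 ≤ S := by
      rw [e1]
      refine Subgroup.commutator_le.mpr ?_
      intro p _ q _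
      intro z
      rw [Subgroup.mem_center_iff]
      intro w
      exact ((commutatorElement_eq_one_iff_commute.mp (k1 h p q z w)).symm).eq
    have hcen : (⊤ : Subgroup G).lowerCentralSeries 2 ≤ Subgroup.center G := by
      rw [e2]
      refine Subgroup.commutator_le.mpr ?_
      intro g hg t _
      exact hS hg t
    rw [e3, eq_bot_iff]
    refine Subgroup.commutator_le.mpr ?_
    intro g hg t _
    rw [Subgroup.mem_bot]
    exact commutatorElement_eq_one_iff_commute.mpr
      ((Subgroup.mem_center_iff.mp (hcen hg) t).symm)
  · intro h3
    have triv : ∀ p q z : G, ⁅⁅p,q⁆,z⁆ = 1 := by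
      intro p q z
      have hdvd : orderOf ⁅⁅p,q⁆,z⁆ ∣ 3 := orderOf_dvd_of_pow_eq_one (cube h p q z)
      rcases (Nat.prime_three.eq_one_or_self_of_dvd _ hdvd) with h1 | h1
      · exact orderOf_eq_one_iff.mp h1
      · exact absurd h1 (h3 _)
    have hcen1 : (⊤ : Subgroup G).lowerCentralSeries 1 ≤ Subgroup.center G := by
      rw [e1]
      refine Subgroup.commutator_le.mpr ?_
      intro p _ q _
      rw [Subgroup.mem_center_iff]
      intro w
      exact ((commutatorElement_eq_one_iff_commute.mp (triv p q w)).symm).eq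
    rw [e2, eq_bot_iff]
    refine Subgroup.commutator_le.mpr ?_
    intro g hg t _
    rw [Subgroup.mem_bot]
    exact commutatorElement_eq_one_iff_commute.mpr
      ((Subgroup.mem_center_iff.mp (hcen1 hg) t).symm)
end

section
/- Let G be a finite p-group. Then G is metacyclic if and only if G/(Φ(G')G₃) is metacyclic, where G₃ = [G',G] is the third term of the lower central series and Φ(G') is the Frattini subgroup of the derived subgroup. -/
open Subgroup Function Pointwise

open scoped commutatorElement

universe u

section MC

variable {G : Type*} [Group G]

/-- metacyclic predicate -/
def MC (G : Type*) [Group G] : Prop :=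
  ∃ (C : Subgroup G) (_ : C.Normal), IsCyclic C ∧ IsCyclic (G ⧸ C)

lemma MC.of_surjective {H : Type*} [Group H] (f : G →* H) (hf : Surjective f)
    (h : MC G) : MC H := by
  obtain ⟨C, hCn, hCc, hQc⟩ := h
  haveI : (C.map f).Normal := hCn.map f hf
  refine ⟨C.map f, inferInstance, ?_, ?_⟩
  · exact isCyclic_of_surjective _ (f.subgroupMap_surjective C)
  · let φ : G ⧸ C →* H ⧸ C.map f :=
      QuotientGroup.lift C ((QuotientGroup.mk' (C.map f)).comp f)
        (fun x hx => by simpa [QuotientGroup.eq_one_iff] using Subgroup.mem_map_of_mem f hx)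
    have hφ : Surjective φ := by
      intro y
      obtain ⟨h', rfl⟩ := QuotientGroup.mk'_surjective (C.map f) y
      obtain ⟨g, rfl⟩ := hf h'
      exact ⟨QuotientGroup.mk g, rfl⟩
    exact isCyclic_of_surjective φ hφ

lemma MC.of_equiv {H : Type*} [Group H] (e : G ≃* H) (h : MC G) : MC H :=
  h.of_surjective e.toMonoidHom e.surjective

end MC

section Frattini

variable {p : ℕ} [Fact p.Prime] {H : Type*} [Group H] [Finite H]

lemma normal_of_commutator_le' {K : Subgroup H} (h : commutator H ≤ K) : K.Normal := by
  constructor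
  intro n hn g
  have h1 : ⁅g, n⁆ ∈ K := h (commutator_def H ▸ commutator_mem_commutator (mem_top g) (mem_top n))
  have h2 : g * n * g⁻¹ = ⁅g, n⁆ * n := by group
  rw [h2]; exact K.mul_mem h1 hn

lemma pgroup_coatom_bound (hH : IsPGroup p H) {M : Subgroup H} (hM : IsCoatom M) :
    Subgroup.closure (Set.range fun x : H => x ^ p) ⊔ commutator H ≤ M := by
  haveI : Group.IsNilpotent H := hH.isNilpotent
  haveI hMn : M.Normal := by
    rw [← normalizer_eq_top_iff]
    exact hM.2 _ (normalizerCondition_of_isNilpotent M hM.1.lt_top)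
  have hdich : ∀ U : Subgroup (H ⧸ M), U = ⊥ ∨ U = ⊤ := by
    intro U
    have hMle : M ≤ U.comap (QuotientGroup.mk' M) := by
      intro m hm
      have : QuotientGroup.mk' M m = 1 := (QuotientGroup.eq_one_iff m).2 hm
      simp only [Subgroup.mem_comap, QuotientGroup.mk'_apply] at *
      rw [show ((m:H⧸M) : H ⧸ M) = 1 from this]
      exact U.one_mem
    rcases hMle.eq_or_lt with h | h
    · left
      rw [← Subgroup.map_comap_eq_self_of_surjective (QuotientGroup.mk'_surjective M) U, ← h]
      rw [eq_bot_iff]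
      rintro y ⟨x, hx, rfl⟩
      simpa [Subgroup.mem_bot, QuotientGroup.eq_one_iff] using hx
    · right
      have := hM.2 _ h
      rw [← Subgroup.map_comap_eq_self_of_surjective (QuotientGroup.mk'_surjective M) U, this]
      exact Subgroup.map_top_of_surjective _ (QuotientGroup.mk'_surjective M)
  have pQ : IsPGroup p (H ⧸ M) := hH.to_quotient M
  have key : ∀ x : H ⧸ M, x ^ p = 1 := by
    intro x
    by_cases hx : x = 1
    · simp [hx]
    · have hne : Subgroup.zpowers (x ^ p) ≠ ⊤ := by
        intro htop
        have hmem : x ∈ Subgroup.zpowers (x ^ p) := htop ▸ Subgroup.mem_top x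
        obtain ⟨k, hk⟩ := hmem
        have hord : (orderOf x : ℤ) ∣ (p : ℤ) * k - 1 := by
          rw [orderOf_dvd_iff_zpow_eq_one]
          have : (x ^ p) ^ k = x := hk
          rw [zpow_sub, zpow_one, zpow_mul, zpow_natCast, this]
          simp
        obtain ⟨j, hj⟩ := (IsPGroup.iff_orderOf.1 pQ) x
        have hj0 : j ≠ 0 := by
          rintro rfl
          simp only [pow_zero, orderOf_eq_one_iff] at hj
          exact hx hj
        have hpd : (p : ℤ) ∣ (p : ℤ) * k - 1 := by
          refine dvd_trans ?_ hord
          rw [hj]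
          exact_mod_cast dvd_pow_self (p : ℤ) hj0
        have : (p : ℤ) ∣ 1 := (dvd_sub_right (Dvd.intro k rfl)).mp hpd
        have := Int.le_of_dvd one_pos this
        have := (Fact.out : p.Prime).one_lt
        omega
      have := (hdich (Subgroup.zpowers (x ^ p))).resolve_right hne
      exact Subgroup.zpowers_eq_bot.1 this
  have keyc : ∀ a b : H ⧸ M, Commute a b := by
    intro a b
    by_cases ha : a = 1
    · simp [ha, Commute.one_left]
    · have : Subgroup.zpowers a = ⊤ := by
        refine (hdich _).resolve_left ?_
        simpa [Subgroup.zpowers_eq_bot] using ha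
      have hb : b ∈ Subgroup.zpowers a := this ▸ Subgroup.mem_top b
      obtain ⟨k, rfl⟩ := hb
      exact (Commute.refl a).zpow_right k
  refine sup_le ?_ ?_
  · rw [Subgroup.closure_le]
    rintro _ ⟨x, rfl⟩
    have : (QuotientGroup.mk' M) (x ^ p) = 1 := by
      rw [map_pow]; exact key _
    exact (QuotientGroup.eq_one_iff _).1 this
  · rw [_root_.commutator_def, Subgroup.commutator_le]
    intro a _ b _
    have : (QuotientGroup.mk' M) ⁅a, b⁆ = 1 := by
      rw [map_commutatorElement]
      exact commutatorElement_eq_one_iff_commute.2 (keyc _ _)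
    exact (QuotientGroup.eq_one_iff _).1 this

lemma pgroup_frattini_le (hH : IsPGroup p H) :
    frattini H ≤ Subgroup.closure (Set.range fun x : H => x ^ p) ⊔ commutator H := by
  set Ω : Subgroup H := Subgroup.closure (Set.range fun x : H => x ^ p) ⊔ commutator H with hΩ
  by_contra hle
  obtain ⟨x, hxf, hxΩ⟩ := SetLike.not_le_iff_exists.1 hle
  obtain ⟨W, ⟨hΩW, hxW⟩, hWmax⟩ :=
    Set.Finite.exists_maximalFor id {U : Subgroup H | Ω ≤ U ∧ x ∉ U} (Set.toFinite _)
      ⟨Ω, le_rfl, hxΩ⟩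
  simp only [id_eq] at hWmax
  haveI hWn : W.Normal := normal_of_commutator_le' (le_trans (le_sup_right.trans hΩ.ge) hΩW)
  have hWcoatom : IsCoatom W := by
    constructor
    · intro htop; exact hxW (htop ▸ Subgroup.mem_top x)
    · intro T hWT
      have hxT : x ∈ T := by
        by_contra hxT
        exact hWT.ne (le_antisymm hWT.le (hWmax ⟨hΩW.trans hWT.le, hxT⟩ hWT.le))
      rw [eq_top_iff']
      intro v
      by_cases hv : v ∈ W
      · exact hWT.le hv
      · have h1 : x ∈ W ⊔ Subgroup.zpowers v := by
          by_contra hxWv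
          have := hWmax ⟨hΩW.trans le_sup_left, hxWv⟩ le_sup_left
          exact hv (this (Subgroup.mem_sup_right (Subgroup.mem_zpowers v)))
        have h2 : (x : H) ∈ (W : Set H) * (Subgroup.zpowers v : Set H) := by
          rw [← Subgroup.normal_mul]; exact h1
        obtain ⟨w, hw, u, hu, rfl⟩ := h2
        obtain ⟨k, rfl⟩ := hu
        have hpk : ¬ (p : ℤ) ∣ k := by
          rintro ⟨m, rfl⟩
          apply hxW
          refine W.mul_mem hw ?_
          show v ^ ((p : ℤ) * m) ∈ W
          have : v ^ ((p : ℤ) * m) = (v ^ m) ^ (p : ℕ) := by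
            rw [← zpow_natCast (v ^ m) p, ← zpow_mul, mul_comm]
          rw [this]
          exact hΩW (le_sup_left (α := Subgroup H) (Subgroup.subset_closure ⟨v ^ m, rfl⟩))
        -- v ∈ T
        obtain ⟨e, he⟩ := (IsPGroup.iff_orderOf.1 hH) v
        have hco : IsCoprime ((p : ℤ) ^ e) k := by
          refine IsCoprime.pow_left ?_
          exact (Prime.coprime_iff_not_dvd (Nat.prime_iff_prime_int.1 Fact.out)).2 hpk
        obtain ⟨a, b, hab⟩ := hco
        have hvT : v ^ k ∈ T := by
          have : v ^ k = w⁻¹ * (w * v ^ k) := by group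
          rw [this]
          exact T.mul_mem (T.inv_mem (hWT.le hw)) hxT
        have hvpe : v ^ ((p : ℤ) ^ e) = 1 := by
          have := pow_orderOf_eq_one v
          rw [he] at this
          rw [← zpow_natCast v (p ^ e)] at this
          simpa using this
        have : v = (v ^ ((p:ℤ) ^ e)) ^ a * (v ^ k) ^ b := by
          rw [← zpow_mul, ← zpow_mul, ← zpow_add,
            show (p:ℤ) ^ e * a + k * b = a * (p:ℤ) ^ e + b * k from by ring, hab, zpow_one]
        rw [this, hvpe, one_zpow, one_mul]
        exact T.zpow_mem hvT b
  exact hxW (frattini_le_coatom hWcoatom hxf)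

lemma pgroup_frattini_eq (hH : IsPGroup p H) :
    frattini H = Subgroup.closure (Set.range fun x : H => x ^ p) ⊔ commutator H := by
  refine le_antisymm (pgroup_frattini_le hH) ?_
  refine le_iInf₂ ?_
  intro M hM
  exact pgroup_coatom_bound hH hM

end Frattini

section NNdef

variable {p : ℕ} [Fact p.Prime]

lemma pgroup_frattini_map {H L : Type*} [Group H] [Finite H] [Group L]
    (hH : IsPGroup p H) (f : H →* L) (hf : Surjective f) :
    (frattini H).map f = frattini L := by
  haveI : Finite L := Finite.of_surjective f hf
  have hL : IsPGroup p L := hH.of_surjective f hf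
  rw [pgroup_frattini_eq hH, pgroup_frattini_eq hL, Subgroup.map_sup]
  congr 1
  · rw [MonoidHom.map_closure]
    congr 1
    ext y
    constructor
    · rintro ⟨_, ⟨x, rfl⟩, rfl⟩; exact ⟨f x, (map_pow f x p).symm⟩
    · rintro ⟨l, rfl⟩; obtain ⟨x, rfl⟩ := hf l; exact ⟨x ^ p, ⟨x, rfl⟩, map_pow f x p⟩
  · rw [_root_.commutator_def, _root_.commutator_def, Subgroup.map_commutator,
      Subgroup.map_top_of_surjective f hf]

lemma lcs_map_surjective' {H L : Type*} [Group H] [Group L] (f : H →* L)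
    (hf : Surjective f) (n : ℕ) :
    ((⊤ : Subgroup H).lowerCentralSeries n).map f = (⊤ : Subgroup L).lowerCentralSeries n := by
  induction n with
  | zero => simpa using Subgroup.map_top_of_surjective f hf
  | succ n ih =>
      show ((⁅(⊤ : Subgroup H).lowerCentralSeries n, ⊤⁆ : Subgroup H).map f) = ⁅(⊤ : Subgroup L).lowerCentralSeries n, ⊤⁆
      rw [Subgroup.map_commutator, ih, Subgroup.map_top_of_surjective f hf]

lemma map_subtype_normal {G : Type*} [Group G] (H : Subgroup G) [H.Normal]
    (K : Subgroup H) [K.Characteristic] : (K.map H.subtype).Normal := by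
  constructor
  rintro _ ⟨k, hk, rfl⟩ g
  have hK : MulAut.conjNormal g k ∈ K := by
    have hmap := Subgroup.characteristic_iff_map_eq.1 ‹K.Characteristic› (MulAut.conjNormal g)
    rw [← hmap]
    exact Subgroup.mem_map_of_mem _ hk
  refine ⟨_, hK, ?_⟩
  simp [MulAut.conjNormal_apply]

/-- The subgroup `Φ(G') G₃` from Blackburn's criterion. -/
def NN (G : Type*) [Group G] : Subgroup G :=
  (frattini (commutator G)).map (commutator G).subtype ⊔ (⊤ : Subgroup G).lowerCentralSeries 2

instance NN_normal (G : Type*) [Group G] : (NN G).Normal := by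
  haveI : ((frattini (commutator G)).map (commutator G).subtype).Normal :=
    map_subtype_normal _ _
  exact Subgroup.sup_normal _ _

lemma NN_le_commutator (G : Type*) [Group G] : NN G ≤ commutator G := by
  refine sup_le (Subgroup.map_subtype_le _) ?_
  have := (⊤ : Subgroup G).lowerCentralSeries_antitone (show 1 ≤ 2 by norm_num)
  exact this

lemma NN_map {G L : Type*} [Group G] [Finite G] [Group L]
    (hG : IsPGroup p G) (f : G →* L) (hf : Surjective f) :
    (NN G).map f = NN L := by
  haveI : Finite L := Finite.of_surjective f hf
  have hcomm : (commutator G).map f = commutator L := by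
    rw [_root_.commutator_def, _root_.commutator_def, Subgroup.map_commutator,
      Subgroup.map_top_of_surjective f hf]
  rw [NN, NN, Subgroup.map_sup, lcs_map_surjective' f hf 2]
  congr 1
  rw [Subgroup.map_map]
  have hcomp : f.comp (commutator G).subtype
      = ((commutator G).map f).subtype.comp (f.subgroupMap (commutator G)) := by
    ext x; rfl
  rw [hcomp, ← Subgroup.map_map,
    pgroup_frattini_map (hG.to_subgroup (commutator G)) (f.subgroupMap _)
      (f.subgroupMap_surjective _), hcomm]

end NNdef

section Helpers

variable {G : Type*} [Group G]

lemma isCyclic_zpowers (a : G) : IsCyclic (Subgroup.zpowers a) := by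
  refine ⟨⟨⟨a, Subgroup.mem_zpowers a⟩, ?_⟩⟩
  rintro ⟨x, hx⟩
  obtain ⟨k, hk⟩ := hx
  exact ⟨k, Subtype.ext (by simpa using hk)⟩

lemma cyclic_of_le_zpowers {C : Subgroup G} {a : G} (h : C ≤ Subgroup.zpowers a) :
    IsCyclic C := by
  haveI := _root_.isCyclic_zpowers a
  exact isCyclic_of_surjective _ (Subgroup.subgroupOfEquivOfLe h).surjective

end Helpers


section Crux

variable {p : ℕ} [Fact p.Prime]

lemma blackburn_crux {G : Type*} [Group G] [Finite G] (hG : IsPGroup p G)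
    {z : G} (hz1 : z ≠ 1) (hzp : z ^ p = 1) (hzc : z ∈ Subgroup.center G)
    [(Subgroup.zpowers z).Normal]
    (hzN : z ∈ NN G) (hmc : MC (G ⧸ Subgroup.zpowers z)) : MC G := by
  set M : Subgroup G := Subgroup.zpowers z with hMdef
  obtain ⟨D, hDn, hDc, hDq⟩ := hmc
  set C : Subgroup G := D.comap (QuotientGroup.mk' M) with hCdef
  haveI hCn : C.Normal := hDn.comap _
  -- G ⧸ C ≅ (G ⧸ M) ⧸ D is cyclic
  let φ : G →* (G ⧸ M) ⧸ D := (QuotientGroup.mk' D).comp (QuotientGroup.mk' M)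
  have hφs : Surjective φ :=
    (QuotientGroup.mk'_surjective D).comp (QuotientGroup.mk'_surjective M)
  have hφker : φ.ker = C := by
    ext x
    simp only [MonoidHom.mem_ker, MonoidHom.comp_apply, hCdef, Subgroup.mem_comap]
    exact QuotientGroup.eq_one_iff _
  have e : (G ⧸ C) ≃* (G ⧸ M) ⧸ D :=
    (QuotientGroup.quotientMulEquivOfEq hφker.symm).trans
      (QuotientGroup.quotientKerEquivOfSurjective φ hφs)
  haveI hQC : IsCyclic (G ⧸ C) := isCyclic_of_surjective e.symm e.symm.surjective
  by_cases hCcyc : IsCyclic C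
  · exact ⟨C, hCn, hCcyc, hQC⟩
  exfalso
  -- a generator c of C modulo M
  obtain ⟨δ, hδ⟩ := hDc.exists_generator
  obtain ⟨c, hc⟩ := QuotientGroup.mk'_surjective M (δ : G ⧸ M)
  have hcC : c ∈ C := by
    rw [hCdef, Subgroup.mem_comap, hc]
    exact δ.2
  have hzC : z ∈ C := by
    rw [hCdef, Subgroup.mem_comap]
    have : (QuotientGroup.mk' M) z = 1 := (QuotientGroup.eq_one_iff z).2 (Subgroup.mem_zpowers z)
    rw [this]; exact D.one_mem
  -- commutation facts
  have hzcomm : ∀ y : G, Commute z y := fun y => (Subgroup.mem_center_iff.1 hzc y).symm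
  have hcz : Commute c z := (hzcomm c).symm
  -- all elements of C have the form c^i z^j
  have hCform : ∀ x ∈ C, ∃ i j : ℤ, x = c ^ i * z ^ j := by
    intro x hx
    rw [hCdef, Subgroup.mem_comap] at hx
    obtain ⟨i, hi⟩ := hδ ⟨_, hx⟩
    have hmk : (QuotientGroup.mk' M) (c ^ i) = (QuotientGroup.mk' M) x := by
      rw [map_zpow, hc]
      exact congrArg Subtype.val hi
    obtain ⟨j, hj⟩ := QuotientGroup.eq.1 hmk
    have hj' : z ^ j = (c ^ i)⁻¹ * x := hj
    exact ⟨i, j, by rw [hj']; group⟩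
  -- C is not contained in the cyclic subgroup generated by any element
  have hnotle : ∀ a : G, ¬ C ≤ Subgroup.zpowers a := fun a h => hCcyc (cyclic_of_le_zpowers h)
  have hznc : z ∉ Subgroup.zpowers c := by
    intro hzmem
    refine hnotle c ?_
    intro x hx
    obtain ⟨i, j, rfl⟩ := hCform x hx
    exact (Subgroup.zpowers c).mul_mem (Subgroup.zpow_mem _ (Subgroup.mem_zpowers c) i)
      (Subgroup.zpow_mem _ hzmem j)
  have hcne : c ≠ 1 := by
    rintro rfl
    refine hnotle z ?_
    intro x hx
    obtain ⟨i, j, rfl⟩ := hCform x hx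
    simpa using Subgroup.zpow_mem _ (Subgroup.mem_zpowers z) j
  -- z^B vanishes iff p ∣ B, and separation
  have hzdvd : ∀ B : ℤ, (p : ℤ) ∣ B → z ^ B = 1 := by
    rintro _ ⟨m, rfl⟩
    rw [zpow_mul, zpow_natCast, hzp, one_zpow]
  have hsep : ∀ A B : ℤ, c ^ A = z ^ B → c ^ A = 1 ∧ z ^ B = 1 := by
    intro A B h
    by_cases hB : (p : ℤ) ∣ B
    · have := hzdvd B hB
      exact ⟨h.trans this, this⟩
    · exfalso
      have hco : IsCoprime (B : ℤ) (p : ℤ) := by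
        rw [isCoprime_comm]
        exact (Prime.coprime_iff_not_dvd (Nat.prime_iff_prime_int.1 Fact.out)).2 hB
      obtain ⟨a, b, hab⟩ := hco
      apply hznc
      have hz1' : z = (z ^ B) ^ a * (z ^ (p : ℤ)) ^ b := by
        rw [← zpow_mul, ← zpow_mul, ← zpow_add,
          show B * a + (p : ℤ) * b = a * B + b * (p:ℤ) from by ring, hab, zpow_one]
      have hzpz : z ^ (p : ℤ) = 1 := by rw [zpow_natCast, hzp]
      rw [hzpz, one_zpow, mul_one] at hz1'
      rw [hz1', ← h, ← zpow_mul]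
      exact Subgroup.zpow_mem _ (Subgroup.mem_zpowers c) _
  -- generator g of G modulo C
  obtain ⟨γ, hγ⟩ := hQC.exists_generator
  obtain ⟨g, hg⟩ := QuotientGroup.mk'_surjective C γ
  have hGform : ∀ y : G, ∃ k i j : ℤ, y = g ^ k * c ^ i * z ^ j := by
    intro y
    obtain ⟨k, hk⟩ := hγ ((QuotientGroup.mk' C) y)
    have hmk : (QuotientGroup.mk' C) (g ^ k) = (QuotientGroup.mk' C) y := by
      rw [map_zpow, hg]; exact hk
    have hyC : (g ^ k)⁻¹ * y ∈ C := (QuotientGroup.eq).1 hmk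
    obtain ⟨i, j, hij⟩ := hCform _ hyC
    exact ⟨k, i, j, by rw [mul_assoc, ← hij]; group⟩
  -- conjugation data
  obtain ⟨x₁, hx₁C, s, t, hst⟩ : ∃ x, x ∈ C ∧ ∃ s t : ℤ, g⁻¹ * c * g = c ^ s * z ^ t := by
    have hmem : g⁻¹ * c * g ∈ C := by
      have := hCn.conj_mem c hcC g⁻¹
      simpa using this
    obtain ⟨s, t, h⟩ := hCform _ hmem
    exact ⟨_, hmem, s, t, h⟩
  obtain ⟨x₂, hx₂C, s', t', hst'⟩ : ∃ x, x ∈ C ∧ ∃ s' t' : ℤ, g * c * g⁻¹ = c ^ s' * z ^ t' := by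
    have hmem : g * c * g⁻¹ ∈ C := hCn.conj_mem c hcC g
    obtain ⟨s', t', h⟩ := hCform _ hmem
    exact ⟨_, hmem, s', t', h⟩
  -- conjugation of powers
  have hconj : ∀ A B : ℤ, g⁻¹ * (c ^ A * z ^ B) * g = c ^ (s * A) * z ^ (t * A + B) := by
    intro A B
    have h1 : g⁻¹ * (c ^ A * z ^ B) * g = (g⁻¹ * c ^ A * g) * z ^ B := by
      have hzB : Commute (z ^ B) g := (hzcomm g).zpow_left B
      calc g⁻¹ * (c ^ A * z ^ B) * g = g⁻¹ * c ^ A * (z ^ B * g) := by group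
        _ = g⁻¹ * c ^ A * (g * z ^ B) := by rw [hzB.eq]
        _ = (g⁻¹ * c ^ A * g) * z ^ B := by group
    have h2 : g⁻¹ * c ^ A * g = (g⁻¹ * c * g) ^ A := by
      have h := conj_zpow (i := A) (a := g⁻¹) (b := c)
      rw [inv_inv] at h
      exact h.symm
    rw [h1, h2, hst, (hcz.zpow_zpow s t).mul_zpow, ← zpow_mul, ← zpow_mul,
      mul_comm s A, mul_comm t A, mul_assoc, ← zpow_add]
  -- product form
  have hform : ∀ A B A' B' : ℤ, (c ^ A * z ^ B) * (c ^ A' * z ^ B') = c ^ (A + A') * z ^ (B + B') := by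
    intro A B A' B'
    have hcommzb : z ^ B * c ^ A' = c ^ A' * z ^ B := ((hzcomm (c ^ A')).zpow_left B).eq
    calc c ^ A * z ^ B * (c ^ A' * z ^ B') = c ^ A * (z ^ B * c ^ A') * z ^ B' := by group
      _ = c ^ A * (c ^ A' * z ^ B) * z ^ B' := by rw [hcommzb]
      _ = (c ^ A * c ^ A') * (z ^ B * z ^ B') := by group
      _ = c ^ (A + A') * z ^ (B + B') := by rw [← zpow_add, ← zpow_add]
  have hinv : ∀ A B : ℤ, (c ^ A * z ^ B)⁻¹ = c ^ (-A) * z ^ (-B) := by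
    intro A B
    refine inv_eq_of_mul_eq_one_right ?_
    rw [hform]
    simp
  -- nilpotency gives p ∣ s - 1
  haveI hnil : Group.IsNilpotent G := hG.isNilpotent
  obtain ⟨K, hK⟩ := Subgroup.nilpotent_iff_lowerCentralSeries.1 hnil
  have hLCS : ∀ k : ℕ, ∃ B : ℤ, c ^ ((s - 1) ^ k) * z ^ B ∈ (⊤ : Subgroup G).lowerCentralSeries k := by
    intro k
    induction k with
    | zero => exact ⟨0, by simp⟩
    | succ k ih =>
        obtain ⟨B, hB⟩ := ih
        refine ⟨t * (s - 1) ^ k, ?_⟩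
        set A : ℤ := (s - 1) ^ k with hA
        have hmem : ⁅(c ^ A * z ^ B)⁻¹, g⁻¹⁆ ∈ (⊤ : Subgroup G).lowerCentralSeries (k + 1) :=
          Subgroup.commutator_mem_commutator (Subgroup.inv_mem _ hB) (Subgroup.mem_top g⁻¹)
        have hcalc : ⁅(c ^ A * z ^ B)⁻¹, g⁻¹⁆ = c ^ (-A + s * A) * z ^ (-B + (t * A + B)) := by
          have h1 : ⁅(c ^ A * z ^ B)⁻¹, g⁻¹⁆
              = (c ^ A * z ^ B)⁻¹ * (g⁻¹ * (c ^ A * z ^ B) * g) := by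
            rw [commutatorElement_def]; group
          rw [h1, hconj A B, hinv A B, hform (-A) (-B) (s * A) (t * A + B)]
        rw [hcalc, show -A + s * A = (s - 1) ^ (k + 1) from by rw [hA]; ring,
          show -B + (t * A + B) = t * (s - 1) ^ k from by rw [hA]; ring] at hmem
        exact hmem
  have horderc : (p : ℤ) ∣ (orderOf c : ℤ) := by
    obtain ⟨e, he⟩ := IsPGroup.iff_orderOf.1 hG c
    rcases Nat.eq_zero_or_pos e with rfl | hepos
    · rw [pow_zero] at he; exact absurd (orderOf_eq_one_iff.1 he) hcne
    · rw [he]; exact_mod_cast dvd_pow_self (p : ℤ) hepos.ne'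
  have hs1 : (p : ℤ) ∣ s - 1 := by
    obtain ⟨B, hB⟩ := hLCS K
    rw [hK, Subgroup.mem_bot] at hB
    have h1 : c ^ ((s - 1) ^ K) = z ^ (-B) := by
      rw [zpow_neg]
      exact eq_inv_iff_mul_eq_one.2 hB
    have h2 := (hsep _ _ h1).1
    by_contra hnd
    have hdvd : (orderOf c : ℤ) ∣ (s - 1) ^ K := orderOf_dvd_iff_zpow_eq_one.2 h2
    exact hnd ((Nat.prime_iff_prime_int.1 Fact.out).dvd_of_dvd_pow (horderc.trans hdvd))
  -- relation between s and s'
  have hrel : c ^ (1 - s * s') = z ^ (t * s' + t') := by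
    have h0 : c = c ^ (s * s') * z ^ (t * s' + t') := by
      have h0' : c = g⁻¹ * (c ^ s' * z ^ t') * g := by rw [← hst']; group
      rwa [hconj s' t'] at h0'
    have h1 : c ^ (1 - s * s') = c * (c ^ (s * s'))⁻¹ := by
      rw [sub_eq_add_neg, zpow_add, zpow_one, zpow_neg]
    rw [h1, mul_inv_eq_iff_eq_mul, ← (hcz.zpow_zpow (s * s') (t * s' + t')).eq]
    exact h0
  have hss'1 : (p : ℤ) ∣ 1 - s * s' :=
    horderc.trans (orderOf_dvd_iff_zpow_eq_one.2 (hsep _ _ hrel).1)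
  have hs'1 : (p : ℤ) ∣ s' - 1 := by
    have h : s' - 1 = -(s' * (s - 1) + (1 - s * s')) := by ring
    rw [h]
    exact ((hs1.mul_left s').add hss'1).neg_right
  -- the element d generating the commutator subgroup
  set d : G := c ^ (s - 1) * z ^ t with hd
  have hdcomm : d = ⁅c⁻¹, g⁻¹⁆ := by
    have h1 : ⁅c⁻¹, g⁻¹⁆ = c⁻¹ * (g⁻¹ * c * g) := by
      rw [commutatorElement_def]; group
    rw [h1, hst, hd, show c⁻¹ = c ^ (-1 : ℤ) from by simp, ← mul_assoc, ← zpow_add,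
      show (-1 : ℤ) + s = s - 1 from by ring]
  have hdK : d ∈ commutator G := by
    rw [hdcomm, _root_.commutator_def]
    exact Subgroup.commutator_mem_commutator (Subgroup.mem_top _) (Subgroup.mem_top _)
  have hdm : ∀ m : ℤ, (p : ℤ) ∣ m → d ^ m ∈ Subgroup.zpowers c := by
    intro m hm
    rw [hd, (hcz.zpow_zpow (s - 1) t).mul_zpow, ← zpow_mul, ← zpow_mul,
      hzdvd (t * m) (hm.mul_left t), mul_one]
    exact Subgroup.zpow_mem _ (Subgroup.mem_zpowers c) _
  -- conjugation action on d
  have hdg : g⁻¹ * d * g = d ^ s := by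
    have h1 : g⁻¹ * d * g = c ^ (s * (s - 1)) * z ^ (t * (s - 1) + t) := by
      rw [hd]; exact hconj (s - 1) t
    have h2 : d ^ s = c ^ ((s - 1) * s) * z ^ (t * s) := by
      rw [hd, (hcz.zpow_zpow (s - 1) t).mul_zpow, ← zpow_mul, ← zpow_mul]
    rw [h1, h2, show s * (s - 1) = (s - 1) * s from by ring,
      show t * (s - 1) + t = t * s from by ring]
  have hdg' : g * d * g⁻¹ = d ^ s' := by
    have hzgt : g * z ^ t * g⁻¹ = z ^ t := by
      have h := ((hzcomm g).zpow_left t).eq    -- z^t * g = g * z^t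
      rw [← h]; group
    have h1 : g * d * g⁻¹ = (g * c * g⁻¹) ^ (s - 1) * z ^ t := by
      rw [hd]
      calc g * (c ^ (s - 1) * z ^ t) * g⁻¹
          = (g * c ^ (s - 1) * g⁻¹) * (g * z ^ t * g⁻¹) := by group
        _ = (g * c * g⁻¹) ^ (s - 1) * z ^ t := by rw [conj_zpow, hzgt]
    rw [h1, hst', (hcz.zpow_zpow s' t').mul_zpow, ← zpow_mul, ← zpow_mul, mul_assoc, ← zpow_add]
    have h2 : d ^ s' = c ^ ((s - 1) * s') * z ^ (t * s') := by
      rw [hd, (hcz.zpow_zpow (s - 1) t).mul_zpow, ← zpow_mul, ← zpow_mul]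
    rw [h2, show s' * (s - 1) = (s - 1) * s' from by ring]
    congr 1
    rw [show t' * (s - 1) + t = t * s' + (t' * (s - 1) + t * (1 - s')) from by ring, zpow_add,
      hzdvd (t' * (s - 1) + t * (1 - s'))
        (dvd_add (hs1.mul_left t') (by
          rw [show t * ((1 : ℤ) - s') = -(t * (s' - 1)) from by ring]
          exact (hs'1.mul_left t).neg_right)), mul_one]
  -- conjugation of d by arbitrary elements
  have hyd : ∀ y : G, ∃ u : ℤ, y * d * y⁻¹ = d ^ u ∧ (p : ℤ) ∣ u - 1 := by
    have hgk : ∀ k : ℤ, ∃ u : ℤ, g ^ k * d * g ^ (-k) = d ^ u ∧ (p : ℤ) ∣ u - 1 := by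
      intro k
      induction k using Int.induction_on with
      | zero => exact ⟨1, by simp⟩
      | succ k ih =>
          obtain ⟨u, hu, hdu⟩ := ih
          refine ⟨u * s', ?_, ?_⟩
          · have h1 : g ^ ((k : ℤ) + 1) * d * g ^ (-((k : ℤ) + 1))
                = g ^ (k : ℤ) * (g * d * g⁻¹) * g ^ (-(k : ℤ)) := by group
            have h2 : g ^ (k : ℤ) * d ^ s' * g ^ (-(k : ℤ))
                = (g ^ (k : ℤ) * d * g ^ (-(k : ℤ))) ^ s' := by
              have h := conj_zpow (i := s') (a := g ^ (k : ℤ)) (b := d)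
              rw [← zpow_neg] at h
              exact h.symm
            rw [h1, hdg', h2, hu, ← zpow_mul]
          · rw [show u * s' - 1 = (u - 1) * s' + (s' - 1) from by ring]
            exact dvd_add (hdu.mul_right s') hs'1
      | pred k ih =>
          obtain ⟨u, hu, hdu⟩ := ih
          refine ⟨u * s, ?_, ?_⟩
          · have h1 : g ^ (-(k : ℤ) - 1) * d * g ^ (-(-(k : ℤ) - 1))
                = g ^ (-(k : ℤ)) * (g⁻¹ * d * g) * g ^ (-(-(k : ℤ))) := by group
            have h2 : g ^ (-(k : ℤ)) * d ^ s * g ^ (-(-(k : ℤ)))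
                = (g ^ (-(k : ℤ)) * d * g ^ (-(-(k : ℤ)))) ^ s := by
              have h := conj_zpow (i := s) (a := g ^ (-(k : ℤ))) (b := d)
              rw [← zpow_neg] at h
              exact h.symm
            rw [h1, hdg, h2, hu, ← zpow_mul]
          · rw [show u * s - 1 = (u - 1) * s + (s - 1) from by ring]
            exact dvd_add (hdu.mul_right s) hs1
    intro y
    obtain ⟨k, i, j, rfl⟩ := hGform y
    obtain ⟨u, hu, hdu⟩ := hgk k
    refine ⟨u, ?_, hdu⟩
    have hcd : Commute c d := by
      rw [hd]; exact Commute.mul_right ((Commute.refl c).zpow_right (s - 1)) (hcz.zpow_right t)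
    have h1 : z ^ j * d * (z ^ j)⁻¹ = d := by
      rw [((hzcomm d).zpow_left j).eq]; group
    have h2 : c ^ i * d * (c ^ i)⁻¹ = d := by
      rw [(hcd.zpow_left i).eq]; group
    calc g ^ k * c ^ i * z ^ j * d * (g ^ k * c ^ i * z ^ j)⁻¹
        = g ^ k * (c ^ i * (z ^ j * d * (z ^ j)⁻¹) * (c ^ i)⁻¹) * (g ^ k)⁻¹ := by group
      _ = g ^ k * d * g ^ (-k) := by rw [h1, h2, zpow_neg]
      _ = d ^ u := hu
  haveI hKnormal : (Subgroup.zpowers d).Normal := by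
    constructor
    intro x hx y
    obtain ⟨n, hn⟩ := hx
    have hn' : d ^ n = x := hn
    obtain ⟨u, hu, -⟩ := hyd y
    have h1 : y * x * y⁻¹ = (y * d * y⁻¹) ^ n := by rw [← hn']; exact (conj_zpow).symm
    rw [h1, hu, ← zpow_mul]
    exact Subgroup.zpow_mem _ (Subgroup.mem_zpowers d) _
  have hGK : commutator G = Subgroup.zpowers d := by
    refine le_antisymm ?_ ((Subgroup.zpowers_le).2 hdK)
    rw [_root_.commutator_def, Subgroup.commutator_le]
    intro x _ y _
    set π := QuotientGroup.mk' (Subgroup.zpowers d) with hπ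
    have goal_iff : ⁅x, y⁆ ∈ Subgroup.zpowers d ↔ π ⁅x, y⁆ = 1 := (QuotientGroup.eq_one_iff _).symm
    rw [goal_iff, map_commutatorElement]
    refine commutatorElement_eq_one_iff_commute.2 ?_
    have hcgQ : Commute (π c) (π g) := by
      have hmem : ⁅c⁻¹, g⁻¹⁆ ∈ Subgroup.zpowers d := hdcomm ▸ Subgroup.mem_zpowers d
      have h1 : π ⁅c⁻¹, g⁻¹⁆ = 1 := (QuotientGroup.eq_one_iff _).2 hmem
      rw [map_commutatorElement, map_inv, map_inv] at h1
      have h2 := commutatorElement_eq_one_iff_commute.1 h1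
      simpa [inv_inv] using h2.inv_inv
    have hzQ : ∀ q : G, Commute (π z) (π q) := fun q => (hzcomm q).map π
    obtain ⟨k, i, j, rfl⟩ := hGform x
    obtain ⟨k', i', j', rfl⟩ := hGform y
    rw [map_mul, map_mul, map_mul, map_mul, map_zpow, map_zpow, map_zpow, map_zpow,
      map_zpow, map_zpow]
    have hAB : Commute (π g) (π c) := hcgQ.symm
    have hAZ : Commute (π g) (π z) := (hzQ g).symm
    have hBZ : Commute (π c) (π z) := (hzQ c).symm
    have h1 : Commute (π g ^ k * π c ^ i * π z ^ j) (π g ^ k') :=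
      Commute.mul_left
        (Commute.mul_left ((Commute.refl (π g)).zpow_zpow k k') (hAB.symm.zpow_zpow i k'))
        (hAZ.symm.zpow_zpow j k')
    have h2 : Commute (π g ^ k * π c ^ i * π z ^ j) (π c ^ i') :=
      Commute.mul_left
        (Commute.mul_left (hAB.zpow_zpow k i') ((Commute.refl (π c)).zpow_zpow i i'))
        (hBZ.symm.zpow_zpow j i')
    have h3 : Commute (π g ^ k * π c ^ i * π z ^ j) (π z ^ j') :=
      Commute.mul_left
        (Commute.mul_left (hAZ.zpow_zpow k j') (hBZ.zpow_zpow i j'))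
        ((Commute.refl (π z)).zpow_zpow j j')
    exact (h1.mul_right h2).mul_right h3
  -- bound the two pieces of NN G
  have hLCS2 : (⊤ : Subgroup G).lowerCentralSeries 2 ≤ Subgroup.zpowers c := by
    have h0 : (⊤ : Subgroup G).lowerCentralSeries 2 = ⁅(⊤ : Subgroup G).lowerCentralSeries 1, ⊤⁆ := rfl
    rw [h0, Subgroup.top_lowerCentralSeries_one, hGK, Subgroup.commutator_le]
    intro x hx y _
    obtain ⟨n, hn⟩ := hx
    have hn' : d ^ n = x := hn
    obtain ⟨u, hu, hdu⟩ := hyd y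
    have h1 : ⁅x, y⁆ = x * (y * x * y⁻¹)⁻¹ := by rw [commutatorElement_def]; group
    have h2 : y * x * y⁻¹ = d ^ (u * n) := by
      rw [← hn', show y * d ^ n * y⁻¹ = (y * d * y⁻¹) ^ n from (conj_zpow).symm, hu, ← zpow_mul]
    rw [h1, h2, ← hn', ← zpow_neg, ← zpow_add]
    refine hdm _ ?_
    rw [show n + -(u * n) = -((u - 1) * n) from by ring]
    exact (hdu.mul_right n).neg_right
  have hPhi : (frattini (commutator G)).map (commutator G).subtype ≤ Subgroup.zpowers c := by
    rw [pgroup_frattini_eq (hG.to_subgroup (commutator G)), Subgroup.map_sup]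
    refine sup_le ?_ ?_
    · rw [MonoidHom.map_closure, Subgroup.closure_le]
      rintro _ ⟨_, ⟨x, rfl⟩, rfl⟩
      have hx : (x : G) ∈ Subgroup.zpowers d := hGK ▸ x.2
      obtain ⟨n, hn⟩ := hx
      have hn' : d ^ n = (x : G) := hn
      have hval : ((commutator G).subtype) (x ^ p) = d ^ (n * (p : ℤ)) := by
        rw [zpow_mul, hn']
        push_cast
        rw [zpow_natCast]
        rfl
      show ((commutator G).subtype) (x ^ p) ∈ Subgroup.zpowers c
      rw [hval]
      exact hdm _ (dvd_mul_left _ _)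
    · have hcomm2 : ∀ a b : (commutator G), a * b = b * a := by
        intro a b
        have ha : (a : G) ∈ Subgroup.zpowers d := hGK ▸ a.2
        have hb : (b : G) ∈ Subgroup.zpowers d := hGK ▸ b.2
        obtain ⟨n, hn⟩ := ha
        obtain ⟨m, hm⟩ := hb
        have hn' : d ^ n = (a : G) := hn
        have hm' : d ^ m = (b : G) := hm
        have hcab : (a : G) * b = (b : G) * a := by
          rw [← hn', ← hm']; exact ((Commute.refl d).zpow_zpow n m).eq
        exact Subtype.ext (by push_cast; exact hcab)
      have hbot : commutator (commutator G) = ⊥ := by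
        rw [eq_bot_iff]
        show ⁅(⊤ : Subgroup (commutator G)), ⊤⁆ ≤ ⊥
        rw [Subgroup.commutator_le]
        intro a _ b _
        rw [Subgroup.mem_bot, commutatorElement_def, hcomm2 a b]
        group
      rw [hbot, Subgroup.map_bot]
      exact bot_le
  exact hznc ((sup_le hPhi hLCS2 : NN G ≤ Subgroup.zpowers c) hzN)



end Crux

section Main

variable {p : ℕ} [Fact p.Prime]

lemma central_meets (G : Type*) [Group G] [Finite G] {p : ℕ} [Fact p.Prime]
    (hG : IsPGroup p G) (N : Subgroup G) [N.Normal] (hbot : N ≠ ⊥) :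
    ∃ w : G, w ∈ N ∧ w ∈ Subgroup.center G ∧ w ≠ 1 := by
  letI : MulAction G N := MulAction.compHom _ (MulAut.conjNormal (H := N))
  have hfix1 : (1 : N) ∈ MulAction.fixedPoints G N := by
    intro y
    show MulAut.conjNormal y (1 : N) = 1
    simp
  have hpN : p ∣ Nat.card N := by
    haveI : Nontrivial N := (Subgroup.nontrivial_iff_ne_bot N).2 hbot
    obtain ⟨n, hn⟩ := IsPGroup.iff_card.1 (hG.to_subgroup N)
    rcases Nat.eq_zero_or_pos n with rfl | hpos
    · exfalso; rw [pow_zero] at hn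
      exact (Finite.one_lt_card (α := N)).ne' hn
    · rw [hn]; exact dvd_pow_self p hpos.ne'
  obtain ⟨b, hb, hbne⟩ := hG.exists_fixed_point_of_prime_dvd_card_of_fixed_point (α := ↥N) hpN hfix1
  refine ⟨(b : G), b.2, ?_, ?_⟩
  · rw [Subgroup.mem_center_iff]
    intro y
    have := hb y
    have h1 : MulAut.conjNormal y b = b := this
    have h2 : y * (b : G) * y⁻¹ = b := by
      rw [← MulAut.conjNormal_apply, h1]
    calc y * (b : G) = (y * b * y⁻¹) * y := by group
      _ = (b : G) * y := by rw [h2]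
  · intro h
    exact hbne (by ext; simp [h])

lemma blackburn_hard {p : ℕ} [Fact p.Prime] : ∀ (n : ℕ) (G : Type u) [Group G] [Finite G],
    Nat.card G ≤ n → IsPGroup p G → MC (G ⧸ NN G) → MC G := by
  intro n
  induction n with
  | zero =>
      intro G _ _ hcard _ _
      have := Nat.card_pos (α := G)
      omega
  | succ n ih =>
      intro G _ _ hcard hG hmc
      by_cases hbot : NN G = ⊥
      · exact hmc.of_equiv
          ((QuotientGroup.quotientMulEquivOfEq hbot).trans QuotientGroup.quotientBot)
      · obtain ⟨w, hwN, hwc, hwne⟩ := central_meets G hG (NN G) hbot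
        -- an element of order p
        obtain ⟨j, hj⟩ := IsPGroup.iff_orderOf.1 hG w
        have hjpos : 0 < j := by
          rcases Nat.eq_zero_or_pos j with rfl | h
          · exfalso; rw [pow_zero, orderOf_eq_one_iff] at hj; exact hwne hj
          · exact h
        set z : G := w ^ (p ^ (j - 1)) with hz
        have hzp : z ^ p = 1 := by
          rw [hz, ← pow_mul, ← pow_succ, Nat.sub_add_cancel hjpos, ← hj, pow_orderOf_eq_one]
        have hz1 : z ≠ 1 := by
          intro h
          have := orderOf_dvd_of_pow_eq_one (n := p ^ (j - 1)) (by rw [← hz, h])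
          rw [hj] at this
          have hlt : p ^ (j - 1) < p ^ j :=
            Nat.pow_lt_pow_right (Fact.out : p.Prime).one_lt (by omega)
          have := Nat.le_of_dvd (Nat.pow_pos (Fact.out : p.Prime).pos) this
          omega
        have hzc : z ∈ Subgroup.center G := Subgroup.pow_mem _ hwc _
        have hzN : z ∈ NN G := Subgroup.pow_mem _ hwN _
        haveI hMnorm : (Subgroup.zpowers z).Normal := by
          constructor
          intro x hx y
          obtain ⟨k, hk⟩ := hx
          have hk' : z ^ k = x := hk
          have hc0 : Commute z y := (Subgroup.mem_center_iff.1 hzc y).symm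
          have hcom : Commute (z ^ k) y := hc0.zpow_left k
          rw [← hk']
          have : y * z ^ k * y⁻¹ = z ^ k := by rw [← hcom.eq]; group
          rw [this]
          exact Subgroup.zpow_mem _ (Subgroup.mem_zpowers z) _
        -- the quotient is metacyclic by induction
        have hMle : Subgroup.zpowers z ≤ NN G := (Subgroup.zpowers_le).2 hzN
        have hcard' : Nat.card (G ⧸ Subgroup.zpowers z) ≤ n := by
          have h1 : Nat.card G
              = Nat.card (G ⧸ Subgroup.zpowers z) * Nat.card (Subgroup.zpowers z) :=
            Subgroup.card_eq_card_quotient_mul_card_subgroup _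
          have h2 : 1 < Nat.card (Subgroup.zpowers z) := by
            haveI : Nontrivial (Subgroup.zpowers z) :=
              (Subgroup.nontrivial_iff_ne_bot _).2 (by
                rw [Ne, Subgroup.zpowers_eq_bot]; exact hz1)
            exact Finite.one_lt_card
          have h3 := Nat.card_pos (α := G ⧸ Subgroup.zpowers z)
          nlinarith
        have hqmc : MC ((G ⧸ Subgroup.zpowers z) ⧸ NN (G ⧸ Subgroup.zpowers z)) := by
          have e1 : ((G ⧸ Subgroup.zpowers z) ⧸ (NN G).map (QuotientGroup.mk' (Subgroup.zpowers z)))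
              ≃* G ⧸ NN G :=
            QuotientGroup.quotientQuotientEquivQuotient (Subgroup.zpowers z) (NN G) hMle
          have e2 : ((G ⧸ Subgroup.zpowers z) ⧸ (NN G).map (QuotientGroup.mk' (Subgroup.zpowers z)))
              ≃* ((G ⧸ Subgroup.zpowers z) ⧸ NN (G ⧸ Subgroup.zpowers z)) :=
            QuotientGroup.quotientMulEquivOfEq
              (NN_map hG (QuotientGroup.mk' (Subgroup.zpowers z))
                (QuotientGroup.mk'_surjective _))
          exact (hmc.of_equiv e1.symm).of_equiv e2
        have hqmc' : MC (G ⧸ Subgroup.zpowers z) :=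
          ih (G ⧸ Subgroup.zpowers z) hcard' (hG.to_quotient _) hqmc
        exact blackburn_crux hG hz1 hzp hzc hzN hqmc'


end Main


/-- Blackburn's criterion: a finite p-group G is metacyclic iff G/(Φ(G')G₃)
is metacyclic. -/
theorem metacyclic_iff_quotient_metacyclic {p : ℕ} (hp : p.Prime)
    (G : Type*) [Group G] [Finite G] (hG : IsPGroup p G)
    (N : Subgroup G)
    (hN : N = (frattini (commutator G)).map (commutator G).subtype ⊔
      (⊤ : Subgroup G).lowerCentralSeries 2)
    [N.Normal] :
    (∃ (C : Subgroup G) (_ : C.Normal), IsCyclic C ∧ IsCyclic (G ⧸ C)) ↔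
      (∃ (C : Subgroup (G ⧸ N)) (_ : C.Normal), IsCyclic C ∧ IsCyclic ((G ⧸ N) ⧸ C)) := by
  haveI : Fact p.Prime := ⟨hp⟩
  subst hN
  constructor
  · intro h
    exact MC.of_surjective (QuotientGroup.mk' _) (QuotientGroup.mk'_surjective _) h
  · intro h
    exact blackburn_hard (Nat.card G) G le_rfl hG h
end

section
/- Let G be a finite metahamiltonian p-group with elementary abelian derived subgroup. If the nilpotency class of G is 3, then G is generated by two elements and p is odd. -/
open scoped commutatorElement

namespace MetaHamAux

variable {G : Type*} [Group G]

lemma comm_mul_left' (a b c : G) : ⁅a*b, c⁆ = a * ⁅b,c⁆ * a⁻¹ * ⁅a,c⁆ := by group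

lemma comm_mul_right' (a b c : G) : ⁅a, b*c⁆ = ⁅a,b⁆ * (b * ⁅a,c⁆ * b⁻¹) := by group

lemma hall_witt (x y z : G) :
    (y⁻¹ * (⁅x⁻¹, y⁆ ⁻¹ * z⁻¹ * ⁅x⁻¹, y⁆ * z) * y) *
    (z⁻¹ * (⁅y⁻¹, z⁆ ⁻¹ * x⁻¹ * ⁅y⁻¹, z⁆ * x) * z) *
    (x⁻¹ * (⁅z⁻¹, x⁆ ⁻¹ * y⁻¹ * ⁅z⁻¹, x⁆ * y) * x) = 1 := by group

lemma conj_eq_of_central {w : G} (hw : ∀ g : G, Commute w g) (u : G) : u * w * u⁻¹ = w := by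
  rw [← (hw u).eq, mul_assoc, mul_inv_cancel, mul_one]

lemma comm_drop_l {w : G} (hw : ∀ g : G, Commute w g) (x y : G) : ⁅w * x, y⁆ = ⁅x, y⁆ := by
  calc ⁅w * x, y⁆ = w * (x * y * x⁻¹) * w⁻¹ * y⁻¹ := by group
    _ = (x * y * x⁻¹) * w * w⁻¹ * y⁻¹ := by rw [(hw (x*y*x⁻¹)).eq]
    _ = ⁅x, y⁆ := by group

lemma comm_drop_r {w : G} (hw : ∀ g : G, Commute w g) (x y : G) : ⁅x * w, y⁆ = ⁅x, y⁆ := by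
  rw [((hw x).symm).eq, comm_drop_l hw]

lemma comm_drop_l2 {w : G} (hw : ∀ g : G, Commute w g) (x y : G) : ⁅y, w * x⁆ = ⁅y, x⁆ := by
  rw [← inv_inj, commutatorElement_inv, commutatorElement_inv, comm_drop_l hw]

lemma comm_drop_r2 {w : G} (hw : ∀ g : G, Commute w g) (x y : G) : ⁅y, x * w⁆ = ⁅y, x⁆ := by
  rw [← inv_inj, commutatorElement_inv, commutatorElement_inv, comm_drop_r hw]

/-- The integer `n*(n-1)/2`. -/
def Eh (n : ℤ) : ℤ := n * (n - 1) / 2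

lemma Eh_spec (n : ℤ) : 2 * Eh n = n * (n - 1) := by
  have h : (2:ℤ) ∣ n * (n - 1) := by
    rcases Int.even_or_odd n with h | h
    · exact Dvd.dvd.mul_right h.two_dvd _
    · have he : Even (n - 1) := by rcases h with ⟨k, hk⟩; exact ⟨k, by omega⟩
      exact Dvd.dvd.mul_left he.two_dvd _
  rw [Eh, Int.mul_ediv_cancel' h]

lemma Eh_succ (n : ℤ) : Eh (n + 1) = Eh n + n := by
  apply mul_left_cancel₀ (by norm_num : (2:ℤ) ≠ 0)
  rw [mul_add, Eh_spec, Eh_spec]; ring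

lemma Eh_pred (n : ℤ) : Eh (n - 1) = Eh n - (n - 1) := by
  apply mul_left_cancel₀ (by norm_num : (2:ℤ) ≠ 0)
  rw [mul_sub, Eh_spec, Eh_spec]; ring

lemma Eh_zero : Eh 0 = 0 := by have := Eh_spec 0; omega

lemma cent2_swap1 {u v : G} (hc : ∀ h : G, Commute ⁅u, v⁆ h) (i : ℤ) :
    v * u ^ i = u ^ i * v * ⁅u, v⁆ ^ (-i) := by
  set m := ⁅u, v⁆ with hm
  have hcz : ∀ (k : ℤ) (g : G), m ^ k * g = g * m ^ k := fun k g => ((hc g).zpow_left k).eq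
  have h1 : v * u * v⁻¹ = m⁻¹ * u := by rw [hm]; group
  have h2 : v * u ^ i * v⁻¹ = (m⁻¹ * u) ^ i := by rw [← h1, conj_zpow]
  have h3 : (m⁻¹ * u) ^ i = m ^ (-i) * u ^ i := by
    rw [Commute.mul_zpow ((hc u).inv_left) i, inv_zpow, zpow_neg]
  calc v * u ^ i = (v * u ^ i * v⁻¹) * v := by group
    _ = m ^ (-i) * (u ^ i * v) := by rw [h2, h3]; group
    _ = (u ^ i * v) * m ^ (-i) := by rw [hcz]
    _ = u ^ i * v * m ^ (-i) := by group

lemma cent2_comm_zpow {u v : G} (hc : ∀ h : G, Commute ⁅u, v⁆ h) (i : ℤ) :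
    ⁅v, u ^ i⁆ = ⁅u, v⁆ ^ (-i) := by
  set m := ⁅u, v⁆ with hm
  have hcz : ∀ (k : ℤ) (g : G), m ^ k * g = g * m ^ k := fun k g => ((hc g).zpow_left k).eq
  calc ⁅v, u ^ i⁆ = (v * u ^ i) * v⁻¹ * (u ^ i)⁻¹ := by group
    _ = (u ^ i * v * m ^ (-i)) * v⁻¹ * (u ^ i)⁻¹ := by rw [cent2_swap1 hc i]
    _ = u ^ i * v * (m ^ (-i) * v⁻¹) * (u ^ i)⁻¹ := by group
    _ = u ^ i * v * (v⁻¹ * m ^ (-i)) * (u ^ i)⁻¹ := by rw [hcz]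
    _ = u ^ i * (m ^ (-i) * (u ^ i)⁻¹) := by group
    _ = u ^ i * ((u ^ i)⁻¹ * m ^ (-i)) := by rw [hcz]
    _ = m ^ (-i) := by group

lemma cent2_swap {u v : G} (hc : ∀ h : G, Commute ⁅u, v⁆ h) (j i : ℤ) :
    v ^ j * u ^ i = u ^ i * v ^ j * ⁅u, v⁆ ^ (-(i * j)) := by
  set m := ⁅u, v⁆ with hm
  have hc2 : ∀ h : G, Commute ⁅v, u ^ i⁆ h := by
    intro h; rw [cent2_comm_zpow hc i]; exact (hc h).zpow_left (-i)
  have key := cent2_swap1 hc2 j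
  rw [cent2_comm_zpow hc i, ← zpow_mul] at key
  symm
  calc u ^ i * v ^ j * m ^ (-(i * j))
      = (v ^ j * u ^ i * m ^ (-i * -j)) * m ^ (-(i * j)) := by rw [key]
    _ = v ^ j * u ^ i * (m ^ (-i * -j) * m ^ (-(i * j))) := by group
    _ = v ^ j * u ^ i * m ^ (-i * -j + -(i * j)) := by rw [← zpow_add]
    _ = v ^ j * u ^ i := by
        rw [show -i * -j + -(i * j) = 0 by ring, zpow_zero, mul_one]

/-- Decomposition of a 2-generated subgroup whose commutator is central. -/
lemma cent2 {u v : G} (hc : ∀ h : G, Commute ⁅u, v⁆ h) :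
    ∀ z ∈ Subgroup.closure {u, v}, ∃ i j k : ℤ, z = u ^ i * v ^ j * ⁅u, v⁆ ^ k := by
  intro z hz
  set m := ⁅u, v⁆ with hm
  have hcz : ∀ (k : ℤ) (g : G), m ^ k * g = g * m ^ k := fun k g => ((hc g).zpow_left k).eq
  induction hz using Subgroup.closure_induction with
  | mem x hx =>
      rcases hx with rfl | rfl
      · exact ⟨1, 0, 0, by simp⟩
      · exact ⟨0, 1, 0, by simp⟩
  | one => exact ⟨0, 0, 0, by simp⟩
  | mul x y hx hy ihx ihy =>
      obtain ⟨i, j, k, rfl⟩ := ihx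
      obtain ⟨a, b, c, rfl⟩ := ihy
      refine ⟨i + a, j + b, k + c - a * j, ?_⟩
      calc u ^ i * v ^ j * m ^ k * (u ^ a * v ^ b * m ^ c)
          = u ^ i * v ^ j * (m ^ k * (u ^ a * v ^ b * m ^ c)) := by group
        _ = u ^ i * v ^ j * ((u ^ a * v ^ b * m ^ c) * m ^ k) := by rw [hcz]
        _ = u ^ i * (v ^ j * u ^ a) * (v ^ b * (m ^ c * m ^ k)) := by group
        _ = u ^ i * (u ^ a * v ^ j * m ^ (-(a * j))) * (v ^ b * (m ^ c * m ^ k)) := by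
            rw [cent2_swap hc j a]
        _ = (u ^ i * u ^ a) * v ^ j * (m ^ (-(a * j)) * v ^ b) * (m ^ c * m ^ k) := by group
        _ = (u ^ i * u ^ a) * v ^ j * (v ^ b * m ^ (-(a * j))) * (m ^ c * m ^ k) := by rw [hcz]
        _ = (u ^ i * u ^ a) * (v ^ j * v ^ b) * (m ^ (-(a * j)) * (m ^ c * m ^ k)) := by group
        _ = u ^ (i + a) * v ^ (j + b) * m ^ (k + c - a * j) := by
            rw [← zpow_add, ← zpow_add, ← zpow_add, ← zpow_add,
              show -(a * j) + (c + k) = k + c - a * j by ring]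
  | inv x hx ihx =>
      obtain ⟨i, j, k, rfl⟩ := ihx
      refine ⟨-i, -j, -k - i * j, ?_⟩
      calc (u ^ i * v ^ j * m ^ k)⁻¹
          = m ^ (-k) * (v ^ (-j) * u ^ (-i)) := by
            rw [zpow_neg, zpow_neg, zpow_neg]; group
        _ = (v ^ (-j) * u ^ (-i)) * m ^ (-k) := by rw [hcz]
        _ = (u ^ (-i) * v ^ (-j) * m ^ (-(-i * -j))) * m ^ (-k) := by rw [cent2_swap hc (-j) (-i)]
        _ = u ^ (-i) * v ^ (-j) * (m ^ (-(-i * -j)) * m ^ (-k)) := by group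
        _ = u ^ (-i) * v ^ (-j) * m ^ (-k - i * j) := by
            rw [← zpow_add, show -(-i * -j) + -k = -k - i * j by ring]

lemma mem_commutator_self (x y : G) : ⁅x, y⁆ ∈ commutator G := by
  rw [commutator_def]
  exact Subgroup.commutator_mem_commutator (Subgroup.mem_top x) (Subgroup.mem_top y)

lemma mem_lcs2 {c : G} (hc : c ∈ commutator G) (x : G) : ⁅c, x⁆ ∈ (⊤ : Subgroup G).lowerCentralSeries 2 := by
  have h : (⊤ : Subgroup G).lowerCentralSeries 2 = ⁅(⊤ : Subgroup G).lowerCentralSeries 1, ⊤⁆ := Subgroup.lowerCentralSeries_succ ⊤ 1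
  rw [h]
  exact Subgroup.commutator_mem_commutator (by rwa [lowerCentralSeries_one]) (Subgroup.mem_top x)

lemma mem_lcs2' {c : G} (hc : c ∈ commutator G) (x : G) : ⁅x, c⁆ ∈ (⊤ : Subgroup G).lowerCentralSeries 2 := by
  rw [← commutatorElement_inv]
  exact inv_mem (mem_lcs2 hc x)

section Ctx

variable (hZ : ∀ w ∈ (⊤ : Subgroup G).lowerCentralSeries 2, ∀ g : G, Commute w g)

include hZ

lemma cval_central {c : G} (hc : c ∈ commutator G) (x : G) : ∀ g : G, Commute ⁅c, x⁆ g :=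
  fun g => hZ _ (mem_lcs2 hc x) g

lemma bil_left {c d : G} (hc : c ∈ commutator G) (hd : d ∈ commutator G) (y : G) :
    ⁅c * d, y⁆ = ⁅c, y⁆ * ⁅d, y⁆ := by
  rw [comm_mul_left', conj_eq_of_central (cval_central hZ hd y) c]
  exact ((cval_central hZ hd y) ⁅c, y⁆).eq

lemma bil_right {c : G} (hc : c ∈ commutator G) (x y : G) :
    ⁅c, x * y⁆ = ⁅c, x⁆ * ⁅c, y⁆ := by
  rw [comm_mul_right', conj_eq_of_central (cval_central hZ hc y) x]

lemma bil_inv_left {c : G} (hc : c ∈ commutator G) (y : G) : ⁅c⁻¹, y⁆ = ⁅c, y⁆⁻¹ := by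
  have h := bil_left hZ hc (inv_mem hc) y
  rw [mul_inv_cancel] at h
  simp only [commutatorElement_one_left] at h
  exact (inv_eq_of_mul_eq_one_right h.symm).symm

lemma bil_inv_right {c : G} (hc : c ∈ commutator G) (y : G) : ⁅c, y⁻¹⁆ = ⁅c, y⁆⁻¹ := by
  have h := bil_right hZ hc y y⁻¹
  rw [mul_inv_cancel] at h
  simp only [commutatorElement_one_right] at h
  exact (inv_eq_of_mul_eq_one_right h.symm).symm

lemma bil_zpow_left {c : G} (hc : c ∈ commutator G) (y : G) (n : ℤ) :
    ⁅c ^ n, y⁆ = ⁅c, y⁆ ^ n := by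
  induction n using Int.induction_on with
  | zero => simp
  | succ k ih => rw [zpow_add_one, bil_left hZ (zpow_mem hc _) hc, ih, zpow_add_one]
  | pred k ih =>
      rw [zpow_sub_one, bil_left hZ (zpow_mem hc _) (inv_mem hc), ih,
        bil_inv_left hZ hc, zpow_sub_one]

lemma bil_zpow_right {c : G} (hc : c ∈ commutator G) (y : G) (n : ℤ) :
    ⁅c, y ^ n⁆ = ⁅c, y⁆ ^ n := by
  induction n using Int.induction_on with
  | zero => simp
  | succ k ih => rw [zpow_add_one, bil_right hZ hc, ih, zpow_add_one]
  | pred k ih => rw [zpow_sub_one, bil_right hZ hc, ih, bil_inv_right hZ hc, zpow_sub_one]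

/-- conjugation does not change first argument of a commutator, modulo class-3 assumptions -/
lemma comm_conj_arg (g : G) {d : G} (hd : d ∈ commutator G) (z : G) :
    ⁅g * d * g⁻¹, z⁆ = ⁅d, z⁆ := by
  have h1 : g * d * g⁻¹ = ⁅g, d⁆ * d := by group
  have h2 : ∀ h : G, Commute ⁅g, d⁆ h := by
    intro h
    exact hZ _ (mem_lcs2' hd g) h
  rw [h1, comm_drop_l h2]

/-- the commutator power formula in class ≤ 3 -/
lemma comm_zpow_left (x y : G) (n : ℤ) :
    ⁅x ^ n, y⁆ = ⁅x, y⁆ ^ n * ⁅x, ⁅x, y⁆⁆ ^ (Eh n) := by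
  set c := ⁅x, y⁆ with hcdef
  set z := ⁅x, c⁆ with hzdef
  have hzmem : z ∈ (⊤ : Subgroup G).lowerCentralSeries 2 := mem_lcs2' (mem_commutator_self x y) x
  have hzc : ∀ g : G, Commute z g := fun g => hZ _ hzmem g
  have hzcz : ∀ (k : ℤ) (g : G), z ^ k * g = g * z ^ k := fun k g => ((hzc g).zpow_left k).eq
  have hconj : x * c * x⁻¹ = z * c := by rw [hzdef, hcdef]; group
  have hconj' : x⁻¹ * c * x = z⁻¹ * c := by
    have h2 : x⁻¹ * (x * c * x⁻¹) * x = x⁻¹ * (z * c) * x := by rw [hconj]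
    have h3 : x⁻¹ * (z * c) * x = z * (x⁻¹ * c * x) := by
      rw [show x⁻¹ * (z * c) * x = (x⁻¹ * z * x) * (x⁻¹ * c * x) by group,
        show x⁻¹ * z * x = x⁻¹ * z * (x⁻¹)⁻¹ by group,
        conj_eq_of_central hzc x⁻¹]
    have h4 : c = z * (x⁻¹ * c * x) := by
      calc c = x⁻¹ * (x * c * x⁻¹) * x := by group
        _ = z * (x⁻¹ * c * x) := by rw [h2, h3]
    calc x⁻¹ * c * x = z⁻¹ * (z * (x⁻¹ * c * x)) := by group
      _ = z⁻¹ * c := by rw [← h4]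
  have hcz : Commute c z := ((hzc c).symm)
  induction n using Int.induction_on with
  | zero => simp [show Eh 0 = 0 from Eh_zero]
  | succ k ih =>
      have h1 : ⁅x ^ ((k:ℤ) + 1), y⁆ = x * ⁅x ^ (k:ℤ), y⁆ * x⁻¹ * c := by
        rw [zpow_add_one, show x ^ (k:ℤ) * x = x * x ^ (k:ℤ) by
            exact ((Commute.refl x).zpow_left k).eq,
          comm_mul_left', hcdef]
      rw [h1, ih]
      have h2 : x * (c ^ (k:ℤ) * z ^ Eh (k:ℤ)) * x⁻¹ = (z * c) ^ (k:ℤ) * z ^ Eh (k:ℤ) := by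
        calc x * (c ^ (k:ℤ) * z ^ Eh (k:ℤ)) * x⁻¹
            = (x * c ^ (k:ℤ) * x⁻¹) * (x * z ^ Eh (k:ℤ) * x⁻¹) := by group
          _ = (x * c * x⁻¹) ^ (k:ℤ) * z ^ Eh (k:ℤ) := by
              rw [conj_zpow, conj_eq_of_central (fun g => (hzc g).zpow_left _) x]
          _ = (z * c) ^ (k:ℤ) * z ^ Eh (k:ℤ) := by rw [hconj]
      rw [h2, Commute.mul_zpow hcz.symm]
      rw [show z ^ (k:ℤ) * c ^ (k:ℤ) * z ^ Eh (k:ℤ) * c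
            = c ^ (k:ℤ) * (z ^ (k:ℤ) * (z ^ Eh (k:ℤ) * c)) by
        rw [hzcz k (c ^ (k:ℤ))]; group]
      rw [hzcz (Eh (k:ℤ)) c,
        show c ^ (k:ℤ) * (z ^ (k:ℤ) * (c * z ^ Eh (k:ℤ)))
            = (c ^ (k:ℤ) * (z ^ (k:ℤ) * c)) * z ^ Eh (k:ℤ) by group,
        hzcz k c, Eh_succ]
      rw [show c ^ (k:ℤ) * (c * z ^ (k:ℤ)) * z ^ Eh (k:ℤ)
            = (c ^ (k:ℤ) * c) * (z ^ (k:ℤ) * z ^ Eh (k:ℤ)) by group]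
      rw [← zpow_add_one, ← zpow_add, add_comm (k:ℤ) (Eh (k:ℤ))]
  | pred k ih =>
      have h1 : ⁅x ^ (-(k:ℤ)), y⁆ = x * ⁅x ^ (-(k:ℤ) - 1), y⁆ * x⁻¹ * c := by
        rw [show x ^ (-(k:ℤ)) = x * x ^ (-(k:ℤ) - 1) by
            conv_lhs => rw [show (-(k:ℤ)) = 1 + (-(k:ℤ) - 1) by ring, zpow_add, zpow_one]
          , comm_mul_left', hcdef]
      have h2 : ⁅x ^ (-(k:ℤ) - 1), y⁆ = x⁻¹ * (⁅x ^ (-(k:ℤ)), y⁆ * c⁻¹) * x := by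
        rw [h1]; group
      rw [h2, ih]
      have h3 : c ^ (-(k:ℤ)) * z ^ Eh (-(k:ℤ)) * c⁻¹ = c ^ (-(k:ℤ) - 1) * z ^ Eh (-(k:ℤ)) := by
        rw [show c ^ (-(k:ℤ)) * z ^ Eh (-(k:ℤ)) * c⁻¹
              = c ^ (-(k:ℤ)) * (z ^ Eh (-(k:ℤ)) * c⁻¹) by group,
          hzcz (Eh (-(k:ℤ))) c⁻¹,
          show c ^ (-(k:ℤ)) * (c⁻¹ * z ^ Eh (-(k:ℤ)))
              = (c ^ (-(k:ℤ)) * c⁻¹) * z ^ Eh (-(k:ℤ)) by group,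
          ← zpow_sub_one]
      rw [h3]
      have h4 : x⁻¹ * (c ^ (-(k:ℤ) - 1) * z ^ Eh (-(k:ℤ))) * x
          = (x⁻¹ * c * x) ^ (-(k:ℤ) - 1) * z ^ Eh (-(k:ℤ)) := by
        calc x⁻¹ * (c ^ (-(k:ℤ) - 1) * z ^ Eh (-(k:ℤ))) * x
            = (x⁻¹ * c ^ (-(k:ℤ) - 1) * x) * (x⁻¹ * z ^ Eh (-(k:ℤ)) * x) := by group
          _ = (x⁻¹ * c ^ (-(k:ℤ) - 1) * (x⁻¹)⁻¹) * (x⁻¹ * z ^ Eh (-(k:ℤ)) * (x⁻¹)⁻¹) := by group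
          _ = (x⁻¹ * c * (x⁻¹)⁻¹) ^ (-(k:ℤ) - 1) * z ^ Eh (-(k:ℤ)) := by
              rw [conj_zpow, conj_eq_of_central (fun g => (hzc g).zpow_left _) x⁻¹]
          _ = (x⁻¹ * c * x) ^ (-(k:ℤ) - 1) * z ^ Eh (-(k:ℤ)) := by group
      rw [h4, hconj']
      rw [Commute.mul_zpow (hcz.inv_right.symm)]
      rw [inv_zpow, ← zpow_neg]
      rw [show z ^ (-(-(k:ℤ) - 1)) * c ^ (-(k:ℤ) - 1) * z ^ Eh (-(k:ℤ))
            = c ^ (-(k:ℤ) - 1) * (z ^ (-(-(k:ℤ) - 1)) * z ^ Eh (-(k:ℤ))) by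
        rw [hzcz (-(-(k:ℤ) - 1)) (c ^ (-(k:ℤ) - 1))]; group]
      rw [← zpow_add]
      congr 1
      rw [show (-(k:ℤ) - 1) = (-(k:ℤ)) - 1 by ring, Eh_pred]
      ring

/-- f is inverted when the first argument is inverted -/
lemma f_inv_first (x y z : G) : ⁅⁅x⁻¹, y⁆, z⁆ = ⁅⁅x, y⁆, z⁆⁻¹ := by
  have h1 : ⁅x⁻¹, y⁆ = x⁻¹ * ⁅x, y⁆⁻¹ * x := by group
  rw [h1, show x⁻¹ * ⁅x, y⁆⁻¹ * x = x⁻¹ * ⁅x, y⁆⁻¹ * (x⁻¹)⁻¹ by rw [inv_inv],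
    comm_conj_arg hZ x⁻¹ (inv_mem (mem_commutator_self x y)) z,
    bil_inv_left hZ (mem_commutator_self x y) z]

/-- Jacobi identity for the class-3 bracket -/
lemma jacobi (x y z : G) : ⁅⁅z, x⁆, y⁆ * ⁅⁅y, z⁆, x⁆ * ⁅⁅x, y⁆, z⁆ = 1 := by
  have H := hall_witt x y z
  have k1 : (y⁻¹ * (⁅x⁻¹, y⁆⁻¹ * z⁻¹ * ⁅x⁻¹, y⁆ * z) * y) = ⁅⁅x, y⁆, z⁆⁻¹ := by
    have h0 : ⁅x⁻¹, y⁆⁻¹ * z⁻¹ * ⁅x⁻¹, y⁆ * z = ⁅⁅x⁻¹, y⁆⁻¹, z⁻¹⁆ := by group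
    rw [h0, bil_inv_left hZ (mem_commutator_self x⁻¹ y) z⁻¹,
      bil_inv_right hZ (mem_commutator_self x⁻¹ y) z, inv_inv,
      show y⁻¹ * ⁅⁅x⁻¹, y⁆, z⁆ * y = y⁻¹ * ⁅⁅x⁻¹, y⁆, z⁆ * (y⁻¹)⁻¹ by rw [inv_inv],
      conj_eq_of_central (cval_central hZ (mem_commutator_self x⁻¹ y) z) y⁻¹,
      f_inv_first hZ]
  have k2 : (z⁻¹ * (⁅y⁻¹, z⁆⁻¹ * x⁻¹ * ⁅y⁻¹, z⁆ * x) * z) = ⁅⁅y, z⁆, x⁆⁻¹ := by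
    have h0 : ⁅y⁻¹, z⁆⁻¹ * x⁻¹ * ⁅y⁻¹, z⁆ * x = ⁅⁅y⁻¹, z⁆⁻¹, x⁻¹⁆ := by group
    rw [h0, bil_inv_left hZ (mem_commutator_self y⁻¹ z) x⁻¹,
      bil_inv_right hZ (mem_commutator_self y⁻¹ z) x, inv_inv,
      show z⁻¹ * ⁅⁅y⁻¹, z⁆, x⁆ * z = z⁻¹ * ⁅⁅y⁻¹, z⁆, x⁆ * (z⁻¹)⁻¹ by rw [inv_inv],
      conj_eq_of_central (cval_central hZ (mem_commutator_self y⁻¹ z) x) z⁻¹,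
      f_inv_first hZ]
  have k3 : (x⁻¹ * (⁅z⁻¹, x⁆⁻¹ * y⁻¹ * ⁅z⁻¹, x⁆ * y) * x) = ⁅⁅z, x⁆, y⁆⁻¹ := by
    have h0 : ⁅z⁻¹, x⁆⁻¹ * y⁻¹ * ⁅z⁻¹, x⁆ * y = ⁅⁅z⁻¹, x⁆⁻¹, y⁻¹⁆ := by group
    rw [h0, bil_inv_left hZ (mem_commutator_self z⁻¹ x) y⁻¹,
      bil_inv_right hZ (mem_commutator_self z⁻¹ x) y, inv_inv,
      show x⁻¹ * ⁅⁅z⁻¹, x⁆, y⁆ * x = x⁻¹ * ⁅⁅z⁻¹, x⁆, y⁆ * (x⁻¹)⁻¹ by rw [inv_inv],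
      conj_eq_of_central (cval_central hZ (mem_commutator_self z⁻¹ x) y) x⁻¹,
      f_inv_first hZ]
  rw [k1, k2, k3] at H
  have H2 : (⁅⁅x, y⁆, z⁆⁻¹ * ⁅⁅y, z⁆, x⁆⁻¹ * ⁅⁅z, x⁆, y⁆⁻¹)⁻¹ = 1 := by rw [H]; simp
  calc ⁅⁅z, x⁆, y⁆ * ⁅⁅y, z⁆, x⁆ * ⁅⁅x, y⁆, z⁆
      = (⁅⁅x, y⁆, z⁆⁻¹ * ⁅⁅y, z⁆, x⁆⁻¹ * ⁅⁅z, x⁆, y⁆⁻¹)⁻¹ := by group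
    _ = 1 := H2

/-- antisymmetry in the first two arguments -/
lemma f_antisym12 (x y z : G) : ⁅⁅y, x⁆, z⁆ = ⁅⁅x, y⁆, z⁆⁻¹ := by
  rw [← commutatorElement_inv x y, bil_inv_left hZ (mem_commutator_self x y) z]

/-- linearized antisymmetry in the last two slots, assuming alternation -/
lemma f_lin1 (hA : ∀ x y : G, ⁅⁅x, y⁆, y⁆ = 1) (x y z : G) :
    ⁅⁅x, z⁆, y⁆ = ⁅⁅x, y⁆, z⁆⁻¹ := by
  have hw : ∀ g : G, Commute ⁅y, ⁅x, z⁆⁆ g :=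
    fun g => hZ _ (mem_lcs2' (mem_commutator_self x z) y) g
  have hexp : ⁅x, y * z⁆ = ⁅x, y⁆ * (⁅y, ⁅x, z⁆⁆ * ⁅x, z⁆) := by
    rw [comm_mul_right']
    congr 1
    group
  have h0 := hA x (y * z)
  rw [hexp] at h0
  -- ⁅⁅x,y⁆ * (w * ⁅x,z⁆), y*z⁆ = 1
  rw [bil_left hZ (mem_commutator_self x y)
      (mul_mem ((Subgroup.lowerCentralSeries_antitone ⊤ (by norm_num : (1:ℕ) ≤ 2))
        (mem_lcs2' (mem_commutator_self x z) y) : ⁅y, ⁅x, z⁆⁆ ∈ (⊤ : Subgroup G).lowerCentralSeries 1)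
        (mem_commutator_self x z))] at h0
  rw [comm_drop_l hw, bil_right hZ (mem_commutator_self x y),
    bil_right hZ (mem_commutator_self x z), hA x y, hA x z, one_mul, mul_one] at h0
  exact (inv_eq_of_mul_eq_one_right h0).symm

end Ctx

/-- an integer inverse mod p -/
lemma exists_inv_mod {p : ℕ} (hp : p.Prime) {k : ℤ} (hk : ¬ (p:ℤ) ∣ k) :
    ∃ t s : ℤ, k * t = 1 + p * s := by
  haveI := Fact.mk hp
  have h0 : (k : ZMod p) ≠ 0 := by rwa [Ne, ZMod.intCast_zmod_eq_zero_iff_dvd]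
  obtain ⟨t, ht⟩ : ∃ t : ℤ, (t : ZMod p) = (k : ZMod p)⁻¹ := ZMod.intCast_surjective _
  have h1 : ((k * t - 1 : ℤ) : ZMod p) = 0 := by
    push_cast
    rw [ht, mul_inv_cancel₀ h0]
    ring
  rw [ZMod.intCast_zmod_eq_zero_iff_dvd] at h1
  obtain ⟨s, hs⟩ := h1
  exact ⟨t, s, by linarith⟩

end MetaHamAux
open MetaHamAux in
/-- A finite metahamiltonian p-group with elementary abelian derived subgroup
and nilpotency class exactly 3 is 2-generated, and p is odd. -/
theorem metahamiltonian_class_three_two_gen_p_odd {p : ℕ} (hp : p.Prime)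
    (G : Type*) [Group G] [Finite G] (hG : IsPGroup p G)
    (hmh : ∀ H : Subgroup G, ¬IsMulCommutative H → H.Normal)
    (hcomm : IsMulCommutative (commutator G))
    (hel : ∀ x ∈ commutator G, x ^ p = 1)
    (hc3 : (⊤ : Subgroup G).lowerCentralSeries 3 = ⊥ ∧ (⊤ : Subgroup G).lowerCentralSeries 2 ≠ ⊥) :
    (∃ a b : G, Subgroup.closure {a, b} = ⊤) ∧ Odd p := by
  classical
  obtain ⟨hc31, hc32⟩ := hc3
  haveI := Fact.mk hp
  -- γ₃ is central
  have hZ : ∀ w ∈ (⊤ : Subgroup G).lowerCentralSeries 2, ∀ g : G, Commute w g := by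
    intro w hw g
    have hmem : ⁅w, g⁆ ∈ (⊤ : Subgroup G).lowerCentralSeries 3 := by
      rw [lowerCentralSeries_succ]
      exact Subgroup.commutator_mem_commutator hw (Subgroup.mem_top g)
    rw [hc31, Subgroup.mem_bot] at hmem
    exact commutatorElement_eq_one_iff_commute.mp hmem
  have hlcs2le : (⊤ : Subgroup G).lowerCentralSeries 2 ≤ commutator G :=
    Subgroup.lowerCentralSeries_antitone ⊤ (by norm_num : (1:ℕ) ≤ 2)
  have hCc : ∀ {x y : G}, x ∈ commutator G → y ∈ commutator G → Commute x y := by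
    intro x y hx hy
    haveI := hcomm
    exact Subgroup.mul_comm_of_mem_isMulCommutative (H := commutator G) hx hy
  have hPel : ∀ c ∈ commutator G, c ^ ((p:ℕ):ℤ) = 1 := fun c hc => by
    rw [zpow_natCast]; exact hel c hc
  -- existence of a nontrivial triple commutator
  have hfex : ∃ x y z : G, ⁅⁅x, y⁆, z⁆ ≠ 1 := by
    by_contra h
    push_neg at h
    apply hc32
    have hcen : commutator G ≤ Subgroup.center G := by
      rw [commutator_def, Subgroup.commutator_le]
      intro x _ y _
      rw [Subgroup.mem_center_iff]
      intro g
      exact (commutatorElement_eq_one_iff_commute.mp (h x y g)).symm.eq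
    have hls : (⊤ : Subgroup G).lowerCentralSeries 2 = ⁅(⊤ : Subgroup G).lowerCentralSeries 1, ⊤⁆ := Subgroup.lowerCentralSeries_succ ⊤ 1
    rw [eq_bot_iff, hls, Subgroup.commutator_le]
    intro c hc g _
    rw [Subgroup.mem_bot, commutatorElement_eq_one_iff_commute]
    have h1 : c ∈ commutator G := by rwa [lowerCentralSeries_one] at hc
    exact ((Subgroup.mem_center_iff.mp (hcen h1)) g).symm
  -- decomposition of elements of 2-generated subgroups, modulo γ₃
  have hdecomp : ∀ (X Y W : G), W ∈ Subgroup.closure {X, Y} →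
      ∃ i j k : ℤ, ∃ w0 ∈ (⊤ : Subgroup G).lowerCentralSeries 2, W = X ^ i * Y ^ j * ⁅X, Y⁆ ^ k * w0 := by
    intro X Y W hW
    set mkq := QuotientGroup.mk' ((⊤ : Subgroup G).lowerCentralSeries 2) with hmkq
    have hcQ : ∀ h : G ⧸ ((⊤ : Subgroup G).lowerCentralSeries 2), Commute ⁅mkq X, mkq Y⁆ h := by
      intro h
      obtain ⟨h', rfl⟩ := QuotientGroup.mk'_surjective _ h
      have h1 : ⁅⁅X, Y⁆, h'⁆ ∈ (⊤ : Subgroup G).lowerCentralSeries 2 := mem_lcs2 (mem_commutator_self X Y) h'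
      have h2 : ⁅⁅mkq X, mkq Y⁆, mkq h'⁆ = 1 := by
        rw [← map_commutatorElement, ← map_commutatorElement]
        exact (QuotientGroup.eq_one_iff _).mpr h1
      exact commutatorElement_eq_one_iff_commute.mp h2
    have hmem : mkq W ∈ Subgroup.closure {mkq X, mkq Y} := by
      have h1 : mkq W ∈ Subgroup.map mkq (Subgroup.closure {X, Y}) := ⟨W, hW, rfl⟩
      rwa [MonoidHom.map_closure, Set.image_pair] at h1
    obtain ⟨i, j, k, hijk⟩ := cent2 hcQ (mkq W) hmem
    refine ⟨i, j, k, (X ^ i * Y ^ j * ⁅X, Y⁆ ^ k)⁻¹ * W, ?_, by group⟩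
    have h3 : mkq ((X ^ i * Y ^ j * ⁅X, Y⁆ ^ k)⁻¹ * W) = 1 := by
      rw [map_mul, map_inv, map_mul, map_mul, map_zpow, map_zpow, map_zpow,
        map_commutatorElement, ← hijk]
      exact inv_mul_cancel _
    exact (QuotientGroup.eq_one_iff _).mp h3
  -- p is odd
  have hodd : Odd p := by
    rcases hp.eq_two_or_odd' with rfl | h
    · exfalso
      have hsq : ∀ c ∈ commutator G, c * c = 1 := fun c hc => by
        have h1 := hel c hc; rwa [pow_two] at h1
      have hA : ∃ a b : G, ⁅⁅a, b⁆, b⁆ ≠ 1 := by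
        by_contra hno
        push_neg at hno
        obtain ⟨x, y, z, hxyz⟩ := hfex
        apply hxyz
        have e2 : ⁅⁅z, x⁆, y⁆ = ⁅⁅x, y⁆, z⁆ := by
          rw [f_antisym12 hZ, f_lin1 hZ hno x y z, inv_inv]
        have e3 : ⁅⁅y, z⁆, x⁆ = ⁅⁅x, y⁆, z⁆ := by
          rw [f_lin1 hZ hno y x z, f_antisym12 hZ, inv_inv]
        have hj := jacobi hZ x y z
        rw [e2, e3] at hj
        have hd2 : ⁅⁅x, y⁆, z⁆ * ⁅⁅x, y⁆, z⁆ = 1 := hsq _ (mem_commutator_self _ _)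
        calc ⁅⁅x, y⁆, z⁆ = ⁅⁅x, y⁆, z⁆ * (⁅⁅x, y⁆, z⁆ * ⁅⁅x, y⁆, z⁆) := by
              rw [hd2, mul_one]
          _ = ⁅⁅x, y⁆, z⁆ * ⁅⁅x, y⁆, z⁆ * ⁅⁅x, y⁆, z⁆ := by rw [mul_assoc]
          _ = 1 := hj
      obtain ⟨a, b, hu⟩ := hA
      have S1b : ∀ a b : G, ⁅⁅a, b⁆, b⁆ ≠ 1 → ⁅⁅a, b⁆, b⁆ = ⁅a, ⁅a, b⁆⁆ := by
        clear hu
        intro a b hu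
        set c := ⁅a, b⁆ with hc
        set u := ⁅c, b⁆ with huu
        set z' := ⁅a, c⁆ with hz'
        have hcmem : c ∈ commutator G := by rw [hc]; exact mem_commutator_self a b
        have humem : u ∈ (⊤ : Subgroup G).lowerCentralSeries 2 := by rw [huu]; exact mem_lcs2 hcmem b
        have huc : ∀ g : G, Commute u g := fun g => hZ _ humem g
        have hz'mem : z' ∈ (⊤ : Subgroup G).lowerCentralSeries 2 := by rw [hz']; exact mem_lcs2' hcmem a
        have hz'c : ∀ g : G, Commute z' g := fun g => hZ _ hz'mem g
        have hbc : ⁅b, c⁆ = u⁻¹ := by rw [huu]; exact (commutatorElement_inv c b).symm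
        have hab2 : ⁅a, b * b⁆ = u⁻¹ := by
          rw [comm_mul_right', ← hc, show b * c * b⁻¹ = ⁅b, c⁆ * c from by group, hbc]
          have h1 : c * u⁻¹ = u⁻¹ * c := ((huc c).inv_left.symm).eq
          calc c * (u⁻¹ * c) = (c * u⁻¹) * c := by group
            _ = (u⁻¹ * c) * c := by rw [h1]
            _ = u⁻¹ * (c * c) := by group
            _ = u⁻¹ := by rw [hsq c hcmem, mul_one]
        have hvc : ∀ g : G, Commute ⁅a, b * b⁆ g := by
          rw [hab2]; intro g; exact (huc g).inv_left
        have hncH : ¬ IsMulCommutative (Subgroup.closure {a, b * b}) := by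
          intro hcom
          haveI := hcom
          have h1 : a * (b * b) = (b * b) * a :=
            Subgroup.mul_comm_of_mem_isMulCommutative (H := Subgroup.closure {a, b * b})
              (Subgroup.subset_closure (Set.mem_insert _ _))
              (Subgroup.subset_closure (Set.mem_insert_of_mem _ rfl))
          have h2 : ⁅a, b * b⁆ = 1 := commutatorElement_eq_one_iff_commute.mpr h1
          rw [hab2, inv_eq_one] at h2
          exact hu h2
        have hnormH := hmh _ hncH
        have haH : a ∈ Subgroup.closure {a, b * b} := Subgroup.subset_closure (Set.mem_insert _ _)
        have hcH : c ∈ Subgroup.closure {a, b * b} := by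
          have h1 : b * a * b⁻¹ ∈ Subgroup.closure {a, b * b} := hnormH.conj_mem a haH b
          have h2 : ⁅b, a⁆ ∈ Subgroup.closure {a, b * b} := by
            have h3 : ⁅b, a⁆ = (b * a * b⁻¹) * a⁻¹ := by group
            rw [h3]; exact mul_mem h1 (inv_mem haH)
          rw [hc, ← commutatorElement_inv b a]
          exact inv_mem h2
        obtain ⟨i, j, k, hdec⟩ := cent2 hvc c hcH
        have hmain : u = c ^ i * z' ^ Eh i := by
          have h0 : u = ⁅a ^ i * (b * b) ^ j * ⁅a, b * b⁆ ^ k, b⁆ := by rw [huu, hdec]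
          rw [comm_drop_r (fun g => (hvc g).zpow_left k), comm_mul_left',
            show ⁅(b * b) ^ j, b⁆ = 1 from commutatorElement_eq_one_iff_commute.mpr
              (((Commute.refl b).mul_left (Commute.refl b)).zpow_left j),
            mul_one, mul_inv_cancel, one_mul, comm_zpow_left hZ a b i, ← hc, ← hz'] at h0
          exact h0
        rcases Int.even_or_odd i with ⟨m, hm⟩ | ⟨m, hm⟩
        · have hci : c ^ i = 1 := by
            rw [hm, zpow_add]; exact hsq _ (zpow_mem hcmem m)
          rw [hci, one_mul] at hmain
          rcases Int.even_or_odd (Eh i) with ⟨n, hn⟩ | ⟨n, hn⟩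
          · exfalso
            apply hu
            rw [huu] at hmain ⊢
            rw [hmain, hn, zpow_add]
            exact hsq _ (zpow_mem (hlcs2le hz'mem) n)
          · have h1 : z' ^ Eh i = z' := by
              rw [hn, show (2 * n + 1 : ℤ) = n + n + 1 by ring, zpow_add, zpow_add, zpow_one,
                hsq _ (zpow_mem (hlcs2le hz'mem) n), one_mul]
            rw [hmain, h1]
        · exfalso
          have hci : c ^ i = c := by
            rw [hm, show (2 * m + 1 : ℤ) = m + m + 1 by ring, zpow_add, zpow_add, zpow_one,
              hsq _ (zpow_mem hcmem m), one_mul]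
          rw [hci] at hmain
          have hcc : c = u * (z' ^ Eh i)⁻¹ := by rw [hmain]; group
          have hcent : ∀ g : G, Commute c g := by
            intro g
            rw [hcc]
            exact Commute.mul_left (huc g) (((hz'c g).zpow_left _).inv_left)
          apply hu
          rw [huu]
          exact commutatorElement_eq_one_iff_commute.mpr (hcent b)
      -- derive the contradiction for p = 2
      have hz1 := S1b a b hu
      have hcmem : ⁅a, b⁆ ∈ commutator G := mem_commutator_self a b
      have humem : ⁅⁅a, b⁆, b⁆ ∈ (⊤ : Subgroup G).lowerCentralSeries 2 := mem_lcs2 hcmem b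
      have huc : ∀ g : G, Commute ⁅⁅a, b⁆, b⁆ g := fun g => hZ _ humem g
      have hc'eq : ⁅a * b, a⁆ = ⁅a, b⁆⁻¹ * ⁅⁅a, b⁆, b⁆⁻¹ := by
        have h1 : ⁅a * b, a⁆ = (a * ⁅a, b⁆ * a⁻¹)⁻¹ := by group
        have h2 : a * ⁅a, b⁆ * a⁻¹ = ⁅a, ⁅a, b⁆⁆ * ⁅a, b⁆ := by group
        rw [h1, h2, ← hz1, mul_inv_rev]
      have hca : ⁅⁅a, b⁆, a⁆ = ⁅⁅a, b⁆, b⁆⁻¹ := by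
        rw [← commutatorElement_inv a ⁅a, b⁆, ← hz1]
      have hLHS : ⁅⁅a * b, a⁆, a⁆ = ⁅⁅a, b⁆, b⁆ := by
        rw [hc'eq, comm_drop_r (fun g => (huc g).inv_left), bil_inv_left hZ hcmem a, hca, inv_inv]
      have hRHS : ⁅a * b, ⁅a * b, a⁆⁆ = 1 := by
        rw [hc'eq, comm_drop_r2 (fun g => (huc g).inv_left),
          ← commutatorElement_inv (⁅a, b⁆⁻¹) (a * b),
          bil_inv_left hZ hcmem (a * b), bil_right hZ hcmem a b, hca, inv_mul_cancel,
          inv_one, inv_one]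
      have hfinal := S1b (a * b) a (by rw [hLHS]; exact hu)
      rw [hLHS, hRHS] at hfinal
      exact hu hfinal
    · exact h
  -- now p is odd; prove 2-generation
  refine ⟨?_, hodd⟩
  -- p-th powers are central
  have hT6 : ∀ g x : G, Commute (g ^ ((p:ℕ):ℤ)) x := by
    intro g x
    apply commutatorElement_eq_one_iff_commute.mp
    rw [comm_zpow_left hZ g x ((p:ℕ):ℤ)]
    obtain ⟨t, ht⟩ := hodd
    have hEp : Eh ((p:ℕ):ℤ) = ((p:ℕ):ℤ) * t := by
      apply mul_left_cancel₀ (by norm_num : (2:ℤ) ≠ 0)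
      rw [Eh_spec]
      push_cast [ht]
      ring
    rw [hPel _ (mem_commutator_self g x), hEp, zpow_mul,
      hPel _ (mem_commutator_self g ⁅g, x⁆), one_zpow, one_mul]
  -- existence of a pair with ⁅⁅a,b⁆,b⁆ ≠ 1
  have hpair : ∃ a b : G, ⁅⁅a, b⁆, b⁆ ≠ 1 := by
    by_contra hno
    push_neg at hno
    obtain ⟨x, y, z, hxyz⟩ := hfex
    have hd : ⁅⁅z, x⁆, y⁆ ≠ 1 := by
      have e2 : ⁅⁅z, x⁆, y⁆ = ⁅⁅x, y⁆, z⁆ := by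
        rw [f_antisym12 hZ, f_lin1 hZ hno x y z, inv_inv]
      rw [e2]; exact hxyz
    have hc₀mem : ⁅x, y⁆ ∈ commutator G := mem_commutator_self x y
    have hxy1 : ⁅x, y⁆ ≠ 1 := by
      intro h1
      apply hxyz
      rw [h1, commutatorElement_one_left]
    have hncK : ¬ IsMulCommutative (Subgroup.closure {x, y}) := by
      intro hcom
      haveI := hcom
      exact hxy1 (commutatorElement_eq_one_iff_commute.mpr
        (Subgroup.mul_comm_of_mem_isMulCommutative (H := Subgroup.closure {x, y})
          (Subgroup.subset_closure (Set.mem_insert _ _))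
          (Subgroup.subset_closure (Set.mem_insert_of_mem _ rfl))))
    have hnormK := hmh _ hncK
    have hxK : x ∈ Subgroup.closure {x, y} := Subgroup.subset_closure (Set.mem_insert _ _)
    have hBK : ⁅z, x⁆ ∈ Subgroup.closure {x, y} := by
      have h1 : z * x * z⁻¹ ∈ Subgroup.closure {x, y} := hnormK.conj_mem x hxK z
      have h2 : ⁅z, x⁆ = (z * x * z⁻¹) * x⁻¹ := by group
      rw [h2]; exact mul_mem h1 (inv_mem hxK)
    obtain ⟨i, j, k, w0, hw0, hB⟩ := hdecomp x y ⁅z, x⁆ hBK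
    have hfx : ⁅x, ⁅x, y⁆⁆ = 1 := by
      have h1 := f_lin1 hZ hno x y x
      rw [show ⁅x, x⁆ = (1:G) from by group, commutatorElement_one_left] at h1
      have h2 : ⁅⁅x, y⁆, x⁆ = 1 := inv_eq_one.mp h1.symm
      rw [← commutatorElement_inv, h2, inv_one]
    have hcomp : ⁅⁅z, x⁆, y⁆ = ⁅x, y⁆ ^ i := by
      rw [hB, comm_drop_r (fun g => hZ _ hw0 g), comm_mul_left',
        bil_zpow_left hZ hc₀mem y k, hno x y, one_zpow, mul_one, mul_inv_cancel, one_mul,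
        comm_mul_left',
        show ⁅y ^ j, y⁆ = 1 from commutatorElement_eq_one_iff_commute.mpr
          ((Commute.refl y).zpow_left j),
        mul_one, mul_inv_cancel, one_mul, comm_zpow_left hZ x y i, hfx, one_zpow, mul_one]
    by_cases hpi : ((p:ℕ):ℤ) ∣ i
    · obtain ⟨e, he⟩ := hpi
      apply hd
      rw [hcomp, he, zpow_mul, hPel _ hc₀mem, one_zpow]
    · obtain ⟨t, s, hts⟩ := exists_inv_mod hp hpi
      have hc₀eq : ⁅x, y⁆ = (⁅x, y⁆ ^ i) ^ t := by
        rw [← zpow_mul, hts, zpow_add, zpow_one, zpow_mul, hPel _ hc₀mem, one_zpow, mul_one]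
      have h1 : ⁅x, y⁆ ^ i ∈ (⊤ : Subgroup G).lowerCentralSeries 2 := by
        rw [← hcomp]
        exact mem_lcs2 (mem_commutator_self z x) y
      have hcent : ∀ g : G, Commute ⁅x, y⁆ g := by
        intro g
        rw [hc₀eq]
        exact (hZ _ h1 g).zpow_left t
      exact hxyz (commutatorElement_eq_one_iff_commute.mpr (hcent z))
  obtain ⟨a, b, hu⟩ := hpair
  refine ⟨a, b, ?_⟩
  by_contra hne
  -- a maximal subgroup containing ⟨a,b⟩
  obtain ⟨M, hMco, hMle⟩ : ∃ M : Subgroup G, IsCoatom M ∧ Subgroup.closure {a, b} ≤ M := by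
    rcases eq_top_or_exists_le_coatom (Subgroup.closure {a, b}) with h1 | h1
    · exact absurd h1 hne
    · obtain ⟨M, h2, h3⟩ := h1; exact ⟨M, h2, h3⟩
  haveI hnilp : Group.IsNilpotent G := hG.isNilpotent
  have hMnormal : M.Normal :=
    Subgroup.NormalizerCondition.normal_of_coatom M normalizerCondition_of_isNilpotent hMco
  haveI := hMnormal
  obtain ⟨g, hgtop, hgM⟩ := SetLike.exists_of_lt (lt_top_iff_ne_top.mpr hMco.1)
  have haM : a ∈ M := hMle (Subgroup.subset_closure (Set.mem_insert a _))
  have hbM : b ∈ M := hMle (Subgroup.subset_closure (Set.mem_insert_of_mem _ rfl))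
  set mkM := QuotientGroup.mk' M with hmkM
  have hcoatom2 : ∀ K : Subgroup G, M < K → K = ⊤ := fun K hK => hMco.2 K hK
  have hcyc : ∀ q : G ⧸ M, q ≠ 1 → ∀ r : G ⧸ M, ∃ n : ℤ, r = q ^ n := by
    intro q hq r
    obtain ⟨w, rfl⟩ := QuotientGroup.mk'_surjective M q
    have hMK : M ≤ Subgroup.comap mkM (Subgroup.zpowers (mkM w)) := by
      intro mm hm
      have h1 : mkM mm = 1 := (QuotientGroup.eq_one_iff mm).mpr hm
      rw [Subgroup.mem_comap, h1]
      exact one_mem _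
    have hwK : w ∈ Subgroup.comap mkM (Subgroup.zpowers (mkM w)) := by
      rw [Subgroup.mem_comap]
      exact Subgroup.mem_zpowers _
    have hwM : w ∉ M := fun h1 => hq ((QuotientGroup.eq_one_iff w).mpr h1)
    have hlt : M < Subgroup.comap mkM (Subgroup.zpowers (mkM w)) :=
      lt_of_le_of_ne hMK (fun h1 => hwM (h1 ▸ hwK))
    have hKtop := hcoatom2 _ hlt
    obtain ⟨r', rfl⟩ := QuotientGroup.mk'_surjective M r
    have h2 : r' ∈ Subgroup.comap mkM (Subgroup.zpowers (mkM w)) := by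
      rw [hKtop]; exact Subgroup.mem_top r'
    rw [Subgroup.mem_comap] at h2
    obtain ⟨n, hn⟩ := h2
    exact ⟨n, hn.symm⟩
  have hGM_comm : ∀ q r : G ⧸ M, Commute q r := by
    intro q r
    by_cases hq : q = 1
    · rw [hq]; exact Commute.one_left r
    · obtain ⟨n, rfl⟩ := hcyc q hq r
      exact (Commute.refl q).zpow_right n
  have hG'M : commutator G ≤ M := by
    rw [commutator_def, Subgroup.commutator_le]
    intro x _ y _
    have h9 : mkM ⁅x, y⁆ = 1 := by
      rw [map_commutatorElement]
      exact commutatorElement_eq_one_iff_commute.mpr (hGM_comm _ _)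
    exact (QuotientGroup.eq_one_iff _).mp h9
  have hg1 : mkM g ≠ 1 := fun h1 => hgM ((QuotientGroup.eq_one_iff g).mp h1)
  have hgp1 : (mkM g) ^ p = 1 := by
    by_contra hgp
    have hMK : M ≤ Subgroup.comap mkM (Subgroup.zpowers ((mkM g) ^ p)) := by
      intro mm hm
      have h1 : mkM mm = 1 := (QuotientGroup.eq_one_iff mm).mpr hm
      rw [Subgroup.mem_comap, h1]
      exact one_mem _
    have hgpK : g ^ p ∈ Subgroup.comap mkM (Subgroup.zpowers ((mkM g) ^ p)) := by
      rw [Subgroup.mem_comap, map_pow]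
      exact Subgroup.mem_zpowers _
    have hgpM : g ^ p ∉ M := by
      intro h1
      apply hgp
      rw [← map_pow]
      exact (QuotientGroup.eq_one_iff _).mpr h1
    have hlt : M < Subgroup.comap mkM (Subgroup.zpowers ((mkM g) ^ p)) :=
      lt_of_le_of_ne hMK (fun h1 => hgpM (h1 ▸ hgpK))
    have hKtop := hcoatom2 _ hlt
    have hgK : g ∈ Subgroup.comap mkM (Subgroup.zpowers ((mkM g) ^ p)) := by
      rw [hKtop]; exact Subgroup.mem_top g
    rw [Subgroup.mem_comap] at hgK
    obtain ⟨n, hn⟩ := hgK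
    have hn2 : ((mkM g) ^ p) ^ n = mkM g := hn
    have h1 : (mkM g) ^ ((p:ℕ) * n - 1 : ℤ) = 1 := by
      rw [zpow_sub, zpow_one, zpow_mul, zpow_natCast, hn2, mul_inv_cancel]
    obtain ⟨r, hr⟩ := (hG.to_quotient M) (mkM g)
    have horder : orderOf (mkM g) ∣ p ^ r := orderOf_dvd_of_pow_eq_one hr
    have hone : orderOf (mkM g) ≠ 1 := by simpa [orderOf_eq_one_iff] using hg1
    have hpdvd : p ∣ orderOf (mkM g) := by
      rcases (Nat.dvd_prime_pow hp).mp horder with ⟨sn, hsn, hsor⟩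
      rcases Nat.eq_zero_or_pos sn with rfl | hpos
      · exact absurd (by simpa using hsor) hone
      · rw [hsor]
        exact dvd_pow_self p (Nat.pos_iff_ne_zero.mp hpos)
    have hdvd2 : ((orderOf (mkM g)):ℤ) ∣ (p:ℕ) * n - 1 := orderOf_dvd_iff_zpow_eq_one.mpr h1
    have hdvd3 : ((p:ℕ):ℤ) ∣ (p:ℕ) * n - 1 :=
      dvd_trans (Int.natCast_dvd_natCast.mpr hpdvd) hdvd2
    have hdvd4 : ((p:ℕ):ℤ) ∣ 1 := by
      have h2 : ((p:ℕ):ℤ) ∣ (p:ℕ) * n := Dvd.intro n rfl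
      have h3 := dvd_sub h2 hdvd3
      rwa [show ((p:ℕ) * n : ℤ) - ((p:ℕ) * n - 1) = 1 by ring] at h3
    have h5 := Int.le_of_dvd one_pos hdvd4
    have h6 := hp.two_le
    omega
  have hgj : ∀ j : ℤ, (mkM g) ^ j = 1 → ((p:ℕ):ℤ) ∣ j := by
    intro j hj
    have ho : orderOf (mkM g) = p := orderOf_eq_prime hgp1 hg1
    have h1 := orderOf_dvd_iff_zpow_eq_one.mpr hj
    rwa [ho] at h1
  -- the key relation
  have hcmem : ⁅a, b⁆ ∈ commutator G := mem_commutator_self a b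
  have humem : ⁅⁅a, b⁆, b⁆ ∈ (⊤ : Subgroup G).lowerCentralSeries 2 := mem_lcs2 hcmem b
  have hucen : ∀ g' : G, Commute ⁅⁅a, b⁆, b⁆ g' := fun g' => hZ _ humem g'
  have hFmem : ⁅⁅b, g⁆, b⁆ ∈ commutator G := mem_commutator_self _ _
  have S5 : ∀ t : ℤ, ∃ k : ℤ, ⁅⁅a, b⁆, b⁆ = (⁅⁅b, g⁆, b⁆ * ⁅⁅a, b⁆, b⁆ ^ (-t)) ^ k := by
    intro t
    have hexp : ∀ s : ℤ,
        ⁅b, ⁅a, b⁆ ^ s * (g * a ^ t)⁆ = ⁅⁅a, b⁆, b⁆ ^ (-s) * ⁅b, g * a ^ t⁆ := by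
      intro s
      rw [comm_mul_right']
      have h1 : ⁅b, ⁅a, b⁆ ^ s⁆ = ⁅⁅a, b⁆, b⁆ ^ (-s) := by
        calc ⁅b, ⁅a, b⁆ ^ s⁆ = ⁅⁅a, b⁆ ^ s, b⁆⁻¹ := (commutatorElement_inv _ b).symm
          _ = (⁅⁅a, b⁆, b⁆ ^ s)⁻¹ := by rw [bil_zpow_left hZ hcmem b s]
          _ = ⁅⁅a, b⁆, b⁆ ^ (-s) := (zpow_neg _ s).symm
      have h2 : ⁅a, b⁆ ^ s * ⁅b, g * a ^ t⁆ * (⁅a, b⁆ ^ s)⁻¹ = ⁅b, g * a ^ t⁆ := by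
        have h3 : Commute (⁅a, b⁆ ^ s) ⁅b, g * a ^ t⁆ :=
          (hCc hcmem (mem_commutator_self _ _)).zpow_left s
        rw [h3.eq, mul_assoc, mul_inv_cancel, mul_one]
      rw [h1, h2]
    obtain ⟨s, hys⟩ : ∃ s : ℤ, ⁅b, ⁅a, b⁆ ^ s * (g * a ^ t)⁆ ≠ 1 := by
      by_cases hX : ⁅b, g * a ^ t⁆ = 1
      · refine ⟨1, ?_⟩
        rw [hexp 1, hX, mul_one]
        have h4 : ⁅⁅a, b⁆, b⁆ ^ (-1 : ℤ) = ⁅⁅a, b⁆, b⁆⁻¹ := by simp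
        rw [h4]
        exact inv_ne_one.mpr hu
      · refine ⟨0, ?_⟩
        rw [hexp 0, neg_zero, zpow_zero, one_mul]
        exact hX
    have hmmem : ⁅b, ⁅a, b⁆ ^ s * (g * a ^ t)⁆ ∈ commutator G := mem_commutator_self _ _
    have hncK : ¬ IsMulCommutative (Subgroup.closure {b, ⁅a, b⁆ ^ s * (g * a ^ t)}) := by
      intro hcom
      haveI := hcom
      exact hys (commutatorElement_eq_one_iff_commute.mpr
        (Subgroup.mul_comm_of_mem_isMulCommutative
          (H := Subgroup.closure {b, ⁅a, b⁆ ^ s * (g * a ^ t)})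
          (Subgroup.subset_closure (Set.mem_insert _ _))
          (Subgroup.subset_closure (Set.mem_insert_of_mem _ rfl))))
    have hnormK := hmh _ hncK
    have hbK : b ∈ Subgroup.closure {b, ⁅a, b⁆ ^ s * (g * a ^ t)} :=
      Subgroup.subset_closure (Set.mem_insert _ _)
    have hcK : ⁅a, b⁆ ∈ Subgroup.closure {b, ⁅a, b⁆ ^ s * (g * a ^ t)} := by
      have h1 : a * b * a⁻¹ ∈ Subgroup.closure {b, ⁅a, b⁆ ^ s * (g * a ^ t)} :=
        hnormK.conj_mem b hbK a
      have h2 : ⁅a, b⁆ = (a * b * a⁻¹) * b⁻¹ := by group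
      rw [h2]; exact mul_mem h1 (inv_mem hbK)
    obtain ⟨i, j, k, w0, hw0, hdec⟩ := hdecomp b (⁅a, b⁆ ^ s * (g * a ^ t)) ⁅a, b⁆ hcK
    have hpj : ((p:ℕ):ℤ) ∣ j := by
      apply hgj
      have hb1 : mkM b = 1 := (QuotientGroup.eq_one_iff b).mpr hbM
      have hc1 : mkM ⁅a, b⁆ = 1 := (QuotientGroup.eq_one_iff _).mpr (hG'M hcmem)
      have ha1 : mkM a = 1 := (QuotientGroup.eq_one_iff a).mpr haM
      have hw1 : mkM w0 = 1 := (QuotientGroup.eq_one_iff w0).mpr (hG'M (hlcs2le hw0))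
      have h1 := congrArg mkM hdec
      simp only [map_mul, map_zpow, map_commutatorElement, hc1, hb1, ha1, hw1,
        commutatorElement_one_left, one_zpow, one_mul, mul_one] at h1
      exact h1.symm
    obtain ⟨j', hj'⟩ := hpj
    have hTcen : ∀ hh : G, Commute ((⁅a, b⁆ ^ s * (g * a ^ t)) ^ j) hh := by
      intro hh
      rw [hj', zpow_mul]
      exact (hT6 _ hh).zpow_left j'
    have hw0cen : ∀ hh : G, Commute w0 hh := fun hh => hZ _ hw0 hh
    have hub : ⁅⁅a, b⁆, b⁆ = ⁅⁅b, ⁅a, b⁆ ^ s * (g * a ^ t)⁆, b⁆ ^ k := by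
      have h0 : ⁅⁅a, b⁆, b⁆ = ⁅b ^ i * (⁅a, b⁆ ^ s * (g * a ^ t)) ^ j *
          ⁅b, ⁅a, b⁆ ^ s * (g * a ^ t)⁆ ^ k * w0, b⁆ := by
        rw [← hdec]
      rw [comm_drop_r hw0cen, comm_mul_left', bil_zpow_left hZ hmmem b k] at h0
      have h1 : ⁅b ^ i * (⁅a, b⁆ ^ s * (g * a ^ t)) ^ j, b⁆ = 1 := by
        rw [comm_drop_r hTcen]
        exact commutatorElement_eq_one_iff_commute.mpr ((Commute.refl b).zpow_left i)
      rw [h1, mul_one,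
        conj_eq_of_central (fun hh => ((cval_central hZ hmmem b) hh).zpow_left k)] at h0
      exact h0
    have hmb : ⁅⁅b, ⁅a, b⁆ ^ s * (g * a ^ t)⁆, b⁆ = ⁅⁅b, g⁆, b⁆ * ⁅⁅a, b⁆, b⁆ ^ (-t) := by
      rw [hexp s, comm_drop_l (fun hh => (hucen hh).zpow_left (-s)),
        comm_mul_right' b g (a ^ t)]
      have hbat : ⁅b, a ^ t⁆ ∈ commutator G := mem_commutator_self _ _
      have hconjmem : g * ⁅b, a ^ t⁆ * g⁻¹ ∈ commutator G := by
        have hnormG' : (commutator G).Normal := by rw [_root_.commutator_def]; infer_instance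
        exact hnormG'.conj_mem _ hbat g
      rw [bil_left hZ (mem_commutator_self b g) hconjmem b, comm_conj_arg hZ g hbat b]
      congr 1
      have h3 : ⁅b, a ^ t⁆ = (⁅a, b⁆ ^ t * ⁅a, ⁅a, b⁆⁆ ^ Eh t)⁻¹ := by
        rw [← comm_zpow_left hZ a b t]
        exact (commutatorElement_inv _ _).symm
      rw [h3, mul_inv_rev]
      have hz'mem2 : ⁅a, ⁅a, b⁆⁆ ∈ (⊤ : Subgroup G).lowerCentralSeries 2 := mem_lcs2' hcmem a
      rw [comm_drop_l (fun hh => ((hZ _ hz'mem2 hh).zpow_left (Eh t)).inv_left),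
        ← zpow_neg, bil_zpow_left hZ hcmem b (-t)]
    exact ⟨k, by conv_lhs => rw [hub, hmb]⟩
  -- endgame
  have hFp : ⁅⁅b, g⁆, b⁆ ^ ((p:ℕ):ℤ) = 1 := hPel _ hFmem
  obtain ⟨k₀, hk₀⟩ := S5 0
  rw [neg_zero, zpow_zero, mul_one] at hk₀
  have hpk₀ : ¬ ((p:ℕ):ℤ) ∣ k₀ := by
    rintro ⟨e, he⟩
    apply hu
    rw [hk₀, he, zpow_mul, hFp, one_zpow]
  obtain ⟨t, s, hts⟩ := exists_inv_mod hp hpk₀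
  obtain ⟨k₁, hk₁⟩ := S5 t
  have hFut : ⁅⁅b, g⁆, b⁆ * ⁅⁅a, b⁆, b⁆ ^ (-t) = 1 := by
    rw [hk₀, ← zpow_mul,
      show ⁅⁅b, g⁆, b⁆ * ⁅⁅b, g⁆, b⁆ ^ (k₀ * -t) = ⁅⁅b, g⁆, b⁆ ^ (1 + k₀ * -t) from by
        rw [zpow_add, zpow_one],
      show (1 + k₀ * -t : ℤ) = ((p:ℕ):ℤ) * (-s) from by linear_combination -hts,
      zpow_mul, hFp, one_zpow]
  rw [hFut, one_zpow] at hk₁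
  exact hu hk₁
end
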